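/- arXiv:2101.12468 — 3 statements merged into one kernel-verified Lean document; each statement's English description precedes it below -/
import Mathlib

section
/- If α, β ∈ IEnd(P_n) have similar type, then there exist partial automorphisms γ, δ ∈ PAut(P_n) such that β = γαδ and α = γ⁻¹βδ⁻¹. -/
open scoped Classical

/-- `adj u v` means `|u - v| = 1`, i.e. `u` and `v` are adjacent in the path. -/
def adj (u v : ℕ) : Prop := u + 1 = v ∨ v + 1 = u

/-- `f` is an injective partial endomorphism of the path `P_n` on `{1,…,n}`. -/
structure IsIEnd (n : ℕ) (f : ℕ →. ℕ) : Prop where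
  dom_subset : f.Dom ⊆ Set.Icc 1 n
  ran_subset : f.ran ⊆ Set.Icc 1 n
  inj : ∀ ⦃x y a : ℕ⦄, a ∈ f x → a ∈ f y → x = y
  edge : ∀ ⦃u v a b : ℕ⦄, a ∈ f u → b ∈ f v → adj u v → adj a b

/-- `f` is a partial automorphism of the path `P_n`. -/
def IsPAut (n : ℕ) (f : ℕ →. ℕ) : Prop :=
  IsIEnd n f ∧ ∀ ⦃u v a b : ℕ⦄, a ∈ f u → b ∈ f v → adj a b → adj u v

/-- Left-to-right composition of partial maps: `x (pcomp f g) = (x f) g`. -/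
def pcomp (f g : ℕ →. ℕ) : ℕ →. ℕ := PFun.comp g f

/-- The inverse of an injective partial map. -/
noncomputable def pinv (f : ℕ →. ℕ) : ℕ →. ℕ :=
  fun y => ⟨∃ x, y ∈ f x, fun h => h.choose⟩

/-- `I` is an interval of `X`: a set of consecutive integers contained in `X`. -/
def IsIntervalOf (I X : Set ℕ) : Prop :=
  I ⊆ X ∧ ∀ ⦃x⦄, x ∈ I → ∀ ⦃y⦄, y ∈ I → ∀ ⦃z : ℕ⦄, x < z → z < y → z ∈ I

/-- `I` is a maximal interval of `X`. -/
def IsMaxIntervalOf (I X : Set ℕ) : Prop :=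
  IsIntervalOf I X ∧ ∀ J, IsIntervalOf J X → I ⊆ J → I = J

/-- Every element of `A` is smaller than every element of `B`. -/
def SetLT (A B : Set ℕ) : Prop := ∀ a ∈ A, ∀ b ∈ B, a < b

/-- The type of the maximal interval `J` of `Im α` equals the type of the maximal
interval `J'` of `Im β` or its reverse: there is a bijection `θ` between the maximal
intervals of `α⁻¹(J)` and those of `β⁻¹(J')` preserving sizes and either preserving or
reversing the order of the images. -/
def TypeEquiv (α : ℕ →. ℕ) (J : Set ℕ) (β : ℕ →. ℕ) (J' : Set ℕ) : Prop :=
  ∃ θ : Set ℕ → Set ℕ,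
    (∀ I, IsMaxIntervalOf I (α.preimage J) → IsMaxIntervalOf (θ I) (β.preimage J')) ∧
    (∀ I', IsMaxIntervalOf I' (β.preimage J') →
      ∃! I, IsMaxIntervalOf I (α.preimage J) ∧ θ I = I') ∧
    (∀ I, IsMaxIntervalOf I (α.preimage J) → I.ncard = (θ I).ncard) ∧
    ((∀ I₁ I₂, IsMaxIntervalOf I₁ (α.preimage J) → IsMaxIntervalOf I₂ (α.preimage J) →
        SetLT (α.image I₁) (α.image I₂) → SetLT (β.image (θ I₁)) (β.image (θ I₂))) ∨
     (∀ I₁ I₂, IsMaxIntervalOf I₁ (α.preimage J) → IsMaxIntervalOf I₂ (α.preimage J) →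
        SetLT (α.image I₁) (α.image I₂) → SetLT (β.image (θ I₂)) (β.image (θ I₁))))

/-- `α` and `β` have similar type. -/
def SimilarType (α β : ℕ →. ℕ) : Prop :=
  ∃ σ : Set ℕ → Set ℕ,
    (∀ J, IsMaxIntervalOf J α.ran → IsMaxIntervalOf (σ J) β.ran) ∧
    (∀ J', IsMaxIntervalOf J' β.ran → ∃! J, IsMaxIntervalOf J α.ran ∧ σ J = J') ∧
    (∀ J, IsMaxIntervalOf J α.ran → TypeEquiv α J β (σ J))

lemma icc_isIntervalOf {X : Set ℕ} {a b : ℕ} (h : Set.Icc a b ⊆ X) :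
    IsIntervalOf (Set.Icc a b) X := by
  refine ⟨h, fun x hx y hy z h1 h2 => ?_⟩
  simp only [Set.mem_Icc] at *
  omega

-- C1: existence of maximal interval containing a point
lemma exists_maxInterval {X : Set ℕ} {n x : ℕ} (hX : X ⊆ Set.Icc 1 n) (hx : x ∈ X) :
    ∃ I, IsMaxIntervalOf I X ∧ x ∈ I := by
  set A : Set ℕ := {a' | Set.Icc a' x ⊆ X} with hA
  set B : Set ℕ := {b' | Set.Icc x b' ⊆ X} with hB
  have hxA : x ∈ A := by simp [hA, Set.Icc_self, Set.singleton_subset_iff, hx]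
  have hxB : x ∈ B := by simp [hB, Set.Icc_self, Set.singleton_subset_iff, hx]
  have hBbdd : BddAbove B := by
    refine ⟨max x n, fun b hb => ?_⟩
    rcases le_or_gt b x with h | h
    · exact le_max_of_le_left h
    · exact le_max_of_le_right (hX (hb ⟨h.le, le_rfl⟩)).2
  set a := sInf A with ha
  set b := sSup B with hb
  have haA : Set.Icc a x ⊆ X := Nat.sInf_mem ⟨x, hxA⟩
  have hbB : Set.Icc x b ⊆ X := Nat.sSup_mem ⟨x, hxB⟩ hBbdd
  have hax : a ≤ x := Nat.sInf_le hxA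
  have hxb : x ≤ b := le_csSup hBbdd hxB
  have hIX : Set.Icc a b ⊆ X := by
    intro z hz
    rcases le_or_gt z x with h | h
    · exact haA ⟨hz.1, h⟩
    · exact hbB ⟨h.le, hz.2⟩
  refine ⟨Set.Icc a b, ⟨icc_isIntervalOf hIX, ?_⟩, hax, hxb⟩
  intro J hJ hIJ
  have hxJ : x ∈ J := hIJ ⟨hax, hxb⟩
  apply Set.Subset.antisymm hIJ
  intro y hy
  simp only [Set.mem_Icc]
  constructor
  · -- a ≤ y
    by_contra hc
    push_neg at hc
    have hIccJ : Set.Icc y x ⊆ X := by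
      intro z hz
      rcases eq_or_lt_of_le hz.1 with rfl | h1
      · exact hJ.1 hy
      · rcases eq_or_lt_of_le hz.2 with rfl | h2
        · exact hx
        · exact hJ.1 (hJ.2 hy hxJ h1 h2)
    have : a ≤ y := Nat.sInf_le hIccJ
    omega
  · -- y ≤ b
    by_contra hc
    push_neg at hc
    have hIccJ : Set.Icc x y ⊆ X := by
      intro z hz
      rcases eq_or_lt_of_le hz.1 with rfl | h1
      · exact hx
      · rcases eq_or_lt_of_le hz.2 with rfl | h2
        · exact hJ.1 hy
        · exact hJ.1 (hJ.2 hxJ hy h1 h2)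
    have : y ≤ b := le_csSup hBbdd hIccJ
    omega

-- C2: uniqueness
lemma maxInterval_unique {X I₁ I₂ : Set ℕ} (h1 : IsMaxIntervalOf I₁ X)
    (h2 : IsMaxIntervalOf I₂ X) {x : ℕ} (hx1 : x ∈ I₁) (hx2 : x ∈ I₂) : I₁ = I₂ := by
  have hU : IsIntervalOf (I₁ ∪ I₂) X := by
    refine ⟨Set.union_subset h1.1.1 h2.1.1, ?_⟩
    intro u hu v hv z hz1 hz2
    rcases hu with hu | hu <;> rcases hv with hv | hv
    · exact Or.inl (h1.1.2 hu hv hz1 hz2)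
    · rcases lt_trichotomy z x with hc | rfl | hc
      · exact Or.inl (h1.1.2 hu hx1 hz1 hc)
      · exact Or.inl hx1
      · exact Or.inr (h2.1.2 hx2 hv hc hz2)
    · rcases lt_trichotomy z x with hc | rfl | hc
      · exact Or.inr (h2.1.2 hu hx2 hz1 hc)
      · exact Or.inl hx1
      · exact Or.inl (h1.1.2 hx1 hv hc hz2)
    · exact Or.inr (h2.1.2 hu hv hz1 hz2)
  have e1 := h1.2 _ hU Set.subset_union_left
  have e2 := h2.2 _ hU Set.subset_union_right
  rw [e1, ← e2]


lemma maxInterval_disjoint {X I₁ I₂ : Set ℕ} (h1 : IsMaxIntervalOf I₁ X)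
    (h2 : IsMaxIntervalOf I₂ X) (hne : I₁ ≠ I₂) : Disjoint I₁ I₂ := by
  rw [Set.disjoint_left]
  intro x hx1 hx2
  exact hne (maxInterval_unique h1 h2 hx1 hx2)

-- C3: comparability
lemma maxInterval_comparable {X I₁ I₂ : Set ℕ} (h1 : IsMaxIntervalOf I₁ X)
    (h2 : IsMaxIntervalOf I₂ X) (hne : I₁ ≠ I₂) : SetLT I₁ I₂ ∨ SetLT I₂ I₁ := by
  have hd := maxInterval_disjoint h1 h2 hne
  by_contra hc
  push_neg at hc
  obtain ⟨hc1, hc2⟩ := hc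
  simp only [SetLT, not_forall, not_lt] at hc1 hc2
  obtain ⟨u, hu, v, hv, huv⟩ := hc1  -- u ∈ I₁, v ∈ I₂, v ≤ u
  obtain ⟨p, hp, q, hq, hpq⟩ := hc2  -- p ∈ I₂, q ∈ I₁, q ≤ p
  -- v ≤ u with u ∈ I₁, v ∈ I₂; q ≤ p with q ∈ I₁, p ∈ I₂
  have hvu : v < u := lt_of_le_of_ne huv (fun h => hd.ne_of_mem hu hv h.symm)
  have hqp : q < p := lt_of_le_of_ne hpq (fun h => hd.ne_of_mem hq hp h)
  -- now positions: q ∈ I₁, p ∈ I₂, q < p; v ∈ I₂, u ∈ I₁, v < u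
  rcases lt_trichotomy u p with h | rfl | h
  · -- v < u < p : u between v and p (both I₂) → u ∈ I₂, contradiction
    exact hd.ne_of_mem hu (h2.1.2 hv hp hvu h) rfl
  · exact hd.ne_of_mem hu hp rfl
  · -- p < u; q < p < u, q,u ∈ I₁ → p ∈ I₁ contra
    exact hd.ne_of_mem (h1.1.2 hq hu hqp h) hp rfl -- fix


-- C4: adjacency absorption
lemma maxInterval_adj_mem {X I : Set ℕ} (hI : IsMaxIntervalOf I X) {x y : ℕ}
    (hx : x ∈ I) (hy : y ∈ X) (hxy : adj x y) : y ∈ I := by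
  have hU : IsIntervalOf (I ∪ {y}) X := by
    refine ⟨Set.union_subset hI.1.1 (by simpa using hy), ?_⟩
    intro u hu v hv z hz1 hz2
    rcases hu with hu | hu <;> rcases hv with hv | hv
    · exact Or.inl (hI.1.2 hu hv hz1 hz2)
    · simp only [Set.mem_singleton_iff] at hv; subst hv
      rcases hxy with h | h
      · -- y = x + 1, z < y so z ≤ x
        rcases eq_or_lt_of_le (by omega : z ≤ x) with rfl | hzx
        · exact Or.inl hx
        · exact Or.inl (hI.1.2 hu hx hz1 hzx)
      · -- x = y + 1 ≤ z?? z < y < x, u < z, u ∈ I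
        exact Or.inl (hI.1.2 hu hx hz1 (by omega))
    · simp only [Set.mem_singleton_iff] at hu; subst hu
      rcases hxy with h | h
      · exact Or.inl (hI.1.2 hx hv (by omega) hz2)
      · rcases eq_or_lt_of_le (by omega : x ≤ z) with rfl | hzx
        · exact Or.inl hx
        · exact Or.inl (hI.1.2 hx hv hzx hz2)
    · simp only [Set.mem_singleton_iff] at hu hv; omega
  have := hI.2 _ hU Set.subset_union_left
  rw [this]
  exact Or.inr rfl

-- C0: empty set not maximal in nonempty X (bounded)
lemma maxInterval_nonempty {X I : Set ℕ} (hI : IsMaxIntervalOf I X) (hX : X.Nonempty) :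
    I.Nonempty := by
  rcases Set.eq_empty_or_nonempty I with rfl | h
  · obtain ⟨x, hx⟩ := hX
    have hI1 : IsIntervalOf (Set.Icc x x) X := icc_isIntervalOf (by simp [hx])
    have : (∅ : Set ℕ) = Set.Icc x x := hI.2 _ hI1 (Set.empty_subset _)
    exact absurd ((Set.Icc_self x ▸ this).symm) (Set.singleton_ne_empty x)
  · exact h

-- C6: maximal interval is an Icc
lemma maxInterval_eq_Icc {X I : Set ℕ} {n : ℕ} (hX : X ⊆ Set.Icc 1 n)
    (hI : IsMaxIntervalOf I X) (hne : I.Nonempty) : I = Set.Icc (sInf I) (sSup I) := by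
  have hfin : I.Finite := (Set.finite_Icc 1 n).subset (hI.1.1.trans hX)
  have hbdd : BddAbove I := hfin.bddAbove
  apply Set.Subset.antisymm
  · intro z hz
    exact ⟨Nat.sInf_le hz, le_csSup hbdd hz⟩
  · intro z hz
    have h1 : sInf I ∈ I := Nat.sInf_mem hne
    have h2 : sSup I ∈ I := Nat.sSup_mem hne hbdd
    rcases eq_or_lt_of_le hz.1 with rfl | ha
    · exact h1
    · rcases eq_or_lt_of_le hz.2 with rfl | hb
      · exact h2
      · exact hI.1.2 h1 h2 ha hb
-- L1: two down-closed subsets of a finite chain with equal card are equal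
lemma downClosed_eq {J S T : Set ℕ} (hfin : J.Finite) (hS : S ⊆ J) (hT : T ⊆ J)
    (hSd : ∀ y ∈ J, ∀ s ∈ S, y ≤ s → y ∈ S) (hTd : ∀ y ∈ J, ∀ t ∈ T, y ≤ t → y ∈ T)
    (hcard : S.ncard = T.ncard) : S = T := by
  have hsub : S ⊆ T ∨ T ⊆ S := by
    by_contra hc
    push_neg at hc
    obtain ⟨s, hs, hsT⟩ := Set.not_subset.1 hc.1
    obtain ⟨t, ht, htS⟩ := Set.not_subset.1 hc.2
    rcases le_total s t with h | h
    · exact hsT (hTd s (hS hs) t ht h)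
    · exact htS (hSd t (hT ht) s hs h)
  rcases hsub with h | h
  · exact Set.eq_of_subset_of_ncard_le h hcard.ge (hfin.subset hT)
  · exact (Set.eq_of_subset_of_ncard_le h hcard.le (hfin.subset hS)).symm

lemma upClosed_eq {J S T : Set ℕ} (hfin : J.Finite) (hS : S ⊆ J) (hT : T ⊆ J)
    (hSd : ∀ y ∈ J, ∀ s ∈ S, s ≤ y → y ∈ S) (hTd : ∀ y ∈ J, ∀ t ∈ T, t ≤ y → y ∈ T)
    (hcard : S.ncard = T.ncard) : S = T := by
  have hsub : S ⊆ T ∨ T ⊆ S := by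
    by_contra hc
    push_neg at hc
    obtain ⟨s, hs, hsT⟩ := Set.not_subset.1 hc.1
    obtain ⟨t, ht, htS⟩ := Set.not_subset.1 hc.2
    rcases le_total s t with h | h
    · exact htS (hSd t (hT ht) s hs h)
    · exact hsT (hTd s (hS hs) t ht h)
  rcases hsub with h | h
  · exact Set.eq_of_subset_of_ncard_le h hcard.ge (hfin.subset hT)
  · exact (Set.eq_of_subset_of_ncard_le h hcard.le (hfin.subset hS)).symm

-- gluing cardinality lemma
lemma ncard_union_family :
    ∀ (k : ℕ) (U V : Set ℕ) (𝒮 : Set (Set ℕ)) (A B : Set ℕ → Set ℕ),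
    U.ncard = k → U.Finite → V.Finite →
    (∀ I ∈ 𝒮, (A I).Nonempty) →
    (∀ I₁ ∈ 𝒮, ∀ I₂ ∈ 𝒮, I₁ ≠ I₂ → Disjoint (A I₁) (A I₂)) →
    (∀ I₁ ∈ 𝒮, ∀ I₂ ∈ 𝒮, I₁ ≠ I₂ → Disjoint (B I₁) (B I₂)) →
    (U = ⋃ I ∈ 𝒮, A I) → (V = ⋃ I ∈ 𝒮, B I) →
    (∀ I ∈ 𝒮, (A I).ncard = (B I).ncard) →
    U.ncard = V.ncard := by
  intro k
  induction k using Nat.strong_induction_on with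
  | _ k ih =>
    intro U V 𝒮 A B hk hUfin hVfin hAne hAdisj hBdisj hU hV hcard
    rcases Set.eq_empty_or_nonempty 𝒮 with rfl | ⟨I₀, hI₀⟩
    · simp only [Set.mem_empty_iff_false, Set.iUnion_of_empty, Set.iUnion_empty] at hU hV
      rw [hU, hV]
    · have hAsub : A I₀ ⊆ U := by
        rw [hU]; exact Set.subset_biUnion_of_mem hI₀
      have hBsub : B I₀ ⊆ V := by
        rw [hV]; exact Set.subset_biUnion_of_mem hI₀
      have hAfin : (A I₀).Finite := hUfin.subset hAsub
      have h1 : (U \ A I₀).ncard + (A I₀).ncard = U.ncard :=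
        Set.ncard_diff_add_ncard_of_subset hAsub hUfin
      have h2 : (V \ B I₀).ncard + (B I₀).ncard = V.ncard :=
        Set.ncard_diff_add_ncard_of_subset hBsub hVfin
      have hlt : (U \ A I₀).ncard < k := by
        have : (A I₀).ncard ≠ 0 := by
          simpa [Set.ncard_pos hAfin] using Set.ncard_pos hAfin |>.2 (hAne I₀ hI₀) |>.ne'
        omega
      have hUd : U \ A I₀ = ⋃ I ∈ 𝒮 \ {I₀}, A I := by
        apply Set.Subset.antisymm
        · intro x hx
          obtain ⟨hxU, hxA⟩ := hx
          rw [hU] at hxU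
          simp only [Set.mem_iUnion] at hxU ⊢
          obtain ⟨I, hI, hxI⟩ := hxU
          refine ⟨I, ⟨hI, ?_⟩, hxI⟩
          rintro rfl; exact hxA hxI
        · intro x hx
          simp only [Set.mem_iUnion] at hx
          obtain ⟨I, ⟨hI, hIne⟩, hxI⟩ := hx
          refine ⟨hU ▸ Set.mem_biUnion hI hxI, fun hxA => ?_⟩
          exact (hAdisj I hI I₀ hI₀ (by simpa using hIne)).ne_of_mem hxI hxA rfl
      have hVd : V \ B I₀ = ⋃ I ∈ 𝒮 \ {I₀}, B I := by
        apply Set.Subset.antisymm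
        · intro x hx
          obtain ⟨hxU, hxA⟩ := hx
          rw [hV] at hxU
          simp only [Set.mem_iUnion] at hxU ⊢
          obtain ⟨I, hI, hxI⟩ := hxU
          refine ⟨I, ⟨hI, ?_⟩, hxI⟩
          rintro rfl; exact hxA hxI
        · intro x hx
          simp only [Set.mem_iUnion] at hx
          obtain ⟨I, ⟨hI, hIne⟩, hxI⟩ := hx
          refine ⟨hV ▸ Set.mem_biUnion hI hxI, fun hxA => ?_⟩
          exact (hBdisj I hI I₀ hI₀ (by simpa using hIne)).ne_of_mem hxI hxA rfl
      have := ih _ hlt (U \ A I₀) (V \ B I₀) (𝒮 \ {I₀}) A B rfl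
        (hUfin.subset Set.diff_subset) (hVfin.subset Set.diff_subset)
        (fun I hI => hAne I hI.1) (fun I₁ h₁ I₂ h₂ hne => hAdisj I₁ h₁.1 I₂ h₂.1 hne)
        (fun I₁ h₁ I₂ h₂ hne => hBdisj I₁ h₁.1 I₂ h₂.1 hne) hUd hVd
        (fun I hI => hcard I hI.1)
      have := hcard I₀ hI₀
      omega
-- the block-matching lemma
lemma block_matching :
    ∀ (k : ℕ) (J J' : Set ℕ) (𝒮 : Set (Set ℕ)) (A B : Set ℕ → Set ℕ) (f : ℕ → ℕ),
    J.ncard = k → J.Finite → J'.Finite →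
    (∀ I ∈ 𝒮, (A I).Nonempty) →
    (∀ I₁ ∈ 𝒮, ∀ I₂ ∈ 𝒮, I₁ ≠ I₂ → Disjoint (A I₁) (A I₂)) →
    (∀ I₁ ∈ 𝒮, ∀ I₂ ∈ 𝒮, I₁ ≠ I₂ → Disjoint (B I₁) (B I₂)) →
    (∀ I₁ ∈ 𝒮, ∀ I₂ ∈ 𝒮, I₁ ≠ I₂ → SetLT (A I₁) (A I₂) ∨ SetLT (A I₂) (A I₁)) →
    (J = ⋃ I ∈ 𝒮, A I) → (J' = ⋃ I ∈ 𝒮, B I) →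
    (∀ I ∈ 𝒮, (A I).ncard = (B I).ncard) →
    Set.BijOn f J J' →
    ((StrictMonoOn f J ∧ ∀ I₁ ∈ 𝒮, ∀ I₂ ∈ 𝒮, SetLT (A I₁) (A I₂) → SetLT (B I₁) (B I₂)) ∨
     (StrictAntiOn f J ∧ ∀ I₁ ∈ 𝒮, ∀ I₂ ∈ 𝒮, SetLT (A I₁) (A I₂) → SetLT (B I₂) (B I₁))) →
    ∀ I ∈ 𝒮, f '' (A I) = B I := by
  intro k
  induction k using Nat.strong_induction_on with
  | _ k ih =>
    intro J J' 𝒮 A B f hk hJfin hJ'fin hAne hAdisj hBdisj hAcmp hU hV hcard hbij hor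
    rcases Set.eq_empty_or_nonempty J with rfl | hJne
    · intro I hI
      have hsub : A I ⊆ (∅ : Set ℕ) := by rw [hU]; exact Set.subset_biUnion_of_mem hI
      exact absurd (hsub (hAne I hI).choose_spec) (by simp)
    -- the minimal block
    have hmJ : sInf J ∈ J := Nat.sInf_mem hJne
    have : sInf J ∈ ⋃ I ∈ 𝒮, A I := hU ▸ hmJ
    simp only [Set.mem_iUnion] at this
    obtain ⟨I₀, hI₀, hmA⟩ := this
    have hAsub : ∀ I ∈ 𝒮, A I ⊆ J := fun I hI => by
      rw [hU]; exact Set.subset_biUnion_of_mem hI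
    have hBsub : ∀ I ∈ 𝒮, B I ⊆ J' := fun I hI => by
      rw [hV]; exact Set.subset_biUnion_of_mem hI
    have hmin : ∀ I ∈ 𝒮, I ≠ I₀ → SetLT (A I₀) (A I) := by
      intro I hI hne
      rcases hAcmp I₀ hI₀ I hI (fun e => hne e.symm) with h | h
      · exact h
      · obtain ⟨a, ha⟩ := hAne I hI
        have := h a ha (sInf J) hmA
        have := Nat.sInf_le (hAsub I hI ha)
        omega
    have hBne : ∀ I ∈ 𝒮, (B I).Nonempty := by
      intro I hI
      have h1 : 0 < (A I).ncard := (Set.ncard_pos (hJfin.subset (hAsub I hI))).2 (hAne I hI)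
      have h2 : 0 < (B I).ncard := hcard I hI ▸ h1
      exact (Set.ncard_pos (hJ'fin.subset (hBsub I hI))).1 h2
    -- image of minimal block equals B I₀
    have hfinj : Set.InjOn f J := hbij.injOn
    have himg : f '' (A I₀) = B I₀ := by
      have hsub1 : f '' (A I₀) ⊆ J' := by
        rw [← hbij.image_eq]; exact Set.image_mono (hAsub I₀ hI₀)
      have hc : (f '' (A I₀)).ncard = (B I₀).ncard := by
        rw [Set.ncard_image_of_injOn (hfinj.mono (hAsub I₀ hI₀))]
        exact hcard I₀ hI₀
      rcases hor with ⟨hmono, htrans⟩ | ⟨hanti, htrans⟩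
      · refine downClosed_eq hJ'fin hsub1 (hBsub I₀ hI₀) ?_ ?_ hc
        · intro y hy s hs hys
          obtain ⟨a', ha'J, rfl⟩ := hbij.surjOn hy
          obtain ⟨a, haA, rfl⟩ := hs
          have haJ := hAsub I₀ hI₀ haA
          have ha'a : a' ≤ a := by
            by_contra hc'
            push_neg at hc'
            exact absurd (hmono haJ ha'J hc') (by omega)
          have : a' ∈ ⋃ I ∈ 𝒮, A I := hU ▸ ha'J
          simp only [Set.mem_iUnion] at this
          obtain ⟨I, hI, ha'I⟩ := this
          rcases eq_or_ne I I₀ with rfl | hne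
          · exact Set.mem_image_of_mem f ha'I
          · exact absurd (hmin I hI hne a haA a' ha'I) (by omega)
        · intro y hy t ht hyt
          have : y ∈ ⋃ I ∈ 𝒮, B I := hV ▸ hy
          simp only [Set.mem_iUnion] at this
          obtain ⟨I, hI, hyI⟩ := this
          rcases eq_or_ne I I₀ with rfl | hne
          · exact hyI
          · exact absurd (htrans I₀ hI₀ I hI (hmin I hI hne) t ht y hyI) (by omega)
      · refine upClosed_eq hJ'fin hsub1 (hBsub I₀ hI₀) ?_ ?_ hc
        · intro y hy s hs hys
          obtain ⟨a', ha'J, rfl⟩ := hbij.surjOn hy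
          obtain ⟨a, haA, rfl⟩ := hs
          have haJ := hAsub I₀ hI₀ haA
          have ha'a : a' ≤ a := by
            by_contra hc'
            push_neg at hc'
            exact absurd (hanti haJ ha'J hc') (by omega)
          have : a' ∈ ⋃ I ∈ 𝒮, A I := hU ▸ ha'J
          simp only [Set.mem_iUnion] at this
          obtain ⟨I, hI, ha'I⟩ := this
          rcases eq_or_ne I I₀ with rfl | hne
          · exact Set.mem_image_of_mem f ha'I
          · exact absurd (hmin I hI hne a haA a' ha'I) (by omega)
        · intro y hy t ht hyt
          have : y ∈ ⋃ I ∈ 𝒮, B I := hV ▸ hy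
          simp only [Set.mem_iUnion] at this
          obtain ⟨I, hI, hyI⟩ := this
          rcases eq_or_ne I I₀ with rfl | hne
          · exact hyI
          · exact absurd (htrans I₀ hI₀ I hI (hmin I hI hne) y hyI t ht) (by omega)
    -- peel and recurse
    have hUd : J \ A I₀ = ⋃ I ∈ 𝒮 \ {I₀}, A I := by
      apply Set.Subset.antisymm
      · intro x hx
        obtain ⟨hxU, hxA⟩ := hx
        rw [hU] at hxU
        simp only [Set.mem_iUnion] at hxU ⊢
        obtain ⟨I, hI, hxI⟩ := hxU
        refine ⟨I, ⟨hI, ?_⟩, hxI⟩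
        rintro rfl; exact hxA hxI
      · intro x hx
        simp only [Set.mem_iUnion] at hx
        obtain ⟨I, ⟨hI, hIne⟩, hxI⟩ := hx
        refine ⟨hAsub I hI hxI, fun hxA => ?_⟩
        exact (hAdisj I hI I₀ hI₀ (by simpa using hIne)).ne_of_mem hxI hxA rfl
    have hVd : J' \ B I₀ = ⋃ I ∈ 𝒮 \ {I₀}, B I := by
      apply Set.Subset.antisymm
      · intro x hx
        obtain ⟨hxU, hxA⟩ := hx
        rw [hV] at hxU
        simp only [Set.mem_iUnion] at hxU ⊢
        obtain ⟨I, hI, hxI⟩ := hxU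
        refine ⟨I, ⟨hI, ?_⟩, hxI⟩
        rintro rfl; exact hxA hxI
      · intro x hx
        simp only [Set.mem_iUnion] at hx
        obtain ⟨I, ⟨hI, hIne⟩, hxI⟩ := hx
        refine ⟨hBsub I hI hxI, fun hxA => ?_⟩
        exact (hBdisj I hI I₀ hI₀ (by simpa using hIne)).ne_of_mem hxI hxA rfl
    have hbij' : Set.BijOn f (J \ A I₀) (J' \ B I₀) := by
      refine ⟨?_, hfinj.mono Set.diff_subset, ?_⟩
      · intro a ⟨haJ, haA⟩
        refine ⟨hbij.mapsTo haJ, fun hfa => ?_⟩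
        rw [← himg] at hfa
        obtain ⟨a', ha', he⟩ := hfa
        exact haA ((hfinj (hAsub I₀ hI₀ ha') haJ he) ▸ ha')
      · intro y ⟨hyJ, hyB⟩
        obtain ⟨a, haJ, rfl⟩ := hbij.surjOn hyJ
        refine ⟨a, ⟨haJ, fun haA => hyB (himg ▸ Set.mem_image_of_mem f haA)⟩, rfl⟩
    have hlt : (J \ A I₀).ncard < k := by
      have h1 : (J \ A I₀).ncard + (A I₀).ncard = J.ncard :=
        Set.ncard_diff_add_ncard_of_subset (hAsub I₀ hI₀) hJfin
      have h2 : 0 < (A I₀).ncard :=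
        (Set.ncard_pos (hJfin.subset (hAsub I₀ hI₀))).2 (hAne I₀ hI₀)
      omega
    have hrec := ih _ hlt (J \ A I₀) (J' \ B I₀) (𝒮 \ {I₀}) A B f rfl
      (hJfin.subset Set.diff_subset) (hJ'fin.subset Set.diff_subset)
      (fun I hI => hAne I hI.1)
      (fun I₁ h₁ I₂ h₂ hne => hAdisj I₁ h₁.1 I₂ h₂.1 hne)
      (fun I₁ h₁ I₂ h₂ hne => hBdisj I₁ h₁.1 I₂ h₂.1 hne)
      (fun I₁ h₁ I₂ h₂ hne => hAcmp I₁ h₁.1 I₂ h₂.1 hne)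
      hUd hVd (fun I hI => hcard I hI.1) hbij'
      (hor.imp
        (fun ⟨hm, ht⟩ => ⟨hm.mono Set.diff_subset, fun I₁ h₁ I₂ h₂ => ht I₁ h₁.1 I₂ h₂.1⟩)
        (fun ⟨hm, ht⟩ => ⟨hm.mono Set.diff_subset, fun I₁ h₁ I₂ h₂ => ht I₁ h₁.1 I₂ h₂.1⟩))
    intro I hI
    rcases eq_or_ne I I₀ with rfl | hne
    · exact himg
    · exact hrec I ⟨hI, by simpa using hne⟩
-- walk lemma: injective path-walks are affine
lemma walk_affine {g : ℕ → ℕ} {a b : ℕ}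
    (hstep : ∀ x, a ≤ x → x < b → adj (g x) (g (x + 1)))
    (hinj : Set.InjOn g (Set.Icc a b)) :
    (∀ x, a ≤ x → x ≤ b → g x = g a + (x - a)) ∨
    (∀ x, a ≤ x → x ≤ b → g x + (x - a) = g a) := by
  rcases le_or_gt b a with hba | hab
  · left
    intro x h1 h2
    have : x = a := le_antisymm (h2.trans hba) h1
    subst this; simp
  rcases hstep a le_rfl hab with hup | hdn
  · left
    intro x
    induction x using Nat.strong_induction_on with
    | _ x ihx =>
      intro h1 h2
      rcases eq_or_lt_of_le h1 with rfl | h1'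
      · simp
      · rcases Nat.exists_eq_add_of_lt h1' with ⟨m, rfl⟩
        -- x = a + m + 1
        have hm1 : g (a + m) = g a + m := by
          have := ihx (a + m) (by omega) (by omega) (by omega)
          simpa using this
        rcases hstep (a + m) (by omega) (by omega) with h | h
        · omega
        · -- g (a+m+1) + 1 = g (a+m) = g a + m
          rcases Nat.eq_zero_or_pos m with rfl | hm
          · -- a+1 case: contradiction with hup
            simp only [Nat.add_zero] at h hm1
            omega
          · have hm2 : g (a + (m - 1)) = g a + (m - 1) := by
              have := ihx (a + (m - 1)) (by omega) (by omega) (by omega)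
              simpa using this
            have : g (a + m + 1) = g (a + (m - 1)) := by omega
            have := hinj (by constructor <;> omega) (by constructor <;> omega) this
            omega
  · right
    intro x
    induction x using Nat.strong_induction_on with
    | _ x ihx =>
      intro h1 h2
      rcases eq_or_lt_of_le h1 with rfl | h1'
      · simp
      · rcases Nat.exists_eq_add_of_lt h1' with ⟨m, rfl⟩
        have hm1 : g (a + m) + m = g a := by
          have := ihx (a + m) (by omega) (by omega) (by omega)
          simpa using this
        rcases hstep (a + m) (by omega) (by omega) with h | h
        · rcases Nat.eq_zero_or_pos m with rfl | hm
          · simp only [Nat.add_zero] at h hm1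
            omega
          · have hm2 : g (a + (m - 1)) + (m - 1) = g a := by
              have := ihx (a + (m - 1)) (by omega) (by omega) (by omega)
              simpa using this
            have : g (a + m + 1) = g (a + (m - 1)) := by omega
            have := hinj (by constructor <;> omega) (by constructor <;> omega) this
            omega
        · omega

-- consequences packaged: image is an Icc, monotone/antitone, adjacency iff
lemma walk_package {g : ℕ → ℕ} {a b : ℕ} (hab : a ≤ b)
    (hstep : ∀ x, a ≤ x → x < b → adj (g x) (g (x + 1)))
    (hinj : Set.InjOn g (Set.Icc a b)) :
    (∃ c d : ℕ, c ≤ d ∧ g '' (Set.Icc a b) = Set.Icc c d) ∧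
    (∀ x ∈ Set.Icc a b, ∀ y ∈ Set.Icc a b, (adj (g x) (g y) ↔ adj x y)) := by
  rcases walk_affine hstep hinj with hf | hf
  · constructor
    · refine ⟨g a, g a + (b - a), by omega, ?_⟩
      apply Set.Subset.antisymm
      · rintro _ ⟨x, hx, rfl⟩
        simp only [Set.mem_Icc] at hx
        have := hf x hx.1 hx.2
        simp only [Set.mem_Icc]; omega
      · intro y hy
        simp only [Set.mem_Icc] at hy
        refine ⟨a + (y - g a), ⟨by omega, by omega⟩, ?_⟩
        have := hf (a + (y - g a)) (by omega) (by omega)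
        omega
    · intro x hx y hy
      simp only [Set.mem_Icc] at hx hy
      have h1 := hf x hx.1 hx.2
      have h2 := hf y hy.1 hy.2
      unfold adj
      omega
  · constructor
    · refine ⟨g a - (b - a), g a, by omega, ?_⟩
      have hga : b - a ≤ g a := by
        have := hf b hab le_rfl
        omega
      apply Set.Subset.antisymm
      · rintro _ ⟨x, hx, rfl⟩
        simp only [Set.mem_Icc] at hx
        have := hf x hx.1 hx.2
        simp only [Set.mem_Icc]
        omega
      · intro y hy
        simp only [Set.mem_Icc] at hy
        refine ⟨a + (g a - y), ⟨by omega, by omega⟩, ?_⟩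
        have := hf (a + (g a - y)) (by omega) (by omega)
        omega
    · intro x hx y hy
      simp only [Set.mem_Icc] at hx hy
      have h1 := hf x hx.1 hx.2
      have h2 := hf y hy.1 hy.2
      unfold adj
      omega
-- PFun helpers
noncomputable def pfn (α : ℕ →. ℕ) : ℕ → ℕ :=
  fun x => if h : (α x).Dom then (α x).get h else 0

lemma pfn_mem {α : ℕ →. ℕ} {x : ℕ} (h : x ∈ α.Dom) : pfn α x ∈ α x := by
  have hd : (α x).Dom := h
  simp only [pfn, dif_pos hd]
  exact Part.get_mem hd

lemma pfn_eq {α : ℕ →. ℕ} {x v : ℕ} (h : v ∈ α x) : pfn α x = v :=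
  Part.mem_unique (pfn_mem ((PFun.mem_dom _ _).2 ⟨v, h⟩)) h

lemma mem_ran_iff {α : ℕ →. ℕ} {y : ℕ} : y ∈ α.ran ↔ ∃ x, y ∈ α x := Iff.rfl

lemma mem_pcomp {f g : ℕ →. ℕ} {x c : ℕ} : c ∈ pcomp f g x ↔ ∃ b, b ∈ f x ∧ c ∈ g b := by
  simp only [pcomp, PFun.comp_apply, Part.mem_bind_iff]
  exact Part.mem_bind_iff

lemma mem_pinv {f : ℕ →. ℕ} (hinj : ∀ ⦃x y a : ℕ⦄, a ∈ f x → a ∈ f y → x = y)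
    {x y : ℕ} : x ∈ pinv f y ↔ y ∈ f x := by
  constructor
  · rintro ⟨h, rfl⟩
    exact h.choose_spec
  · intro hyx
    exact ⟨⟨x, hyx⟩, hinj (Exists.choose_spec (⟨x, hyx⟩ : ∃ x, y ∈ f x)) hyx⟩

lemma preimage_subset_dom {α : ℕ →. ℕ} {J : Set ℕ} : α.preimage J ⊆ α.Dom := by
  intro x hx
  rw [PFun.mem_preimage] at hx
  obtain ⟨y, _, hy⟩ := hx
  exact (PFun.mem_dom _ _).2 ⟨y, hy⟩

lemma image_subset_of_preimage {α : ℕ →. ℕ} {J I : Set ℕ} (hI : I ⊆ α.preimage J)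
    (hfn : ∀ ⦃x y a : ℕ⦄, a ∈ α x → a ∈ α y → x = y) : α.image I ⊆ J := by
  intro v hv
  rw [PFun.mem_image] at hv
  obtain ⟨x, hx, hvx⟩ := hv
  obtain ⟨y, hyJ, hy⟩ := PFun.mem_preimage .. |>.1 (hI hx)
  rwa [Part.mem_unique hvx hy]

lemma pimage_eq {α : ℕ →. ℕ} {I : Set ℕ} (hI : I ⊆ α.Dom) : α.image I = pfn α '' I := by
  ext v
  rw [PFun.mem_image]
  constructor
  · rintro ⟨x, hx, hv⟩
    exact ⟨x, hx, pfn_eq hv⟩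
  · rintro ⟨x, hx, rfl⟩
    exact ⟨x, hx, pfn_mem (hI hx)⟩

lemma ran_finite {n : ℕ} {α : ℕ →. ℕ} (hα : IsIEnd n α) : α.ran.Finite :=
  (Set.finite_Icc 1 n).subset hα.ran_subset

lemma dom_finite {n : ℕ} {α : ℕ →. ℕ} (hα : IsIEnd n α) : α.Dom.Finite :=
  (Set.finite_Icc 1 n).subset hα.dom_subset

-- block package: maximal interval of a subset of the domain
lemma block_package {n : ℕ} {α : ℕ →. ℕ} (hα : IsIEnd n α) {S I : Set ℕ}
    (hS : S ⊆ α.Dom) (hI : IsMaxIntervalOf I S) (hne : I.Nonempty) :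
    (∃ c d : ℕ, c ≤ d ∧ α.image I = Set.Icc c d) ∧
    (∀ x ∈ I, ∀ y ∈ I, (adj (pfn α x) (pfn α y) ↔ adj x y)) := by
  have hIdom : I ⊆ α.Dom := hI.1.1.trans hS
  have hIcc : I = Set.Icc (sInf I) (sSup I) :=
    maxInterval_eq_Icc (hS.trans hα.dom_subset) hI hne
  set a := sInf I
  set b := sSup I
  have hab : a ≤ b := by
    obtain ⟨x, hx⟩ := hne
    rw [hIcc] at hx
    exact le_trans hx.1 hx.2
  have hstep : ∀ x, a ≤ x → x < b → adj (pfn α x) (pfn α (x + 1)) := by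
    intro x h1 h2
    have hx : x ∈ I := by rw [hIcc]; exact ⟨h1, h2.le⟩
    have hx1 : x + 1 ∈ I := by rw [hIcc]; exact ⟨by omega, by omega⟩
    exact hα.edge (pfn_mem (hIdom hx)) (pfn_mem (hIdom hx1)) (Or.inl rfl)
  have hinj : Set.InjOn (pfn α) (Set.Icc a b) := by
    intro x hx y hy hxy
    rw [← hIcc] at hx hy
    exact hα.inj (hxy ▸ pfn_mem (hIdom hx)) (pfn_mem (hIdom hy))
  obtain ⟨himg, hadj⟩ := walk_package hab hstep hinj
  constructor
  · rw [pimage_eq hIdom, hIcc]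
    exact himg
  · intro x hx y hy
    rw [hIcc] at hx hy
    exact hadj x hx y hy

lemma ncard_Icc' (a b : ℕ) : (Set.Icc a b).ncard = b + 1 - a := by
  rw [Set.ncard_eq_toFinset_card']; simp

lemma icc_setLT_comparable {A B : Set ℕ} (hA : ∃ c d : ℕ, c ≤ d ∧ A = Set.Icc c d)
    (hB : ∃ c d : ℕ, c ≤ d ∧ B = Set.Icc c d) (hd : Disjoint A B) :
    SetLT A B ∨ SetLT B A := by
  obtain ⟨c, d, hcd, rfl⟩ := hA
  obtain ⟨e, f, hef, rfl⟩ := hB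
  rw [Set.disjoint_left] at hd
  have key : d < e ∨ f < c := by
    by_contra hc
    push_neg at hc
    have h1 : max c e ∈ Set.Icc c d := by simp only [Set.mem_Icc]; omega
    have h2 : max c e ∈ Set.Icc e f := by simp only [Set.mem_Icc]; omega
    exact hd h1 h2
  rcases key with h | h
  · left
    intro x hx y hy
    simp only [Set.mem_Icc] at hx hy
    omega
  · right
    intro x hx y hy
    simp only [Set.mem_Icc] at hx hy
    omega
-- the per-maximal-interval construction
lemma perJ {n : ℕ} {α β : ℕ →. ℕ} (hα : IsIEnd n α) (hβ : IsIEnd n β)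
    {J J' : Set ℕ} (hJ : IsMaxIntervalOf J α.ran) (hJne : J.Nonempty)
    (hJ' : IsMaxIntervalOf J' β.ran)
    {θ : Set ℕ → Set ℕ}
    (hθ1 : ∀ I, IsMaxIntervalOf I (α.preimage J) → IsMaxIntervalOf (θ I) (β.preimage J'))
    (hθ2 : ∀ I', IsMaxIntervalOf I' (β.preimage J') →
      ∃! I, IsMaxIntervalOf I (α.preimage J) ∧ θ I = I')
    (hθ3 : ∀ I, IsMaxIntervalOf I (α.preimage J) → I.ncard = (θ I).ncard)
    (hθ4 : (∀ I₁ I₂, IsMaxIntervalOf I₁ (α.preimage J) → IsMaxIntervalOf I₂ (α.preimage J) →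
        SetLT (α.image I₁) (α.image I₂) → SetLT (β.image (θ I₁)) (β.image (θ I₂))) ∨
     (∀ I₁ I₂, IsMaxIntervalOf I₁ (α.preimage J) → IsMaxIntervalOf I₂ (α.preimage J) →
        SetLT (α.image I₁) (α.image I₂) → SetLT (β.image (θ I₂)) (β.image (θ I₁)))) :
    ∃ f : ℕ → ℕ, Set.BijOn f J J' ∧
      (∀ u ∈ J, ∀ v ∈ J, (adj (f u) (f v) ↔ adj u v)) ∧
      (∀ I, IsMaxIntervalOf I (α.preimage J) → I.Nonempty →
        f '' (α.image I) = β.image (θ I)) := by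
  classical
  have hJsub : J ⊆ α.ran := hJ.1.1
  have hJfin : J.Finite := (ran_finite hα).subset hJsub
  have hpreα : α.preimage J ⊆ Set.Icc 1 n := preimage_subset_dom.trans hα.dom_subset
  have hpreβ : β.preimage J' ⊆ Set.Icc 1 n := preimage_subset_dom.trans hβ.dom_subset
  have hpreαfin : (α.preimage J).Finite := (Set.finite_Icc 1 n).subset hpreα
  have hpreβfin : (β.preimage J').Finite := (Set.finite_Icc 1 n).subset hpreβ
  -- the index family
  set 𝒮 : Set (Set ℕ) := {I | IsMaxIntervalOf I (α.preimage J) ∧ I.Nonempty} with h𝒮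
  have hmem𝒮 : ∀ I ∈ 𝒮, IsMaxIntervalOf I (α.preimage J) ∧ I.Nonempty := fun I hI => hI
  have hθne : ∀ I ∈ 𝒮, (θ I).Nonempty := by
    intro I hI
    have h1 : 0 < I.ncard := (Set.ncard_pos (hpreαfin.subset hI.1.1.1)).2 hI.2
    have h2 : 0 < (θ I).ncard := hθ3 I hI.1 ▸ h1
    exact (Set.ncard_pos ((hpreβfin.subset (hθ1 I hI.1).1.1))).1 h2
  have hθinj : ∀ I₁ ∈ 𝒮, ∀ I₂ ∈ 𝒮, θ I₁ = θ I₂ → I₁ = I₂ := by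
    intro I₁ h₁ I₂ h₂ he
    obtain ⟨I, hI, huniq⟩ := hθ2 (θ I₁) (hθ1 I₁ h₁.1)
    rw [huniq I₁ ⟨h₁.1, rfl⟩, huniq I₂ ⟨h₂.1, he.symm⟩]
  have hIdisj : ∀ I₁ ∈ 𝒮, ∀ I₂ ∈ 𝒮, I₁ ≠ I₂ → Disjoint I₁ I₂ := by
    intro I₁ h₁ I₂ h₂ hne
    exact maxInterval_disjoint h₁.1 h₂.1 hne
  have hθdisj : ∀ I₁ ∈ 𝒮, ∀ I₂ ∈ 𝒮, I₁ ≠ I₂ → Disjoint (θ I₁) (θ I₂) := by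
    intro I₁ h₁ I₂ h₂ hne
    exact maxInterval_disjoint (hθ1 I₁ h₁.1) (hθ1 I₂ h₂.1)
      (fun he => hne (hθinj I₁ h₁ I₂ h₂ he))
  -- unions
  have hUα : α.preimage J = ⋃ I ∈ 𝒮, I := by
    apply Set.Subset.antisymm
    · intro x hx
      obtain ⟨I, hI, hxI⟩ := exists_maxInterval hpreα hx
      simp only [Set.mem_iUnion]
      exact ⟨I, ⟨hI, ⟨x, hxI⟩⟩, hxI⟩
    · intro x hx
      simp only [Set.mem_iUnion] at hx
      obtain ⟨I, hI, hxI⟩ := hx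
      exact hI.1.1.1 hxI
  have hUβ : β.preimage J' = ⋃ I ∈ 𝒮, θ I := by
    apply Set.Subset.antisymm
    · intro x hx
      obtain ⟨I', hI', hxI'⟩ := exists_maxInterval hpreβ hx
      obtain ⟨I, ⟨hImax, hIeq⟩, _⟩ := hθ2 I' hI'
      have hIne : I.Nonempty := by
        have h0 : 0 < I'.ncard := (Set.ncard_pos (hpreβfin.subset hI'.1.1)).2 ⟨x, hxI'⟩
        have h1 : 0 < I.ncard := by rw [hθ3 I hImax, hIeq]; exact h0
        exact (Set.ncard_pos (hpreαfin.subset hImax.1.1)).1 h1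
      simp only [Set.mem_iUnion]
      exact ⟨I, ⟨hImax, hIne⟩, hIeq ▸ hxI'⟩
    · intro x hx
      simp only [Set.mem_iUnion] at hx
      obtain ⟨I, hI, hxI⟩ := hx
      exact (hθ1 I hI.1).1.1 hxI
  -- cardinalities of J and J'
  have hJ'sub : J' ⊆ β.ran := hJ'.1.1
  have hJ'fin : J'.Finite := (ran_finite hβ).subset hJ'sub
  have hbijpreα : Set.BijOn (pfn α) (α.preimage J) J := by
    refine ⟨?_, ?_, ?_⟩
    · intro x hx
      obtain ⟨y, hyJ, hy⟩ := (PFun.mem_preimage ..).1 hx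
      rwa [pfn_eq hy]
    · intro x hx y hy he
      exact hα.inj (he ▸ pfn_mem (preimage_subset_dom hx)) (pfn_mem (preimage_subset_dom hy))
    · intro y hy
      obtain ⟨x, hx⟩ := hJsub hy
      exact ⟨x, (PFun.mem_preimage ..).2 ⟨y, hy, hx⟩, pfn_eq hx⟩
  have hbijpreβ : Set.BijOn (pfn β) (β.preimage J') J' := by
    refine ⟨?_, ?_, ?_⟩
    · intro x hx
      obtain ⟨y, hyJ, hy⟩ := (PFun.mem_preimage ..).1 hx
      rwa [pfn_eq hy]
    · intro x hx y hy he
      exact hβ.inj (he ▸ pfn_mem (preimage_subset_dom hx)) (pfn_mem (preimage_subset_dom hy))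
    · intro y hy
      obtain ⟨x, hx⟩ := hJ'sub hy
      exact ⟨x, (PFun.mem_preimage ..).2 ⟨y, hy, hx⟩, pfn_eq hx⟩
  have hcardJ : J.ncard = J'.ncard := by
    have h1 : (α.preimage J).ncard = J.ncard := by
      have := Set.ncard_image_of_injOn hbijpreα.injOn
      rw [hbijpreα.image_eq] at this
      exact this.symm
    have h2 : (β.preimage J').ncard = J'.ncard := by
      have := Set.ncard_image_of_injOn hbijpreβ.injOn
      rw [hbijpreβ.image_eq] at this
      exact this.symm
    have h3 : (α.preimage J).ncard = (β.preimage J').ncard := by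
      refine ncard_union_family (α.preimage J).ncard (α.preimage J) (β.preimage J') 𝒮
        id θ rfl hpreαfin hpreβfin (fun I hI => hI.2) hIdisj hθdisj hUα hUβ
        (fun I hI => hθ3 I hI.1)
    omega
  -- J and J' as Icc
  have hJIcc : J = Set.Icc (sInf J) (sSup J) := maxInterval_eq_Icc hα.ran_subset hJ hJne
  have hJ'ne : J'.Nonempty := by
    obtain ⟨y, hy⟩ := hJne
    have h0 : 0 < J.ncard := (Set.ncard_pos hJfin).2 ⟨y, hy⟩
    exact (Set.ncard_pos hJ'fin).1 (hcardJ ▸ h0)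
  have hJ'Icc : J' = Set.Icc (sInf J') (sSup J') := maxInterval_eq_Icc hβ.ran_subset hJ' hJ'ne
  set a := sInf J
  set b := sSup J
  set a' := sInf J'
  set b' := sSup J'
  have hab : a ≤ b := by
    obtain ⟨x, hx⟩ := hJne
    rw [hJIcc] at hx; exact le_trans hx.1 hx.2
  have hab' : a' ≤ b' := by
    obtain ⟨x, hx⟩ := hJ'ne
    rw [hJ'Icc] at hx; exact le_trans hx.1 hx.2
  have hlen : b - a = b' - a' := by
    have h1 := ncard_Icc' a b
    have h2 := ncard_Icc' a' b'
    rw [hJIcc, hJ'Icc] at hcardJ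
    omega
  -- the piecewise data needed for matching lemma (independent of orientation)
  have hblk : ∀ I ∈ 𝒮, (∃ c d : ℕ, c ≤ d ∧ α.image I = Set.Icc c d) ∧
      (∀ x ∈ I, ∀ y ∈ I, (adj (pfn α x) (pfn α y) ↔ adj x y)) :=
    fun I hI => block_package hα preimage_subset_dom hI.1 hI.2
  have hblkβ : ∀ I ∈ 𝒮, (∃ c d : ℕ, c ≤ d ∧ β.image (θ I) = Set.Icc c d) ∧
      (∀ x ∈ θ I, ∀ y ∈ θ I, (adj (pfn β x) (pfn β y) ↔ adj x y)) :=
    fun I hI => block_package hβ preimage_subset_dom (hθ1 I hI.1) (hθne I hI)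
  have hAne : ∀ I ∈ 𝒮, (α.image I).Nonempty := by
    intro I hI
    obtain ⟨c, d, hcd, he⟩ := (hblk I hI).1
    rw [he]
    exact Set.nonempty_Icc.2 hcd
  have hAdisj : ∀ I₁ ∈ 𝒮, ∀ I₂ ∈ 𝒮, I₁ ≠ I₂ → Disjoint (α.image I₁) (α.image I₂) := by
    intro I₁ h₁ I₂ h₂ hne
    rw [Set.disjoint_left]
    intro v hv1 hv2
    obtain ⟨x₁, hx₁, hvx₁⟩ := (PFun.mem_image ..).1 hv1
    obtain ⟨x₂, hx₂, hvx₂⟩ := (PFun.mem_image ..).1 hv2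
    have := hα.inj hvx₁ hvx₂
    exact (hIdisj I₁ h₁ I₂ h₂ hne).ne_of_mem hx₁ hx₂ this
  have hBdisj : ∀ I₁ ∈ 𝒮, ∀ I₂ ∈ 𝒮, I₁ ≠ I₂ → Disjoint (β.image (θ I₁)) (β.image (θ I₂)) := by
    intro I₁ h₁ I₂ h₂ hne
    rw [Set.disjoint_left]
    intro v hv1 hv2
    obtain ⟨x₁, hx₁, hvx₁⟩ := (PFun.mem_image ..).1 hv1
    obtain ⟨x₂, hx₂, hvx₂⟩ := (PFun.mem_image ..).1 hv2
    have := hβ.inj hvx₁ hvx₂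
    exact (hθdisj I₁ h₁ I₂ h₂ hne).ne_of_mem hx₁ hx₂ this
  have hAcmp : ∀ I₁ ∈ 𝒮, ∀ I₂ ∈ 𝒮, I₁ ≠ I₂ →
      SetLT (α.image I₁) (α.image I₂) ∨ SetLT (α.image I₂) (α.image I₁) := by
    intro I₁ h₁ I₂ h₂ hne
    exact icc_setLT_comparable (hblk I₁ h₁).1 (hblk I₂ h₂).1 (hAdisj I₁ h₁ I₂ h₂ hne)
  have hUA : J = ⋃ I ∈ 𝒮, α.image I := by
    apply Set.Subset.antisymm
    · intro y hy
      obtain ⟨x, hx⟩ := hJsub hy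
      have hxpre : x ∈ α.preimage J := (PFun.mem_preimage ..).2 ⟨y, hy, hx⟩
      obtain ⟨I, hI, hxI⟩ := exists_maxInterval hpreα hxpre
      simp only [Set.mem_iUnion]
      exact ⟨I, ⟨hI, ⟨x, hxI⟩⟩, (PFun.mem_image ..).2 ⟨x, hxI, hx⟩⟩
    · intro y hy
      simp only [Set.mem_iUnion] at hy
      obtain ⟨I, hI, hyI⟩ := hy
      exact image_subset_of_preimage hI.1.1.1 hα.inj hyI
  have hUB : J' = ⋃ I ∈ 𝒮, β.image (θ I) := by
    apply Set.Subset.antisymm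
    · intro y hy
      obtain ⟨x, hx⟩ := hJ'sub hy
      have hxpre : x ∈ β.preimage J' := (PFun.mem_preimage ..).2 ⟨y, hy, hx⟩
      obtain ⟨I', hI', hxI'⟩ := exists_maxInterval hpreβ hxpre
      obtain ⟨I, ⟨hImax, hIeq⟩, _⟩ := hθ2 I' hI'
      have hIne : I.Nonempty := by
        have h0 : 0 < I'.ncard := (Set.ncard_pos (hpreβfin.subset hI'.1.1)).2 ⟨x, hxI'⟩
        have h1 : 0 < I.ncard := by rw [hθ3 I hImax, hIeq]; exact h0
        exact (Set.ncard_pos (hpreαfin.subset hImax.1.1)).1 h1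
      simp only [Set.mem_iUnion]
      exact ⟨I, ⟨hImax, hIne⟩, (PFun.mem_image ..).2 ⟨x, hIeq ▸ hxI', hx⟩⟩
    · intro y hy
      simp only [Set.mem_iUnion] at hy
      obtain ⟨I, hI, hyI⟩ := hy
      exact image_subset_of_preimage (hθ1 I hI.1).1.1 hβ.inj hyI
  have hcardAB : ∀ I ∈ 𝒮, (α.image I).ncard = (β.image (θ I)).ncard := by
    intro I hI
    have hIdom : I ⊆ α.Dom := hI.1.1.1.trans preimage_subset_dom
    have hθIdom : θ I ⊆ β.Dom := (hθ1 I hI.1).1.1.trans preimage_subset_dom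
    have hinj1 : Set.InjOn (pfn α) I := by
      intro x hx y hy he
      refine hα.inj ?_ (pfn_mem (hIdom hy))
      rw [← he]; exact pfn_mem (hIdom hx)
    have hinj2 : Set.InjOn (pfn β) (θ I) := by
      intro x hx y hy he
      refine hβ.inj ?_ (pfn_mem (hθIdom hy))
      rw [← he]; exact pfn_mem (hθIdom hx)
    rw [pimage_eq hIdom, pimage_eq hθIdom, Set.ncard_image_of_injOn hinj1,
      Set.ncard_image_of_injOn hinj2]
    exact hθ3 I hI.1
  -- orientation and the map f
  rcases hθ4 with hor | hor
  · -- order preserving: f increasing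
    have hbijf : Set.BijOn (fun y => a' + (y - a)) J J' := by
      refine ⟨?_, ?_, ?_⟩
      · intro y hy
        rw [hJIcc] at hy
        rw [hJ'Icc]
        simp only [Set.mem_Icc] at hy ⊢
        omega
      · intro y hy z hz he
        rw [hJIcc] at hy hz
        simp only [Set.mem_Icc] at hy hz
        have he' : a' + (y - a) = a' + (z - a) := he
        omega
      · intro y hy
        rw [hJ'Icc] at hy
        simp only [Set.mem_Icc] at hy
        refine ⟨a + (y - a'), ?_, ?_⟩
        · rw [hJIcc]; simp only [Set.mem_Icc]; omega
        · show a' + ((a + (y - a')) - a) = y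
          omega
    have hadjf : ∀ u ∈ J, ∀ v ∈ J, (adj ((fun y => a' + (y - a)) u) ((fun y => a' + (y - a)) v) ↔ adj u v) := by
      intro u hu v hv
      rw [hJIcc] at hu hv
      simp only [Set.mem_Icc] at hu hv
      show adj (a' + (u - a)) (a' + (v - a)) ↔ adj u v
      unfold adj
      omega
    have hmono : StrictMonoOn (fun y => a' + (y - a)) J := by
      intro u hu v hv huv
      rw [hJIcc] at hu hv
      simp only [Set.mem_Icc] at hu hv
      show a' + (u - a) < a' + (v - a)
      omega
    refine ⟨fun y => a' + (y - a), hbijf, hadjf, ?_⟩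
    intro I hImax hIne
    exact block_matching J.ncard J J' 𝒮 (fun I => α.image I)
      (fun I => β.image (θ I)) (fun y => a' + (y - a)) rfl hJfin hJ'fin hAne hAdisj
      hBdisj hAcmp hUA hUB hcardAB hbijf
      (Or.inl ⟨hmono, fun I₁ h₁ I₂ h₂ hlt => hor I₁ I₂ h₁.1 h₂.1 hlt⟩) I ⟨hImax, hIne⟩
  · -- order reversing: f decreasing
    have hbijf : Set.BijOn (fun y => b' - (y - a)) J J' := by
      refine ⟨?_, ?_, ?_⟩
      · intro y hy
        rw [hJIcc] at hy
        rw [hJ'Icc]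
        simp only [Set.mem_Icc] at hy ⊢
        omega
      · intro y hy z hz he
        rw [hJIcc] at hy hz
        simp only [Set.mem_Icc] at hy hz
        have he' : b' - (y - a) = b' - (z - a) := he
        omega
      · intro y hy
        rw [hJ'Icc] at hy
        simp only [Set.mem_Icc] at hy
        refine ⟨a + (b' - y), ?_, ?_⟩
        · rw [hJIcc]; simp only [Set.mem_Icc]; omega
        · show b' - ((a + (b' - y)) - a) = y
          omega
    have hadjf : ∀ u ∈ J, ∀ v ∈ J, (adj ((fun y => b' - (y - a)) u) ((fun y => b' - (y - a)) v) ↔ adj u v) := by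
      intro u hu v hv
      rw [hJIcc] at hu hv
      simp only [Set.mem_Icc] at hu hv
      show adj (b' - (u - a)) (b' - (v - a)) ↔ adj u v
      unfold adj
      omega
    have hanti : StrictAntiOn (fun y => b' - (y - a)) J := by
      intro u hu v hv huv
      rw [hJIcc] at hu hv
      simp only [Set.mem_Icc] at hu hv
      show b' - (v - a) < b' - (u - a)
      omega
    refine ⟨fun y => b' - (y - a), hbijf, hadjf, ?_⟩
    intro I hImax hIne
    exact block_matching J.ncard J J' 𝒮 (fun I => α.image I)
      (fun I => β.image (θ I)) (fun y => b' - (y - a)) rfl hJfin hJ'fin hAne hAdisj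
      hBdisj hAcmp hUA hUB hcardAB hbijf
      (Or.inr ⟨hanti, fun I₁ h₁ I₂ h₂ hlt => hor I₁ I₂ h₁.1 h₂.1 hlt⟩) I ⟨hImax, hIne⟩
lemma preimage_empty {α : ℕ →. ℕ} : α.preimage ∅ = ∅ := by
  ext x
  rw [PFun.mem_preimage]
  simp

theorem stmt12 (n : ℕ) (α β : ℕ →. ℕ) (hα : IsIEnd n α) (hβ : IsIEnd n β)
    (h : SimilarType α β) :
    ∃ γ δ : ℕ →. ℕ, IsPAut n γ ∧ IsPAut n δ ∧
      β = pcomp (pcomp γ α) δ ∧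
      α = pcomp (pcomp (pinv γ) β) (pinv δ) := by
  classical
  obtain ⟨σ, hσ1, hσ2, hσ3⟩ := h
  -- components
  have hJofE : ∀ y, y ∈ α.ran → ∃ J, IsMaxIntervalOf J α.ran ∧ y ∈ J :=
    fun y hy => exists_maxInterval hα.ran_subset hy
  choose! Jof hJof1 hJof2 using hJofE
  have hJ'ofE : ∀ w, w ∈ β.ran → ∃ J', IsMaxIntervalOf J' β.ran ∧ w ∈ J' :=
    fun w hw => exists_maxInterval hβ.ran_subset hw
  choose! J'of hJ'of1 hJ'of2 using hJ'ofE
  -- nonemptiness transfer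
  have hne_transfer : ∀ J, IsMaxIntervalOf J α.ran → (σ J).Nonempty → J.Nonempty := by
    intro J hJ hσne
    rcases Set.eq_empty_or_nonempty J with rfl | hne
    · exfalso
      obtain ⟨θ, hθ1, hθ2, hθ3, -⟩ := hσ3 ∅ hJ
      obtain ⟨y', hy'⟩ := hσne
      obtain ⟨x', hx'⟩ := (hσ1 ∅ hJ).1.1 hy'
      have hx'pre : x' ∈ β.preimage (σ ∅) := (PFun.mem_preimage ..).2 ⟨y', hy', hx'⟩
      have hpreβ : β.preimage (σ ∅) ⊆ Set.Icc 1 n := preimage_subset_dom.trans hβ.dom_subset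
      obtain ⟨I', hI'max, hx'I'⟩ := exists_maxInterval hpreβ hx'pre
      obtain ⟨I, ⟨hImax, hIθ⟩, -⟩ := hθ2 I' hI'max
      have hIempty : I = ∅ := by
        have := hImax.1.1
        rw [preimage_empty] at this
        exact Set.subset_empty_iff.1 this
      have h0 := hθ3 I hImax
      rw [hIθ, hIempty] at h0
      simp only [Set.ncard_empty] at h0
      have : 0 < I'.ncard :=
        (Set.ncard_pos ((Set.finite_Icc 1 n).subset (hI'max.1.1.trans hpreβ))).2 ⟨x', hx'I'⟩
      omega
    · exact hne
  -- per-component data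
  have key : ∀ J, IsMaxIntervalOf J α.ran → J.Nonempty →
      ∃ (f : ℕ → ℕ) (θ : Set ℕ → Set ℕ),
        Set.BijOn f J (σ J) ∧
        (∀ u ∈ J, ∀ v ∈ J, (adj (f u) (f v) ↔ adj u v)) ∧
        (∀ I, IsMaxIntervalOf I (α.preimage J) → IsMaxIntervalOf (θ I) (β.preimage (σ J))) ∧
        (∀ I', IsMaxIntervalOf I' (β.preimage (σ J)) →
          ∃! I, IsMaxIntervalOf I (α.preimage J) ∧ θ I = I') ∧
        (∀ I, IsMaxIntervalOf I (α.preimage J) → I.ncard = (θ I).ncard) ∧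
        (∀ I, IsMaxIntervalOf I (α.preimage J) → I.Nonempty →
          f '' (α.image I) = β.image (θ I)) := by
    intro J hJ hJne
    obtain ⟨θ, hθ1, hθ2, hθ3, hθ4⟩ := hσ3 J hJ
    obtain ⟨f, hbij, hadj, hmatch⟩ := perJ hα hβ hJ hJne (hσ1 J hJ) hθ1 hθ2 hθ3 hθ4
    exact ⟨f, θ, hbij, hadj, hθ1, hθ2, hθ3, hmatch⟩
  choose! F Θ hFbij hFadj hΘmax hΘuniq hΘcard hFmatch using key
  -- injectivity of σ on maximal intervals
  have hσinj : ∀ J₁, IsMaxIntervalOf J₁ α.ran → ∀ J₂, IsMaxIntervalOf J₂ α.ran →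
      σ J₁ = σ J₂ → J₁ = J₂ := by
    intro J₁ h₁ J₂ h₂ he
    obtain ⟨J, hJ, huniq⟩ := hσ2 (σ J₁) (hσ1 J₁ h₁)
    rw [huniq J₁ ⟨h₁, rfl⟩, huniq J₂ ⟨h₂, he.symm⟩]
  -- the partial automorphism δ
  set δt : ℕ → ℕ := fun y => F (Jof y) y with hδt
  set δpf : ℕ →. ℕ := fun y => ⟨y ∈ α.ran, fun _ => δt y⟩ with hδpf
  have hδmem : ∀ y v, v ∈ δpf y ↔ y ∈ α.ran ∧ δt y = v := by
    intro y v
    constructor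
    · rintro ⟨h, rfl⟩; exact ⟨h, rfl⟩
    · rintro ⟨h, rfl⟩; exact ⟨h, rfl⟩
  have hJofJ : ∀ J, IsMaxIntervalOf J α.ran → ∀ y ∈ J, Jof y = J := by
    intro J hJ y hy
    exact maxInterval_unique (hJof1 y (hJ.1.1 hy)) hJ (hJof2 y (hJ.1.1 hy)) hy
  have hδonJ : ∀ J, IsMaxIntervalOf J α.ran → ∀ y ∈ J, δt y = F J y := by
    intro J hJ y hy
    simp only [hδt]
    rw [hJofJ J hJ y hy]
  have hJofmax : ∀ y ∈ α.ran, IsMaxIntervalOf (Jof y) α.ran := fun y hy => hJof1 y hy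
  have hJofne : ∀ y ∈ α.ran, (Jof y).Nonempty := fun y hy => ⟨y, hJof2 y hy⟩
  have hδval : ∀ y ∈ α.ran, δt y ∈ σ (Jof y) := by
    intro y hy
    have := (hFbij (Jof y) (hJofmax y hy) (hJofne y hy)).mapsTo (hJof2 y hy)
    rwa [hδonJ (Jof y) (hJofmax y hy) y (hJof2 y hy)]
  have hδranβ : ∀ y ∈ α.ran, δt y ∈ β.ran := by
    intro y hy
    exact (hσ1 (Jof y) (hJofmax y hy)).1.1 (hδval y hy)
  have hδinj : ∀ y₁ ∈ α.ran, ∀ y₂ ∈ α.ran, δt y₁ = δt y₂ → y₁ = y₂ := by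
    intro y₁ h₁ y₂ h₂ he
    have hv₁ := hδval y₁ h₁
    have hv₂ := hδval y₂ h₂
    rw [he] at hv₁
    have hσeq : σ (Jof y₁) = σ (Jof y₂) := by
      by_contra hne
      exact (maxInterval_disjoint (hσ1 _ (hJofmax y₁ h₁)) (hσ1 _ (hJofmax y₂ h₂))
        hne).ne_of_mem hv₁ hv₂ rfl
    have hJeq : Jof y₁ = Jof y₂ := hσinj _ (hJofmax y₁ h₁) _ (hJofmax y₂ h₂) hσeq
    apply (hFbij (Jof y₁) (hJofmax y₁ h₁) (hJofne y₁ h₁)).injOn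
      (hJof2 y₁ h₁) (hJeq ▸ hJof2 y₂ h₂)
    rw [← hδonJ (Jof y₁) (hJofmax y₁ h₁) y₁ (hJof2 y₁ h₁),
      ← hδonJ (Jof y₁) (hJofmax y₁ h₁) y₂ (hJeq ▸ hJof2 y₂ h₂), he]
  have hδpfinj : ∀ ⦃x y a : ℕ⦄, a ∈ δpf x → a ∈ δpf y → x = y := by
    intro x y a hx hy
    rw [hδmem] at hx hy
    exact hδinj x hx.1 y hy.1 (hx.2.trans hy.2.symm)
  -- IsPAut δpf
  have hδPAut : IsPAut n δpf := by
    refine ⟨⟨?_, ?_, hδpfinj, ?_⟩, ?_⟩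
    · intro y hy
      exact hα.ran_subset hy
    · intro b hb
      obtain ⟨y, hy⟩ := hb
      rw [hδmem] at hy
      exact hβ.ran_subset (hy.2 ▸ hδranβ y hy.1)
    · -- edge
      intro u v c d hc hd huv
      rw [hδmem] at hc hd
      obtain ⟨hu, rfl⟩ := hc
      obtain ⟨hv, rfl⟩ := hd
      have hvJ : v ∈ Jof u := maxInterval_adj_mem (hJofmax u hu) (hJof2 u hu) hv huv
      have hJeq : Jof v = Jof u := hJofJ (Jof u) (hJofmax u hu) v hvJ
      rw [hδonJ (Jof u) (hJofmax u hu) u (hJof2 u hu),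
        hδonJ (Jof u) (hJofmax u hu) v hvJ]
      exact (hFadj (Jof u) (hJofmax u hu) (hJofne u hu) u (hJof2 u hu) v hvJ).2 huv
    · -- reverse edge
      intro u v c d hc hd hcd
      rw [hδmem] at hc hd
      obtain ⟨hu, rfl⟩ := hc
      obtain ⟨hv, rfl⟩ := hd
      have hcu := hδval u hu
      have hcv := hδval v hv
      have hdJ : δt v ∈ σ (Jof u) :=
        maxInterval_adj_mem (hσ1 _ (hJofmax u hu)) hcu (hδranβ v hv) hcd
      have hσeq : σ (Jof u) = σ (Jof v) := by
        by_contra hne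
        exact (maxInterval_disjoint (hσ1 _ (hJofmax u hu)) (hσ1 _ (hJofmax v hv))
          hne).ne_of_mem hdJ hcv rfl
      have hJeq : Jof u = Jof v := hσinj _ (hJofmax u hu) _ (hJofmax v hv) hσeq
      have hvJ : v ∈ Jof u := hJeq ▸ hJof2 v hv
      refine (hFadj (Jof u) (hJofmax u hu) (hJofne u hu) u (hJof2 u hu) v hvJ).1 ?_
      rw [← hδonJ (Jof u) (hJofmax u hu) u (hJof2 u hu),
        ← hδonJ (Jof u) (hJofmax u hu) v hvJ]
      exact hcd
  -- γ
  set γpf : ℕ →. ℕ := pcomp (pcomp β (pinv δpf)) (pinv α) with hγpf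
  have hγmem : ∀ x z, z ∈ γpf x ↔ ∃ v w, w ∈ β x ∧ w ∈ δpf v ∧ v ∈ α z := by
    intro x z
    simp only [hγpf, mem_pcomp, mem_pinv hα.inj, mem_pinv hδpfinj]
    constructor
    · rintro ⟨v, ⟨w, hw1, hw2⟩, hv⟩
      exact ⟨v, w, hw1, hw2, hv⟩
    · rintro ⟨v, w, hw1, hw2, hv⟩
      exact ⟨v, ⟨w, hw1, hw2⟩, hv⟩
  have hγinj : ∀ ⦃x y a : ℕ⦄, a ∈ γpf x → a ∈ γpf y → x = y := by
    intro x y a hx hy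
    rw [hγmem] at hx hy
    obtain ⟨v₁, w₁, hw₁x, hw₁δ, hv₁⟩ := hx
    obtain ⟨v₂, w₂, hw₂y, hw₂δ, hv₂⟩ := hy
    have hv : v₁ = v₂ := Part.mem_unique hv₁ hv₂
    subst hv
    have hw : w₁ = w₂ := Part.mem_unique hw₁δ hw₂δ
    subst hw
    exact hβ.inj hw₁x hw₂y
  -- surjectivity facts
  have hsurjδ : ∀ w ∈ β.ran, ∃ v ∈ α.ran, δt v = w := by
    intro w hw
    obtain ⟨J, ⟨hJmax, hJσ⟩, -⟩ := hσ2 (J'of w) (hJ'of1 w hw)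
    have hJne : J.Nonempty := hne_transfer J hJmax (hJσ ▸ ⟨w, hJ'of2 w hw⟩)
    have hwσ : w ∈ σ J := hJσ ▸ hJ'of2 w hw
    obtain ⟨v, hvJ, hvw⟩ := (hFbij J hJmax hJne).surjOn hwσ
    refine ⟨v, hJmax.1.1 hvJ, ?_⟩
    rw [hδonJ J hJmax v hvJ]
    exact hvw
  -- the two equations
  have eq1 : β = pcomp (pcomp γpf α) δpf := by
    apply PFun.ext
    intro x b
    simp only [mem_pcomp]
    constructor
    · intro hb
      have hbran : b ∈ β.ran := ⟨x, hb⟩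
      obtain ⟨v, hvran, hvb⟩ := hsurjδ b hbran
      have hvran' : v ∈ α.ran := hvran
      obtain ⟨z, hz⟩ := hvran'
      refine ⟨v, ⟨z, ?_, hz⟩, (hδmem v b).2 ⟨hvran, hvb⟩⟩
      rw [hγmem]
      exact ⟨v, b, hb, (hδmem v b).2 ⟨hvran, hvb⟩, hz⟩
    · rintro ⟨v, ⟨z, hz, hv⟩, hb⟩
      rw [hγmem] at hz
      obtain ⟨v₀, w₀, hw₀x, hw₀δ, hv₀⟩ := hz
      have : v = v₀ := Part.mem_unique hv hv₀
      subst this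
      have : b = w₀ := Part.mem_unique hb hw₀δ
      subst this
      exact hw₀x
  have eq2 : α = pcomp (pcomp (pinv γpf) β) (pinv δpf) := by
    apply PFun.ext
    intro z v
    simp only [mem_pcomp, mem_pinv hγinj, mem_pinv hδpfinj]
    constructor
    · intro hv
      have hvran : v ∈ α.ran := ⟨z, hv⟩
      have hwran : δt v ∈ β.ran := hδranβ v hvran
      obtain ⟨x, hx⟩ := hwran
      refine ⟨δt v, ⟨x, ?_, hx⟩, (hδmem v (δt v)).2 ⟨hvran, rfl⟩⟩
      rw [hγmem]
      exact ⟨v, δt v, hx, (hδmem v (δt v)).2 ⟨hvran, rfl⟩, hv⟩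
    · rintro ⟨w, ⟨x, hxγ, hwx⟩, hwδ⟩
      rw [hγmem] at hxγ
      obtain ⟨v₀, w₀, hw₀x, hw₀δ, hv₀⟩ := hxγ
      have : w = w₀ := Part.mem_unique hwx hw₀x
      subst this
      have : v = v₀ := hδpfinj hwδ hw₀δ
      subst this
      exact hv₀
  -- IsPAut γpf
  have hγPAut : IsPAut n γpf := by
    refine ⟨⟨?_, ?_, hγinj, ?_⟩, ?_⟩
    · intro x hx
      obtain ⟨z, hz⟩ := (PFun.mem_dom ..).1 hx
      rw [hγmem] at hz
      obtain ⟨v, w, hwx, -, -⟩ := hz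
      exact hβ.dom_subset ((PFun.mem_dom ..).2 ⟨w, hwx⟩)
    · intro z hz
      obtain ⟨x, hx⟩ := hz
      rw [hγmem] at hx
      obtain ⟨v, w, -, -, hv⟩ := hx
      exact hα.dom_subset ((PFun.mem_dom ..).2 ⟨v, hv⟩)
    · -- edge: adj x₁ x₂ → adj z₁ z₂
      intro x₁ x₂ z₁ z₂ h₁ h₂ hx12
      rw [hγmem] at h₁ h₂
      obtain ⟨v₁, w₁, hw₁x, hw₁δ, hv₁⟩ := h₁
      obtain ⟨v₂, w₂, hw₂x, hw₂δ, hv₂⟩ := h₂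
      rw [hδmem] at hw₁δ hw₂δ
      obtain ⟨hv₁ran, hδv₁⟩ := hw₁δ
      obtain ⟨hv₂ran, hδv₂⟩ := hw₂δ
      have hw12 : adj w₁ w₂ := hβ.edge hw₁x hw₂x hx12
      have hw₁ran : w₁ ∈ β.ran := ⟨x₁, hw₁x⟩
      have hw₂ran : w₂ ∈ β.ran := ⟨x₂, hw₂x⟩
      obtain ⟨J, ⟨hJmax, hJσ⟩, -⟩ := hσ2 (J'of w₁) (hJ'of1 w₁ hw₁ran)
      have hJne : J.Nonempty := hne_transfer J hJmax (hJσ ▸ ⟨w₁, hJ'of2 w₁ hw₁ran⟩)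
      have hw₁J' : w₁ ∈ σ J := hJσ ▸ hJ'of2 w₁ hw₁ran
      have hw₂J' : w₂ ∈ σ J :=
        maxInterval_adj_mem (hσ1 J hJmax) hw₁J' hw₂ran hw12
      have hx₁pre : x₁ ∈ β.preimage (σ J) := (PFun.mem_preimage ..).2 ⟨w₁, hw₁J', hw₁x⟩
      have hx₂pre : x₂ ∈ β.preimage (σ J) := (PFun.mem_preimage ..).2 ⟨w₂, hw₂J', hw₂x⟩
      have hpreβn : β.preimage (σ J) ⊆ Set.Icc 1 n := preimage_subset_dom.trans hβ.dom_subset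
      obtain ⟨I', hI'max, hx₁I'⟩ := exists_maxInterval hpreβn hx₁pre
      have hx₂I' : x₂ ∈ I' := maxInterval_adj_mem hI'max hx₁I' hx₂pre hx12
      obtain ⟨I, ⟨hImax, hIθ⟩, -⟩ := hΘuniq J hJmax hJne I' hI'max
      have hpreαn : α.preimage J ⊆ Set.Icc 1 n := preimage_subset_dom.trans hα.dom_subset
      have hIne : I.Nonempty := by
        have h0 : 0 < I'.ncard :=
          (Set.ncard_pos ((Set.finite_Icc 1 n).subset (hI'max.1.1.trans hpreβn))).2 ⟨x₁, hx₁I'⟩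
        have h1 : 0 < I.ncard := by rw [hΘcard J hJmax hJne I hImax, hIθ]; exact h0
        exact (Set.ncard_pos ((Set.finite_Icc 1 n).subset (hImax.1.1.trans hpreαn))).1 h1
      have hmatch := hFmatch J hJmax hJne I hImax hIne
      rw [hIθ] at hmatch
      have hw₁img : w₁ ∈ β.image I' := (PFun.mem_image ..).2 ⟨x₁, hx₁I', hw₁x⟩
      have hw₂img : w₂ ∈ β.image I' := (PFun.mem_image ..).2 ⟨x₂, hx₂I', hw₂x⟩
      rw [← hmatch] at hw₁img hw₂img
      obtain ⟨y₁, hy₁A, hy₁w⟩ := hw₁img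
      obtain ⟨y₂, hy₂A, hy₂w⟩ := hw₂img
      have hAJ : α.image I ⊆ J := image_subset_of_preimage hImax.1.1 hα.inj
      have hy₁J : y₁ ∈ J := hAJ hy₁A
      have hy₂J : y₂ ∈ J := hAJ hy₂A
      have hy₁ran : y₁ ∈ α.ran := hJmax.1.1 hy₁J
      have hy₂ran : y₂ ∈ α.ran := hJmax.1.1 hy₂J
      have hδy₁ : δt y₁ = w₁ := by rw [hδonJ J hJmax y₁ hy₁J]; exact hy₁w
      have hδy₂ : δt y₂ = w₂ := by rw [hδonJ J hJmax y₂ hy₂J]; exact hy₂w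
      have hv₁y : v₁ = y₁ := hδinj v₁ hv₁ran y₁ hy₁ran (by rw [hδv₁, hδy₁])
      have hv₂y : v₂ = y₂ := hδinj v₂ hv₂ran y₂ hy₂ran (by rw [hδv₂, hδy₂])
      subst hv₁y; subst hv₂y
      -- v_i ∈ α.image I hence z_i ∈ I
      obtain ⟨t₁, ht₁I, hvt₁⟩ := (PFun.mem_image ..).1 hy₁A
      obtain ⟨t₂, ht₂I, hvt₂⟩ := (PFun.mem_image ..).1 hy₂A
      have hz₁I : z₁ ∈ I := hα.inj hv₁ hvt₁ ▸ ht₁I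
      have hz₂I : z₂ ∈ I := hα.inj hv₂ hvt₂ ▸ ht₂I
      -- adjacency of v₁ v₂
      have hadjv : adj v₁ v₂ := by
        refine (hFadj J hJmax hJne v₁ hy₁J v₂ hy₂J).1 ?_
        rw [hy₁w, hy₂w]
        exact hw12
      -- block adjacency transfer
      have hblk := (block_package hα preimage_subset_dom hImax hIne).2
      have := hblk z₁ hz₁I z₂ hz₂I
      rw [pfn_eq hv₁, pfn_eq hv₂] at this
      exact this.1 hadjv
    · -- reverse edge: adj z₁ z₂ → adj x₁ x₂
      intro x₁ x₂ z₁ z₂ h₁ h₂ hz12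
      rw [hγmem] at h₁ h₂
      obtain ⟨v₁, w₁, hw₁x, hw₁δ, hv₁⟩ := h₁
      obtain ⟨v₂, w₂, hw₂x, hw₂δ, hv₂⟩ := h₂
      rw [hδmem] at hw₁δ hw₂δ
      obtain ⟨hv₁ran, hδv₁⟩ := hw₁δ
      obtain ⟨hv₂ran, hδv₂⟩ := hw₂δ
      have hv12 : adj v₁ v₂ := hα.edge hv₁ hv₂ hz12
      set J := Jof v₁ with hJdef
      have hJmax : IsMaxIntervalOf J α.ran := hJofmax v₁ hv₁ran
      have hJne : J.Nonempty := hJofne v₁ hv₁ran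
      have hv₁J : v₁ ∈ J := hJof2 v₁ hv₁ran
      have hv₂J : v₂ ∈ J := maxInterval_adj_mem hJmax hv₁J hv₂ran hv12
      have hz₁pre : z₁ ∈ α.preimage J := (PFun.mem_preimage ..).2 ⟨v₁, hv₁J, hv₁⟩
      have hz₂pre : z₂ ∈ α.preimage J := (PFun.mem_preimage ..).2 ⟨v₂, hv₂J, hv₂⟩
      have hpreαn : α.preimage J ⊆ Set.Icc 1 n := preimage_subset_dom.trans hα.dom_subset
      obtain ⟨I, hImax, hz₁I⟩ := exists_maxInterval hpreαn hz₁pre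
      have hz₂I : z₂ ∈ I := maxInterval_adj_mem hImax hz₁I hz₂pre hz12
      have hIne : I.Nonempty := ⟨z₁, hz₁I⟩
      have hmatch := hFmatch J hJmax hJne I hImax hIne
      have hv₁A : v₁ ∈ α.image I := (PFun.mem_image ..).2 ⟨z₁, hz₁I, hv₁⟩
      have hv₂A : v₂ ∈ α.image I := (PFun.mem_image ..).2 ⟨z₂, hz₂I, hv₂⟩
      have hw₁B : w₁ ∈ β.image (Θ J I) := by
        rw [← hmatch]
        exact ⟨v₁, hv₁A, by rw [← hδonJ J hJmax v₁ hv₁J]; exact hδv₁⟩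
      have hw₂B : w₂ ∈ β.image (Θ J I) := by
        rw [← hmatch]
        exact ⟨v₂, hv₂A, by rw [← hδonJ J hJmax v₂ hv₂J]; exact hδv₂⟩
      obtain ⟨s₁, hs₁, hws₁⟩ := (PFun.mem_image ..).1 hw₁B
      obtain ⟨s₂, hs₂, hws₂⟩ := (PFun.mem_image ..).1 hw₂B
      have hx₁Θ : x₁ ∈ Θ J I := hβ.inj hw₁x hws₁ ▸ hs₁
      have hx₂Θ : x₂ ∈ Θ J I := hβ.inj hw₂x hws₂ ▸ hs₂
      -- adjacency of w₁ w₂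
      have hadjw : adj w₁ w₂ := by
        have := (hFadj J hJmax hJne v₁ hv₁J v₂ hv₂J).2 hv12
        rwa [← hδonJ J hJmax v₁ hv₁J, ← hδonJ J hJmax v₂ hv₂J, hδv₁, hδv₂] at this
      -- block adjacency transfer on the β side
      have hΘI : IsMaxIntervalOf (Θ J I) (β.preimage (σ J)) := hΘmax J hJmax hJne I hImax
      have hblk := (block_package hβ preimage_subset_dom hΘI ⟨x₁, hx₁Θ⟩).2
      have := hblk x₁ hx₁Θ x₂ hx₂Θ
      rw [pfn_eq hw₁x, pfn_eq hw₂x] at this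
      exact this.1 hadjw
  exact ⟨γpf, δpf, hγPAut, hδPAut, eq1, eq2⟩
end

section
/- The number of injective partial endomorphisms of the path P_n with a prescribed nonempty domain D ⊆ {1,…,n} equals 2^T · r! · C(n−s+r, r), where r is the number of maximal intervals of D, s = |D|, and T is the number of maximal intervals of D of size at least 2. -/
open scoped Classical

namespace Stmt13

variable (n : ℕ) (D : Set ℕ)

noncomputable def LE : Finset ℕ := (Finset.Icc 1 n).filter (fun x => x ∈ D ∧ (x - 1) ∉ D)

noncomputable def r : ℕ := (LE n D).card

noncomputable def a (i : Fin (r n D)) : ℕ := ((LE n D).orderIsoOfFin rfl i : ℕ)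

variable {n D}

lemma a_mem (i : Fin (r n D)) : a n D i ∈ LE n D := ((LE n D).orderIsoOfFin rfl i).2

lemma a_facts (i : Fin (r n D)) :
    1 ≤ a n D i ∧ a n D i ≤ n ∧ a n D i ∈ D ∧ (a n D i - 1) ∉ D := by
  have h := a_mem i
  simp only [LE, Finset.mem_filter, Finset.mem_Icc] at h
  tauto

lemma a_strictMono : StrictMono (a n D) := by
  intro i j h
  have := ((LE n D).orderIsoOfFin rfl).strictMono h
  exact this

lemma a_exists_of_mem {x : ℕ} (hx : x ∈ LE n D) : ∃ i, a n D i = x := by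
  refine ⟨((LE n D).orderIsoOfFin rfl).symm ⟨x, hx⟩, ?_⟩
  simp [a]

lemma len_ex (i : Fin (r n D)) : ∃ t, a n D i + t ∉ D ∨ n < a n D i + t :=
  ⟨n + 1, Or.inr (by omega)⟩

noncomputable def len (n : ℕ) (D : Set ℕ) (i : Fin (r n D)) : ℕ := Nat.find (len_ex i)

lemma mem_of_lt_len {i : Fin (r n D)} {t : ℕ} (ht : t < len n D i) : a n D i + t ∈ D := by
  have := Nat.find_min (len_ex i) ht
  push_neg at this
  exact this.1

lemma len_pos (i : Fin (r n D)) : 0 < len n D i := by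
  rcases Nat.eq_zero_or_pos (len n D i) with h | h
  · exfalso
    have := Nat.find_spec (len_ex i)
    rw [show Nat.find (len_ex i) = len n D i from rfl, h] at this
    have hf := a_facts i
    simp only [Nat.add_zero] at this
    rcases this with h1 | h1
    · exact h1 hf.2.2.1
    · omega
  · exact h

lemma add_len_notMem (hD : D ⊆ Set.Icc 1 n) (i : Fin (r n D)) :
    a n D i + len n D i ∉ D := by
  have := Nat.find_spec (len_ex i)
  rcases this with h | h
  · exact h
  · intro hmem
    have h' : n < a n D i + len n D i := h
    have := hD hmem
    simp only [Set.mem_Icc] at this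
    omega

lemma exists_idx (hD : D ⊆ Set.Icc 1 n) {x : ℕ} (hx : x ∈ D) :
    ∃ i, a n D i ≤ x ∧ x < a n D i + len n D i := by
  have h0 : (0 : ℕ) ∉ D := fun h => by have := hD h; simp at this
  have hex : ∃ k, x - k ∉ D := ⟨x, by simpa using h0⟩
  set k0 := Nat.find hex with hk0
  have hk0spec : x - k0 ∉ D := Nat.find_spec hex
  have hk0pos : 1 ≤ k0 := by
    rcases Nat.eq_zero_or_pos k0 with h | h
    · exfalso; rw [h] at hk0spec; simp at hk0spec; exact hk0spec hx
    · exact h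
  have hk0le : k0 ≤ x := by
    by_contra h
    push_neg at h
    have hmem : x - (k0 - 1) ∈ D := by
      have := Nat.find_min hex (show k0 - 1 < k0 by omega)
      simpa using this
    have hz : x - (k0 - 1) = 0 := by omega
    exact h0 (hz ▸ hmem)
  set l := x - k0 + 1 with hl
  have hlD : l ∈ D := by
    have := Nat.find_min hex (show k0 - 1 < k0 by omega)
    simp only [not_not] at this
    have : x - (k0 - 1) ∈ D := this
    have heq : x - (k0 - 1) = l := by omega
    rwa [heq] at this
  have hlpred : l - 1 ∉ D := by
    have : l - 1 = x - k0 := by omega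
    rwa [this]
  have hlLE : l ∈ LE n D := by
    have hIcc := hD hlD
    simp only [Set.mem_Icc] at hIcc
    simp only [LE, Finset.mem_filter, Finset.mem_Icc]
    exact ⟨⟨hIcc.1, hIcc.2⟩, hlD, hlpred⟩
  obtain ⟨i, hi⟩ := a_exists_of_mem hlLE
  refine ⟨i, by omega, ?_⟩
  by_contra h
  push_neg at h
  -- then a i + len i ∈ [l, x] ⊆ D
  have hall : ∀ j, j ≤ x - l → l + j ∈ D := by
    intro j hj
    have h1 : l + j = x - (k0 - 1 - j) := by omega
    have h2 : k0 - 1 - j < k0 := by omega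
    have := Nat.find_min hex h2
    simp only [not_not] at this
    rwa [← h1] at this
  have : a n D i + len n D i ∈ D := by
    have := hall (a n D i + len n D i - l) (by omega)
    have heq : l + (a n D i + len n D i - l) = a n D i + len n D i := by omega
    rwa [heq] at this
  exact add_len_notMem hD i this

lemma idx_unique_lt {i j : Fin (r n D)} {x : ℕ} (hij : a n D i < a n D j)
    (h2 : x < a n D i + len n D i) (h3 : a n D j ≤ x) : False := by
  have h1 : a n D i ≤ a n D j - 1 := by omega
  have h4 : a n D j - 1 < a n D i + len n D i := by omega
  have : a n D j - 1 ∈ D := by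
    have := mem_of_lt_len (i := i) (t := a n D j - 1 - a n D i) (by omega)
    have heq : a n D i + (a n D j - 1 - a n D i) = a n D j - 1 := by omega
    rwa [heq] at this
  exact (a_facts j).2.2.2 this

lemma idx_unique {i j : Fin (r n D)} {x : ℕ} (hij : i ≠ j)
    (h1 : a n D i ≤ x) (h2 : x < a n D i + len n D i)
    (h3 : a n D j ≤ x) (h4 : x < a n D j + len n D j) : False := by
  rcases lt_trichotomy (a n D i) (a n D j) with h | h | h
  · exact idx_unique_lt h h2 h3
  · exact hij (a_strictMono.injective h)
  · exact idx_unique_lt h h4 h1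

lemma mem_iff (hD : D ⊆ Set.Icc 1 n) {x : ℕ} :
    x ∈ D ↔ ∃ i, a n D i ≤ x ∧ x < a n D i + len n D i := by
  constructor
  · exact exists_idx hD
  · rintro ⟨i, h1, h2⟩
    have := mem_of_lt_len (i := i) (t := x - a n D i) (by omega)
    have heq : a n D i + (x - a n D i) = x := by omega
    rwa [heq] at this


noncomputable def runSet (n : ℕ) (D : Set ℕ) (i : Fin (r n D)) : Set ℕ :=
  Set.Ico (a n D i) (a n D i + len n D i)

lemma runSet_interval (i : Fin (r n D)) : IsIntervalOf (runSet n D i) D := by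
  constructor
  · intro x hx
    simp only [runSet, Set.mem_Ico] at hx
    have := mem_of_lt_len (i := i) (t := x - a n D i) (by omega)
    have heq : a n D i + (x - a n D i) = x := by omega
    rwa [heq] at this
  · intro x hx y hy z h1 h2
    simp only [runSet, Set.mem_Ico] at *
    omega

lemma runSet_maxInterval (hD : D ⊆ Set.Icc 1 n) (i : Fin (r n D)) :
    IsMaxIntervalOf (runSet n D i) D := by
  refine ⟨runSet_interval i, ?_⟩
  intro J hJ hsub
  refine Set.Subset.antisymm hsub ?_
  intro y hy
  simp only [runSet, Set.mem_Ico]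
  have hai : a n D i ∈ J := hsub (by simp [runSet, Set.mem_Ico]; exact (len_pos i))
  have hyD : y ∈ D := hJ.1 hy
  constructor
  · -- a i ≤ y
    by_contra h
    push_neg at h
    -- y < a i, so a i - 1 is y or strictly between
    rcases Nat.lt_or_ge y (a n D i - 1) with h2 | h2
    · have : a n D i - 1 ∈ J := hJ.2 hy hai h2 (by omega)
      exact (a_facts i).2.2.2 (hJ.1 this)
    · have : y = a n D i - 1 := by omega
      exact (a_facts i).2.2.2 (this ▸ hyD)
  · -- y < a i + len i
    by_contra h
    push_neg at h
    rcases Nat.lt_or_ge (a n D i + len n D i) y with h2 | h2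
    · have : a n D i + len n D i ∈ J := hJ.2 hai hy (by have := len_pos i; omega) h2
      exact add_len_notMem hD i (hJ.1 this)
    · have : y = a n D i + len n D i := by omega
      exact add_len_notMem hD i (this ▸ hyD)

lemma maxInterval_iff (hD : D ⊆ Set.Icc 1 n) (hne : D.Nonempty) {I : Set ℕ} :
    IsMaxIntervalOf I D ↔ ∃ i, I = runSet n D i := by
  constructor
  · intro hI
    have hIne : I.Nonempty := by
      by_contra h
      rw [Set.not_nonempty_iff_eq_empty] at h
      subst h
      obtain ⟨x, hx⟩ := hne
      have hsing : IsIntervalOf {x} D := by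
        constructor
        · simpa using hx
        · intro u hu v hv z h1 h2
          simp only [Set.mem_singleton_iff] at *
          omega
      have := hI.2 {x} hsing (Set.empty_subset _)
      exact (Set.singleton_ne_empty x) this.symm
    obtain ⟨x, hx⟩ := hIne
    obtain ⟨i, hi1, hi2⟩ := exists_idx hD (hI.1.1 hx)
    refine ⟨i, ?_⟩
    have hsub : I ⊆ runSet n D i := by
      intro y hy
      have hyD : y ∈ D := hI.1.1 hy
      obtain ⟨j, hj1, hj2⟩ := exists_idx hD hyD
      by_cases hij : j = i
      · subst hij; simp [runSet, Set.mem_Ico]; omega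
      · exfalso
        rcases lt_trichotomy (a n D j) (a n D i) with h | h | h
        · -- y's run left of x's run : a j + len j ∉ D, y ≤ a j + len j ≤? need between y and x
          have hb1 : y < a n D j + len n D j := hj2
          have hb2 : a n D j + len n D j ≤ a n D i := by
            by_contra hc
            push_neg at hc
            exact idx_unique_lt h (x := a n D i) hc le_rfl
          have hb3 : a n D j + len n D j ≤ x := by omega
          rcases Nat.lt_or_ge (a n D j + len n D j) x with hc | hc
          · have : a n D j + len n D j ∈ I := hI.1.2 hy hx (by omega) hc
            exact add_len_notMem hD j (hI.1.1 this)
          · have hxx : x = a n D j + len n D j := by omega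
            exact add_len_notMem hD j (hxx ▸ hI.1.1 hx)
        · exact hij (a_strictMono.injective h)
        · -- y's run right of x's run
          have hb2 : a n D i + len n D i ≤ a n D j := by
            by_contra hc
            push_neg at hc
            exact idx_unique_lt h (x := a n D j) hc le_rfl
          rcases Nat.lt_or_ge x (a n D i + len n D i) with hc | hc
          · rcases Nat.lt_or_ge (a n D i + len n D i) y with hd | hd
            · have : a n D i + len n D i ∈ I := hI.1.2 hx hy (by omega) hd
              exact add_len_notMem hD i (hI.1.1 this)
            · have hyy : y = a n D i + len n D i := by omega
              exact add_len_notMem hD i (hyy ▸ hyD)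
          · omega
    exact hI.2 _ (runSet_interval i) hsub
  · rintro ⟨i, rfl⟩
    exact runSet_maxInterval hD i

lemma runSet_inj : Function.Injective (runSet n D) := by
  intro i j h
  by_contra hij
  have hi : a n D i ∈ runSet n D i := by simp [runSet, Set.mem_Ico]; exact len_pos i
  rw [h] at hi
  simp only [runSet, Set.mem_Ico] at hi
  exact idx_unique hij le_rfl (by have := len_pos i; omega) hi.1 hi.2

lemma ncard_runSet (i : Fin (r n D)) : (runSet n D i).ncard = len n D i := by
  rw [show runSet n D i = ↑(Finset.Ico (a n D i) (a n D i + len n D i)) by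
    simp [runSet]]
  rw [Set.ncard_coe_finset, Nat.card_Ico]
  omega

lemma ncard_maxIntervals (hD : D ⊆ Set.Icc 1 n) (hne : D.Nonempty) :
    {I : Set ℕ | IsMaxIntervalOf I D}.ncard = r n D := by
  have : {I : Set ℕ | IsMaxIntervalOf I D} = Set.range (runSet n D) := by
    ext I
    simp only [Set.mem_setOf_eq, Set.mem_range, maxInterval_iff hD hne]
    tauto
  rw [this, ← Set.image_univ, Set.ncard_image_of_injective _ runSet_inj]
  simp [Set.ncard_univ]

lemma ncard_maxIntervals_big (hD : D ⊆ Set.Icc 1 n) (hne : D.Nonempty) :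
    {I : Set ℕ | IsMaxIntervalOf I D ∧ 2 ≤ I.ncard}.ncard =
      (Finset.univ.filter (fun i => 2 ≤ len n D i)).card := by
  have : {I : Set ℕ | IsMaxIntervalOf I D ∧ 2 ≤ I.ncard} =
      runSet n D '' {i | 2 ≤ len n D i} := by
    ext I
    simp only [Set.mem_setOf_eq, Set.mem_image, maxInterval_iff hD hne]
    constructor
    · rintro ⟨⟨i, rfl⟩, h2⟩
      exact ⟨i, by rwa [ncard_runSet i] at h2, rfl⟩
    · rintro ⟨i, hi, rfl⟩
      exact ⟨⟨i, rfl⟩, by rwa [ncard_runSet i]⟩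
  rw [this, Set.ncard_image_of_injective _ runSet_inj]
  rw [show {i | 2 ≤ len n D i} = ↑(Finset.univ.filter (fun i => 2 ≤ len n D i)) by
    ext i; simp]
  rw [Set.ncard_coe_finset]

lemma sum_len (hD : D ⊆ Set.Icc 1 n) : ∑ i, len n D i = D.ncard := by
  classical
  have hDF : D = ↑(Finset.univ.biUnion
      (fun i : Fin (r n D) => Finset.Ico (a n D i) (a n D i + len n D i))) := by
    ext x
    simp only [Finset.coe_biUnion, Finset.mem_coe, Finset.mem_biUnion, Finset.mem_univ,
      true_and, Finset.mem_Ico, Set.mem_iUnion, mem_iff hD]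
    simp
  have hdisj : ∀ i ∈ Finset.univ, ∀ j ∈ Finset.univ, i ≠ j →
      Disjoint (Finset.Ico (a n D i) (a n D i + len n D i))
        (Finset.Ico (a n D j) (a n D j + len n D j)) := by
    intro i _ j _ hij
    rw [Finset.disjoint_left]
    intro x hx hx2
    simp only [Finset.mem_Ico] at hx hx2
    exact idx_unique hij hx.1 hx.2 hx2.1 hx2.2
  conv_rhs => rw [hDF]
  rw [Set.ncard_coe_finset, Finset.card_biUnion hdisj]
  exact Finset.sum_congr rfl (fun i _ => by rw [Nat.card_Ico]; omega)

lemma ncard_le (hD : D ⊆ Set.Icc 1 n) : D.ncard ≤ n := by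
  have h1 : D.ncard ≤ (Set.Icc 1 n).ncard :=
    Set.ncard_le_ncard hD (Set.finite_Icc 1 n)
  have h2 : (Set.Icc 1 n).ncard = n := by
    rw [show Set.Icc 1 n = ↑(Finset.Icc 1 n) by simp, Set.ncard_coe_finset, Nat.card_Icc]
    omega
  omega


/-! ### General counting: sorted placements -/

section Count

variable {R : ℕ}

noncomputable def lext (R : ℕ) (l : Fin R → ℕ) : ℕ → ℕ :=
  fun t => if h : t < R then l ⟨t, h⟩ else 0

noncomputable def q (R : ℕ) (l : Fin R → ℕ) : ℕ → ℕ :=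
  fun t => ∑ j' ∈ Finset.range t, lext R l j'

lemma q_succ (l : Fin R → ℕ) (t : ℕ) : q R l (t + 1) = q R l t + lext R l t :=
  Finset.sum_range_succ _ _

lemma lext_eq (l : Fin R → ℕ) (j : Fin R) : lext R l j.val = l j := by
  simp [lext, j.isLt]

lemma q_add (l : Fin R → ℕ) (hl : ∀ j, 1 ≤ l j) :
    ∀ d t, t + d ≤ R → q R l t + d ≤ q R l (t + d) := by
  intro d
  induction d with
  | zero => intro t _; simp only [Nat.add_zero]; omega
  | succ d ih =>
    intro t ht
    have h1 := ih t (by omega)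
    have h2 : 1 ≤ lext R l (t + d) := by
      have : t + d < R := by omega
      simpa [lext, this] using hl ⟨t + d, this⟩
    have h3 := q_succ l (t + d)
    have : t + (d + 1) = (t + d) + 1 := by omega
    rw [this]
    omega

lemma q_top (l : Fin R → ℕ) : q R l R = ∑ j, l j := by
  rw [q, ← Fin.sum_univ_eq_sum_range]
  exact Finset.sum_congr rfl fun j _ => lext_eq l j

/-- strict monotonicity from consecutive increases, for `Fin R → ℕ`. -/
lemma fin_strictMono_of_succ {f : Fin R → ℕ}
    (h : ∀ (v : ℕ) (h1 : v + 1 < R), f ⟨v, by omega⟩ < f ⟨v + 1, h1⟩) :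
    StrictMono f := by
  have key : ∀ d (j k : Fin R), k.val = j.val + d + 1 → f j < f k := by
    intro d
    induction d with
    | zero =>
      intro j k hk
      have := h j.val (by omega)
      have hj : (⟨j.val, by omega⟩ : Fin R) = j := rfl
      have hk' : (⟨j.val + 1, by omega⟩ : Fin R) = k := by
        apply Fin.ext; simp [hk]
      rwa [hj, hk'] at this
    | succ d ih =>
      intro j k hk
      have hmid : j.val + d + 1 < R := by omega
      have h1 := ih j ⟨j.val + d + 1, hmid⟩ rfl
      have h2 := h (j.val + d + 1) (by omega)
      have hk' : (⟨j.val + d + 1 + 1, by omega⟩ : Fin R) = k := by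
        apply Fin.ext; simp; omega
      rw [hk'] at h2
      omega
  intro j k hjk
  have : k.val = j.val + (k.val - j.val - 1) + 1 := by
    have := (Fin.lt_iff_val_lt_val).1 hjk
    omega
  exact key _ j k this

lemma strictMono_gap {f : Fin R → ℕ} (hf : StrictMono f) :
    ∀ (j k : Fin R), j.val ≤ k.val → f j + (k.val - j.val) ≤ f k := by
  have key : ∀ d (j k : Fin R), k.val = j.val + d → f j + d ≤ f k := by
    intro d
    induction d with
    | zero => intro j k hk; have : j = k := Fin.ext (by omega); subst this; omega
    | succ d ih =>
      intro j k hk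
      have hmid : j.val + d < R := by omega
      have h1 := ih j ⟨j.val + d, hmid⟩ rfl
      have h2 : f ⟨j.val + d, hmid⟩ < f k := hf (by simp [Fin.lt_iff_val_lt_val]; omega)
      omega
  intro j k hjk
  have : k.val = j.val + (k.val - j.val) := by omega
  exact key _ j k this

lemma strictMono_low {f : Fin R → ℕ} (hf : StrictMono f) (h1 : ∀ j, 1 ≤ f j) (j : Fin R) :
    j.val + 1 ≤ f j := by
  have h0 : (0 : ℕ) < R := j.pos
  have hg := strictMono_gap hf ⟨0, h0⟩ j (by simp)
  have h2 := h1 ⟨0, h0⟩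
  simp only [Fin.val_mk, Nat.sub_zero] at hg
  omega

def SME (R M : ℕ) : Set (Fin R → ℕ) := {u | StrictMono u ∧ ∀ j, 1 ≤ u j ∧ u j ≤ M}

def SortedPlc (N R : ℕ) (l : Fin R → ℕ) : Set (Fin R → ℕ) :=
  {m | (∀ j, 1 ≤ m j ∧ m j + l j ≤ N + 1) ∧ ∀ j k : Fin R, j < k → m j + l j ≤ m k}

lemma sortedPlc_key1 {N : ℕ} {l m : Fin R → ℕ} (hl : ∀ j, 1 ≤ l j)
    (hm : m ∈ SortedPlc N R l) : ∀ j : Fin R, q R l j.val + 1 ≤ m j := by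
  have key : ∀ v (hv : v < R), q R l v + 1 ≤ m ⟨v, hv⟩ := by
    intro v
    induction v with
    | zero => intro hv; have := (hm.1 ⟨0, hv⟩).1; simp [q]; omega
    | succ v ih =>
      intro hv
      have h1 := ih (by omega)
      have h2 := hm.2 ⟨v, by omega⟩ ⟨v + 1, hv⟩ (by simp [Fin.lt_iff_val_lt_val])
      have h3 := q_succ l v
      have h4 : lext R l v = l ⟨v, by omega⟩ := lext_eq l ⟨v, by omega⟩
      omega
  intro j
  exact key j.val j.isLt

lemma sortedPlc_key2 {N : ℕ} {l m : Fin R → ℕ} (hl : ∀ j, 1 ≤ l j)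
    (hm : m ∈ SortedPlc N R l) (s : ℕ) (hs : ∑ j, l j = s) :
    ∀ j : Fin R, m j + (s - q R l j.val) ≤ N + 1 := by
  have hqR : q R l R = s := by rw [q_top]; exact hs
  have key : ∀ d (j : Fin R), R = j.val + 1 + d → m j + (s - q R l j.val) ≤ N + 1 := by
    intro d
    induction d with
    | zero =>
      intro j hj
      have h1 := (hm.1 j).2
      have h2 : q R l (j.val + 1) = q R l j.val + l j := by
        have := q_succ l j.val; rw [lext_eq l j] at this; omega
      have h3 : j.val + 1 = R := by omega
      rw [h3] at h2
      omega
    | succ d ih =>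
      intro j hj
      have hk : j.val + 1 < R := by omega
      set k : Fin R := ⟨j.val + 1, hk⟩ with hkdef
      have h1 := ih k (by simp [hkdef]; omega)
      have h2 := hm.2 j k (by simp [hkdef, Fin.lt_iff_val_lt_val])
      have h3 : q R l (j.val + 1) = q R l j.val + l j := by
        have := q_succ l j.val; rw [lext_eq l j] at this; omega
      have h4 : q R l (j.val + 1) + (R - (j.val + 1)) ≤ s := by
        have := q_add l hl (R - (j.val + 1)) (j.val + 1) (by omega)
        have heq : j.val + 1 + (R - (j.val + 1)) = R := by omega
        rw [heq] at this
        omega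
      have hkval : k.val = j.val + 1 := rfl
      have h5 : q R l k.val = q R l (j.val + 1) := by rw [hkval]
      omega
  intro j
  exact key (R - 1 - j.val) j (by have := j.isLt; omega)

noncomputable def eqSorted (N : ℕ) (l : Fin R → ℕ) (hl : ∀ j, 1 ≤ l j) (s : ℕ)
    (hs : ∑ j, l j = s) (hsn : s ≤ N) :
    ↥(SortedPlc N R l) ≃ ↥(SME R (N - s + R)) where
  toFun := fun ⟨m, hm⟩ => ⟨fun j => (m j - q R l j.val) + j.val, by
    have key1 := sortedPlc_key1 hl hm
    have key2 := sortedPlc_key2 hl hm s hs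
    constructor
    · apply fin_strictMono_of_succ
      intro v hv
      have h1 := key1 ⟨v, by omega⟩
      have h2 := hm.2 ⟨v, by omega⟩ ⟨v + 1, hv⟩ (by simp [Fin.lt_iff_val_lt_val])
      have h3 : q R l (v + 1) = q R l v + l ⟨v, by omega⟩ := by
        have := q_succ l v; rw [lext_eq l ⟨v, by omega⟩] at this; omega
      simp only [Fin.val_mk] at h1 h2 h3 ⊢
      omega
    · intro j
      have h1 := key1 j
      have h2 := key2 j
      have h3 : q R l j.val + (R - j.val) ≤ s := by
        have := q_add l hl (R - j.val) j.val (by omega)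
        have heq : j.val + (R - j.val) = R := by omega
        rw [heq, q_top, hs] at this
        omega
      have h4 := j.isLt
      have h5 := hsn
      beta_reduce
      constructor <;> omega⟩
  invFun := fun ⟨u, hu⟩ => ⟨fun j => (u j - j.val) + q R l j.val, by
    have hlow := strictMono_low hu.1 (fun j => (hu.2 j).1)
    constructor
    · intro j
      have h1 := hlow j
      have h2 := (hu.2 j).2
      have h3 : q R l (j.val + 1) = q R l j.val + l j := by
        have := q_succ l j.val; rw [lext_eq l j] at this; omega
      have h4 : q R l (j.val + 1) + (R - (j.val + 1)) ≤ s := by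
        have := q_add l hl (R - (j.val + 1)) (j.val + 1) (by have := j.isLt; omega)
        have heq : j.val + 1 + (R - (j.val + 1)) = R := by have := j.isLt; omega
        rw [heq, q_top, hs] at this
        omega
      have h5 := j.isLt
      beta_reduce
      constructor <;> omega
    · intro j k hjk
      have hjk' : j.val < k.val := hjk
      have h1 := strictMono_gap hu.1 j k (by omega)
      have h2 : q R l (j.val + 1) = q R l j.val + l j := by
        have := q_succ l j.val; rw [lext_eq l j] at this; omega
      have h3 : q R l (j.val + 1) + (k.val - (j.val + 1)) ≤ q R l k.val := by
        have := q_add l hl (k.val - (j.val + 1)) (j.val + 1) (by have := k.isLt; omega)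
        have heq : j.val + 1 + (k.val - (j.val + 1)) = k.val := by omega
        rwa [heq] at this
      have h4 := hlow j
      beta_reduce
      omega⟩
  left_inv := fun ⟨m, hm⟩ => Subtype.ext (funext fun j => by
    have h1 := sortedPlc_key1 hl hm j
    simp only []
    omega)
  right_inv := fun ⟨u, hu⟩ => Subtype.ext (funext fun j => by
    have h1 := strictMono_low hu.1 (fun j => (hu.2 j).1) j
    simp only []
    omega)

noncomputable def eqSME (R M : ℕ) :
    ↥(SME R M) ≃ {A : Finset ℕ // A ∈ Finset.powersetCard R (Finset.Icc 1 M)} := by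
  apply Equiv.ofBijective (fun u : ↥(SME R M) => (⟨Finset.image u.1 Finset.univ, by
    rw [Finset.mem_powersetCard]
    constructor
    · intro x hx
      simp only [Finset.mem_image, Finset.mem_univ, true_and] at hx
      obtain ⟨j, rfl⟩ := hx
      simp only [Finset.mem_Icc]
      exact (u.2.2 j)
    · rw [Finset.card_image_of_injective _ u.2.1.injective, Finset.card_univ,
        Fintype.card_fin]⟩ : {A : Finset ℕ // A ∈ Finset.powersetCard R (Finset.Icc 1 M)}))
  constructor
  · rintro ⟨u, hu⟩ ⟨v, hv⟩ h
    simp only [Subtype.mk.injEq] at h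
    apply Subtype.ext
    have hr : Set.range u = Set.range v := by
      rw [← Set.image_univ, ← Set.image_univ, ← Finset.coe_univ, ← Finset.coe_image,
        ← Finset.coe_image, h]
    haveI : WellFoundedLT (Fin R) := inferInstance
    have huu : StrictMono u := hu.1
    have hvv : StrictMono v := hv.1
    have := StrictMono.range_inj (β := Fin R) (γ := ℕ) huu hvv
    exact this.1 hr
  · rintro ⟨A, hA⟩
    rw [Finset.mem_powersetCard] at hA
    obtain ⟨hsub, hcard⟩ := hA
    refine ⟨⟨fun i => A.orderEmbOfFin hcard i, ?_, ?_⟩, ?_⟩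
    · exact (A.orderEmbOfFin hcard).strictMono
    · intro j
      have := hsub (A.orderEmbOfFin_mem hcard j)
      simpa only [Finset.mem_Icc] using this
    · apply Subtype.ext
      simp only
      apply Finset.coe_injective
      rw [Finset.coe_image, Finset.coe_univ, Set.image_univ]
      exact A.range_orderEmbOfFin hcard

lemma card_SortedPlc (N : ℕ) (l : Fin R → ℕ) (hl : ∀ j, 1 ≤ l j) (s : ℕ)
    (hs : ∑ j, l j = s) (hsn : s ≤ N) :
    Nat.card ↥(SortedPlc N R l) = Nat.choose (N - s + R) R := by
  rw [Nat.card_congr ((eqSorted N l hl s hs hsn).trans (eqSME R (N - s + R)))]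
  rw [Nat.card_eq_fintype_card, Fintype.card_coe, Finset.card_powersetCard,
    Nat.card_Icc]
  norm_num

end Count


/-! ### Placements -/

def Plc (n : ℕ) (D : Set ℕ) : Set (Fin (r n D) → ℕ) :=
  {m | (∀ i, 1 ≤ m i ∧ m i + len n D i ≤ n + 1) ∧
    ∀ i j, i ≠ j → m i + len n D i ≤ m j ∨ m j + len n D j ≤ m i}

noncomputable def eqPlc (n : ℕ) (D : Set ℕ) :
    (Σ _σ : Equiv.Perm (Fin (r n D)), ↥(SortedPlc n (r n D) (len n D ∘ _σ))) ≃
      ↥(Plc n D) := by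
  apply Equiv.ofBijective (fun p :
      (Σ _σ : Equiv.Perm (Fin (r n D)), ↥(SortedPlc n (r n D) (len n D ∘ _σ))) =>
    (⟨p.2.1 ∘ p.1.symm, by
      obtain ⟨σ, m, hm⟩ := p
      constructor
      · intro i
        have := hm.1 (σ.symm i)
        simpa using this
      · intro i j hij
        have hsymm : σ.symm i ≠ σ.symm j := fun h => hij (by
          have := congrArg σ h; simpa using this)
        rcases lt_or_gt_of_ne hsymm with h | h
        · left
          have := hm.2 _ _ h
          simpa using this
        · right
          have := hm.2 _ _ h
          simpa using this⟩ : ↥(Plc n D)))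
  constructor
  · rintro ⟨σ, m, hm⟩ ⟨σ', m', hm'⟩ h
    simp only [Subtype.mk.injEq] at h
    have hmono : StrictMono m := by
      intro j k hjk
      have h1 := hm.2 j k hjk
      have h2 := len_pos (σ j)
      simp only [Function.comp_apply] at h1
      omega
    have hmono' : StrictMono m' := by
      intro j k hjk
      have h1 := hm'.2 j k hjk
      have h2 := len_pos (σ' j)
      simp only [Function.comp_apply] at h1
      omega
    have hrange : Set.range m = Set.range m' := by
      rw [← σ.symm.surjective.range_comp m, ← σ'.symm.surjective.range_comp m', h]
    haveI : WellFoundedLT (Fin (r n D)) := inferInstance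
    have hmm : m = m' := (StrictMono.range_inj (β := Fin (r n D)) (γ := ℕ)
      hmono hmono').1 hrange
    subst hmm
    have hσ : σ = σ' := by
      apply Equiv.ext
      intro x
      have : m (σ.symm (σ x)) = m (σ'.symm (σ x)) := congrFun h (σ x)
      have h2 := hmono.injective this
      simp only [Equiv.symm_apply_apply] at h2
      have := congrArg σ' h2.symm
      simpa using this
    subst hσ
    exact congrArg (Sigma.mk σ) (Subtype.ext rfl)
  · rintro ⟨m, hm⟩
    have minj : Function.Injective m := by
      intro i j hij
      by_contra hne
      have h1 := hm.2 i j hne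
      have h2 := len_pos i
      have h3 := len_pos j
      omega
    set σ := Tuple.sort m with hσ
    have hmono : Monotone (m ∘ σ) := Tuple.monotone_sort m
    have hstrict : StrictMono (m ∘ σ) :=
      hmono.strictMono_of_injective (minj.comp σ.injective)
    refine ⟨⟨σ, ⟨m ∘ σ, ?_, ?_⟩⟩, ?_⟩
    · intro j
      exact hm.1 (σ j)
    · intro j k hjk
      have h1 := hstrict hjk
      have h2 := hm.2 (σ j) (σ k) (fun hc => (by simp [σ.injective hc] at hjk : False))
      simp only [Function.comp_apply] at *
      rcases h2 with h2 | h2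
      · exact h2
      · have := len_pos (σ k); omega
    · apply Subtype.ext
      funext i
      simp

lemma card_Plc (hD : D ⊆ Set.Icc 1 n) :
    Nat.card ↥(Plc n D) =
      Nat.factorial (r n D) * Nat.choose (n - D.ncard + r n D) (r n D) := by
  have hsd : D.ncard ≤ n := ncard_le hD
  have e2 : (Σ _σ : Equiv.Perm (Fin (r n D)), ↥(SortedPlc n (r n D) (len n D ∘ _σ))) ≃
      Equiv.Perm (Fin (r n D)) ×
        {A : Finset ℕ // A ∈ Finset.powersetCard (r n D)
          (Finset.Icc 1 (n - D.ncard + r n D))} := by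
    refine (Equiv.sigmaCongrRight fun σ => ?_).trans (Equiv.sigmaEquivProd _ _)
    refine (eqSorted n (len n D ∘ σ) (fun j => len_pos (σ j)) D.ncard ?_ hsd).trans
      (eqSME _ _)
    rw [← sum_len hD]
    exact Equiv.sum_comp σ (len n D)
  rw [← Nat.card_congr (eqPlc n D), Nat.card_congr e2, Nat.card_eq_fintype_card]
  rw [Fintype.card_prod, Fintype.card_perm, Fintype.card_fin, Fintype.card_coe,
    Finset.card_powersetCard, Nat.card_Icc]
  congr 2


/-! ### The function encoding -/

def SSet (n : ℕ) (D : Set ℕ) : Set (ℕ → ℕ) :=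
  {g | (∀ x, x ∉ D → g x = 0) ∧ (∀ x ∈ D, 1 ≤ g x ∧ g x ≤ n) ∧
    (∀ x ∈ D, ∀ y ∈ D, g x = g y → x = y) ∧
    ∀ x, x ∈ D → x + 1 ∈ D → adj (g x) (g (x + 1))}

def Bits (n : ℕ) (D : Set ℕ) : Set (Fin (r n D) → Bool) :=
  {ε | ∀ i, len n D i < 2 → ε i = false}

lemma rep_unique {i j : Fin (r n D)} {t t' : ℕ} (ht : t < len n D i)
    (ht' : t' < len n D j) (heq : a n D i + t = a n D j + t') : i = j ∧ t = t' := by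
  by_cases hij : i = j
  · subst hij; exact ⟨rfl, by omega⟩
  · exact absurd (idx_unique hij (x := a n D i + t) (by omega) (by omega)
      (by omega) (by omega)) (by simp)

noncomputable def pval (n : ℕ) (D : Set ℕ) (ε : Fin (r n D) → Bool)
    (m : Fin (r n D) → ℕ) (i : Fin (r n D)) (t : ℕ) : ℕ :=
  if ε i then m i + (len n D i - 1) - t else m i + t

noncomputable def gOf (n : ℕ) (D : Set ℕ) (ε : Fin (r n D) → Bool)
    (m : Fin (r n D) → ℕ) : ℕ → ℕ := fun x =>
  if h : ∃ p : Fin (r n D) × ℕ, p.2 < len n D p.1 ∧ x = a n D p.1 + p.2 then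
    pval n D ε m h.choose.1 h.choose.2
  else 0

lemma gOf_eq {ε : Fin (r n D) → Bool} {m : Fin (r n D) → ℕ} {i : Fin (r n D)} {t : ℕ}
    (ht : t < len n D i) : gOf n D ε m (a n D i + t) = pval n D ε m i t := by
  have hex : ∃ p : Fin (r n D) × ℕ, p.2 < len n D p.1 ∧ a n D i + t = a n D p.1 + p.2 :=
    ⟨(i, t), ht, rfl⟩
  rw [gOf, dif_pos hex]
  obtain ⟨h1, h2⟩ := hex.choose_spec
  obtain ⟨hi, htt⟩ := rep_unique h1 ht h2.symm
  rw [hi, htt]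

lemma gOf_zero {ε : Fin (r n D) → Bool} {m : Fin (r n D) → ℕ} {x : ℕ}
    (hx : x ∉ D) : gOf n D ε m x = 0 := by
  rw [gOf, dif_neg]
  rintro ⟨p, h1, rfl⟩
  exact hx (mem_of_lt_len h1)

lemma pval_bounds {ε : Fin (r n D) → Bool} {m : Fin (r n D) → ℕ} {i : Fin (r n D)}
    {t : ℕ} (ht : t < len n D i) :
    m i ≤ pval n D ε m i t ∧ pval n D ε m i t ≤ m i + (len n D i - 1) := by
  rw [pval]
  split <;> omega

lemma gOf_mem (hD : D ⊆ Set.Icc 1 n) {ε : Fin (r n D) → Bool} {m : Fin (r n D) → ℕ}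
    (hε : ε ∈ Bits n D) (hm : m ∈ Plc n D) : gOf n D ε m ∈ SSet n D := by
  refine ⟨fun x hx => gOf_zero hx, ?_, ?_, ?_⟩
  · intro x hx
    obtain ⟨i, h1, h2⟩ := exists_idx hD hx
    have ht : x - a n D i < len n D i := by omega
    have heq : x = a n D i + (x - a n D i) := by omega
    rw [heq, gOf_eq ht]
    have hb := pval_bounds (ε := ε) (m := m) ht
    have hmi := hm.1 i
    omega
  · intro x hx y hy hxy
    obtain ⟨i, h1, h2⟩ := exists_idx hD hx
    obtain ⟨j, h3, h4⟩ := exists_idx hD hy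
    have hti : x - a n D i < len n D i := by omega
    have htj : y - a n D j < len n D j := by omega
    have heqi : x = a n D i + (x - a n D i) := by omega
    have heqj : y = a n D j + (y - a n D j) := by omega
    rw [heqi, gOf_eq hti, heqj, gOf_eq htj] at hxy
    by_cases hij : i = j
    · subst hij
      rw [pval, pval] at hxy
      have := len_pos i
      split at hxy <;> omega
    · exfalso
      have hb1 := pval_bounds (ε := ε) (m := m) hti
      have hb2 := pval_bounds (ε := ε) (m := m) htj
      have hd := hm.2 i j hij
      have hp1 := len_pos i
      have hp2 := len_pos j
      omega
  · intro x hx hx1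
    obtain ⟨i, h1, h2⟩ := exists_idx hD hx
    have hti : x - a n D i < len n D i := by omega
    set t := x - a n D i with htdef
    have heqi : x = a n D i + t := by omega
    by_cases hlast : t + 1 < len n D i
    · have heqi1 : x + 1 = a n D i + (t + 1) := by omega
      have e1 : gOf n D ε m x = pval n D ε m i t := by rw [heqi]; exact gOf_eq hti
      have e2 : gOf n D ε m (x + 1) = pval n D ε m i (t + 1) := by
        rw [heqi1]; exact gOf_eq hlast
      rw [e1, e2, pval, pval]
      by_cases hb : ε i
      · rw [if_pos hb, if_pos hb]
        right
        omega
      · rw [if_neg hb, if_neg hb]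
        left
        omega
    · exfalso
      have : x + 1 = a n D i + len n D i := by omega
      exact add_len_notMem hD i (this ▸ hx1)

lemma progression (hD : D ⊆ Set.Icc 1 n) {g : ℕ → ℕ} (hg : g ∈ SSet n D)
    (i : Fin (r n D)) :
    (∀ t, t < len n D i → g (a n D i + t) = g (a n D i) + t) ∨
    ((2 ≤ len n D i ∧ g (a n D i + 1) < g (a n D i)) ∧
      ∀ t, t < len n D i → t + 1 ≤ g (a n D i) ∧ g (a n D i + t) = g (a n D i) - t) := by
  by_cases hlen : len n D i < 2
  · left
    intro t ht
    have : t = 0 := by omega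
    subst this
    simp
  · push_neg at hlen
    have h0 : a n D i ∈ D := by
      have := mem_of_lt_len (i := i) (t := 0) (by omega); simpa using this
    have h1 : a n D i + 1 ∈ D := mem_of_lt_len (by omega)
    have hadj := hg.2.2.2 (a n D i) h0 h1
    have hv0 := hg.2.1 _ h0
    have hv1 := hg.2.1 _ h1
    rcases hadj with hup | hdown
    · left
      intro t
      induction t using Nat.strong_induction_on with
      | _ t ih =>
        intro ht
        rcases Nat.lt_or_ge t 1 with h01 | hge1
        · have : t = 0 := by omega
          subst this; simp
        rcases Nat.lt_or_ge t 2 with h12 | hge2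
        · have : t = 1 := by omega
          subst this; omega
        obtain ⟨t', rfl⟩ : ∃ t', t = t' + 2 := ⟨t - 2, by omega⟩
        have e1 := ih (t' + 1) (by omega) (by omega)
        have e2 := ih t' (by omega) (by omega)
        have hmem1 : a n D i + (t' + 1) ∈ D := mem_of_lt_len (by omega)
        have hmem2 : a n D i + (t' + 2) ∈ D := mem_of_lt_len (by omega)
        have hmem0 : a n D i + t' ∈ D := mem_of_lt_len (by omega)
        have hadj2 := hg.2.2.2 (a n D i + (t' + 1)) hmem1
          (by have hx : a n D i + (t' + 1) + 1 = a n D i + (t' + 2) := by omega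
              rw [hx]; exact hmem2)
        have hx : a n D i + (t' + 1) + 1 = a n D i + (t' + 2) := by omega
        rw [hx] at hadj2
        rcases hadj2 with h | h
        · omega
        · exfalso
          have hgg : g (a n D i + (t' + 2)) = g (a n D i + t') := by omega
          have := hg.2.2.1 _ hmem2 _ hmem0 hgg
          omega
    · right
      have hd1 : g (a n D i + 1) = g (a n D i) - 1 := by omega
      refine ⟨⟨hlen, by omega⟩, ?_⟩
      intro t
      induction t using Nat.strong_induction_on with
      | _ t ih =>
        intro ht
        rcases Nat.lt_or_ge t 1 with h01 | hge1
        · have : t = 0 := by omega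
          subst this
          simpa using hv0.1
        rcases Nat.lt_or_ge t 2 with h12 | hge2
        · have : t = 1 := by omega
          subst this
          constructor <;> omega
        obtain ⟨t', rfl⟩ : ∃ t', t = t' + 2 := ⟨t - 2, by omega⟩
        have e1 := ih (t' + 1) (by omega) (by omega)
        have e2 := ih t' (by omega) (by omega)
        have hmem1 : a n D i + (t' + 1) ∈ D := mem_of_lt_len (by omega)
        have hmem2 : a n D i + (t' + 2) ∈ D := mem_of_lt_len (by omega)
        have hmem0 : a n D i + t' ∈ D := mem_of_lt_len (by omega)
        have hv2 := hg.2.1 _ hmem2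
        have hadj2 := hg.2.2.2 (a n D i + (t' + 1)) hmem1
          (by have hx : a n D i + (t' + 1) + 1 = a n D i + (t' + 2) := by omega
              rw [hx]; exact hmem2)
        have hx : a n D i + (t' + 1) + 1 = a n D i + (t' + 2) := by omega
        rw [hx] at hadj2
        rcases hadj2 with h | h
        · exfalso
          have hgg : g (a n D i + (t' + 2)) = g (a n D i + t') := by omega
          have := hg.2.2.1 _ hmem2 _ hmem0 hgg
          omega
        · constructor <;> omega

lemma card_SSet (hD : D ⊆ Set.Icc 1 n) :
    Nat.card ↥(SSet n D) = Nat.card ↥((Bits n D) ×ˢ (Plc n D)) := by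
  symm
  apply Nat.card_congr
  apply Equiv.ofBijective (fun p : ↥((Bits n D) ×ˢ (Plc n D)) =>
    (⟨gOf n D p.1.1 p.1.2, gOf_mem hD p.2.1 p.2.2⟩ : ↥(SSet n D)))
  constructor
  · rintro ⟨⟨ε, m⟩, hεm⟩ ⟨⟨ε', m'⟩, hεm'⟩ h
    simp only [Subtype.mk.injEq] at h
    obtain ⟨hε, hm⟩ := hεm
    obtain ⟨hε', hm'⟩ := hεm'
    have key : ∀ i, ε i = ε' i ∧ m i = m' i := by
      intro i
      have hp := len_pos i
      have hv0 : pval n D ε m i 0 = pval n D ε' m' i 0 := by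
        have e1 := gOf_eq (n := n) (D := D) (ε := ε) (m := m) (i := i) (t := 0) (by omega)
        have e2 := gOf_eq (n := n) (D := D) (ε := ε') (m := m') (i := i) (t := 0) (by omega)
        rw [← e1, ← e2, h]
      by_cases hlen : len n D i < 2
      · have hb1 : ε i = false := hε i hlen
        have hb2 : ε' i = false := hε' i hlen
        rw [pval, pval, hb1, hb2] at hv0
        simp at hv0
        exact ⟨by rw [hb1, hb2], by omega⟩
      · push_neg at hlen
        have hv1 : pval n D ε m i 1 = pval n D ε' m' i 1 := by
          have e1 := gOf_eq (n := n) (D := D) (ε := ε) (m := m) (i := i) (t := 1) (by omega)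
          have e2 := gOf_eq (n := n) (D := D) (ε := ε') (m := m') (i := i) (t := 1) (by omega)
          rw [← e1, ← e2, h]
        rw [pval, pval] at hv0 hv1
        rcases Bool.eq_false_or_eq_true (ε i) with hb1 | hb1 <;>
          rcases Bool.eq_false_or_eq_true (ε' i) with hb2 | hb2 <;>
          rw [hb1, hb2] at hv0 hv1
        · simp at hv0 hv1
          exact ⟨by rw [hb1, hb2], by omega⟩
        · simp at hv0 hv1
          exfalso; omega
        · simp at hv0 hv1
          exfalso; omega
        · simp at hv0 hv1
          exact ⟨by rw [hb1, hb2], by omega⟩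
    apply Subtype.ext
    simp only [Prod.mk.injEq]
    exact ⟨funext fun i => (key i).1, funext fun i => (key i).2⟩
  · rintro ⟨g, hg⟩
    -- construct the bits and placement
    classical
    set εg : Fin (r n D) → Bool :=
      fun i => if 2 ≤ len n D i ∧ g (a n D i + 1) < g (a n D i) then true else false with hεgdef
    set mg : Fin (r n D) → ℕ :=
      fun i => if 2 ≤ len n D i ∧ g (a n D i + 1) < g (a n D i) then
        g (a n D i) - (len n D i - 1) else g (a n D i) with hmgdef
    -- per-run description
    have hrun : ∀ i : Fin (r n D),
        (εg i = false ∧ mg i = g (a n D i) ∧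
          ∀ t, t < len n D i → g (a n D i + t) = mg i + t) ∨
        (εg i = true ∧ 2 ≤ len n D i ∧ len n D i ≤ g (a n D i) ∧
          mg i = g (a n D i) - (len n D i - 1) ∧
          ∀ t, t < len n D i → g (a n D i + t) = mg i + (len n D i - 1) - t) := by
      intro i
      have hp := len_pos i
      rcases progression hD hg i with hup | ⟨hc, hdown⟩
      · left
        have hcond : ¬(2 ≤ len n D i ∧ g (a n D i + 1) < g (a n D i)) := by
          rintro ⟨h2, hlt⟩
          have := hup 1 (by omega)
          omega
        refine ⟨by simp only [hεgdef]; rw [if_neg hcond],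
          by simp only [hmgdef]; rw [if_neg hcond], ?_⟩
        intro t ht
        have := hup t ht
        simp only [hmgdef]
        rw [if_neg hcond]
        omega
      · right
        have hlast := hdown (len n D i - 1) (by omega)
        refine ⟨by simp only [hεgdef]; rw [if_pos hc], hc.1, by omega,
          by simp only [hmgdef]; rw [if_pos hc], ?_⟩
        intro t ht
        have h1 := hdown t ht
        simp only [hmgdef]
        rw [if_pos hc]
        omega
    have hmem0 : ∀ i : Fin (r n D), a n D i ∈ D := by
      intro i
      have := mem_of_lt_len (i := i) (t := 0) (len_pos i)
      simpa using this
    -- g values on run i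
    have himg : ∀ (i : Fin (r n D)) (w : ℕ), mg i ≤ w → w < mg i + len n D i →
        ∃ t, t < len n D i ∧ g (a n D i + t) = w := by
      intro i w hw1 hw2
      rcases hrun i with ⟨_, hm, hval⟩ | ⟨_, h2, h3, hm, hval⟩
      · exact ⟨w - mg i, by omega, by rw [hval _ (by omega)]; omega⟩
      · exact ⟨mg i + (len n D i - 1) - w, by omega, by
          rw [hval _ (by omega)]; omega⟩
    have hPlc : mg ∈ Plc n D := by
      constructor
      · intro i
        have hp := len_pos i
        have hv0 := hg.2.1 _ (hmem0 i)
        rcases hrun i with ⟨_, hm, hval⟩ | ⟨_, h2, h3, hm, hval⟩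
        · have hlast := hval (len n D i - 1) (by omega)
          have := hg.2.1 _ (mem_of_lt_len (i := i) (t := len n D i - 1) (by omega))
          omega
        · have hlast := hval (len n D i - 1) (by omega)
          have := hg.2.1 _ (mem_of_lt_len (i := i) (t := len n D i - 1) (by omega))
          omega
      · intro i j hij
        by_contra hcon
        push_neg at hcon
        have hp1 := len_pos i
        have hp2 := len_pos j
        set w := max (mg i) (mg j) with hw
        obtain ⟨t, ht, hgt⟩ := himg i w (by omega) (by omega)
        obtain ⟨t', ht', hgt'⟩ := himg j w (by omega) (by omega)
        have hxy := hg.2.2.1 _ (mem_of_lt_len ht) _ (mem_of_lt_len ht')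
          (by rw [hgt, hgt'])
        obtain ⟨hii, -⟩ := rep_unique ht ht' hxy
        exact hij hii
    have hBits : εg ∈ Bits n D := by
      intro i hlen
      rcases hrun i with ⟨hb, -, -⟩ | ⟨-, h2, -⟩
      · exact hb
      · omega
    refine ⟨⟨⟨εg, mg⟩, hBits, hPlc⟩, ?_⟩
    apply Subtype.ext
    simp only
    funext x
    by_cases hx : x ∈ D
    · obtain ⟨i, h1, h2⟩ := exists_idx hD hx
      have ht : x - a n D i < len n D i := by omega
      have heq : x = a n D i + (x - a n D i) := by omega
      rw [heq, gOf_eq ht, pval]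
      rcases hrun i with ⟨hb, hm, hval⟩ | ⟨hb, h2', h3, hm, hval⟩
      · rw [hb]
        simp only [Bool.false_eq_true, if_false]
        exact (hval _ ht).symm
      · rw [hb]
        simp only [if_true]
        exact (hval _ ht).symm
    · rw [gOf_zero hx]
      exact (hg.1 x hx).symm


lemma card_Bits :
    Nat.card ↥(Bits n D) = 2 ^ (Finset.univ.filter (fun i => 2 ≤ len n D i)).card := by
  have e : ↥(Bits n D) ≃ ({i : Fin (r n D) // 2 ≤ len n D i} → Bool) :=
    { toFun := fun ε => fun j => ε.1 j.1
      invFun := fun F => ⟨fun i => if h : 2 ≤ len n D i then F ⟨i, h⟩ else false,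
        fun i hi => dif_neg (by omega)⟩
      left_inv := fun ⟨ε, hε⟩ => Subtype.ext (funext fun i => by
        show (if h : 2 ≤ len n D i then ε i else false) = ε i
        by_cases h : 2 ≤ len n D i
        · rw [dif_pos h]
        · rw [dif_neg h]
          exact (hε i (by omega)).symm)
      right_inv := fun F => funext fun j => by
        show (if h : 2 ≤ len n D (j : Fin (r n D)) then F ⟨j, h⟩ else false) = F j
        rw [dif_pos j.2] }
  rw [Nat.card_congr e, Nat.card_eq_fintype_card, Fintype.card_fun, Fintype.card_bool,
    Fintype.card_subtype]

lemma toG_mem (hD : D ⊆ Set.Icc 1 n) {f : ℕ →. ℕ} (hf : IsIEnd n f) (hdom : f.Dom = D) :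
    (fun x => if h : (f x).Dom then (f x).get h else 0) ∈ SSet n D := by
  have hdomx : ∀ x, (f x).Dom ↔ x ∈ D := by
    intro x
    have : x ∈ f.Dom ↔ x ∈ D := by rw [hdom]
    exact this
  refine ⟨?_, ?_, ?_, ?_⟩
  · intro x hx
    exact dif_neg (fun h => hx ((hdomx x).1 h))
  · intro x hx
    have h := (hdomx x).2 hx
    beta_reduce
    rw [dif_pos h]
    have := hf.ran_subset ⟨x, Part.get_mem h⟩
    simpa only [Set.mem_Icc] using this
  · intro x hx y hy hxy
    have hx' := (hdomx x).2 hx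
    have hy' := (hdomx y).2 hy
    beta_reduce at hxy
    rw [dif_pos hx', dif_pos hy'] at hxy
    have hmx : (f x).get hx' ∈ f x := Part.get_mem hx'
    have hmy : (f x).get hx' ∈ f y := by rw [hxy]; exact Part.get_mem hy'
    exact hf.inj hmx hmy
  · intro x hx hx1
    have hx' := (hdomx x).2 hx
    have hy' := (hdomx (x + 1)).2 hx1
    beta_reduce
    rw [dif_pos hx', dif_pos hy']
    exact hf.edge (Part.get_mem hx') (Part.get_mem hy') (Or.inl rfl)

lemma card_F (hD : D ⊆ Set.Icc 1 n) :
    Nat.card ↥{f : ℕ →. ℕ | IsIEnd n f ∧ f.Dom = D} = Nat.card ↥(SSet n D) := by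
  apply Nat.card_congr
  apply Equiv.ofBijective (fun f : ↥{f : ℕ →. ℕ | IsIEnd n f ∧ f.Dom = D} =>
    (⟨fun x => if h : (f.1 x).Dom then (f.1 x).get h else 0,
      toG_mem hD f.2.1 f.2.2⟩ : ↥(SSet n D)))
  constructor
  · rintro ⟨f, hf, hdom⟩ ⟨f', hf', hdom'⟩ h
    simp only [Subtype.mk.injEq] at h
    apply Subtype.ext
    funext x
    apply Part.ext'
    · show (f x).Dom ↔ (f' x).Dom
      constructor
      · intro hx
        have : x ∈ f.Dom := hx
        rw [hdom, ← hdom'] at this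
        exact this
      · intro hx
        have : x ∈ f'.Dom := hx
        rw [hdom', ← hdom] at this
        exact this
    · intro h1 h2
      have := congrFun h x
      rwa [dif_pos h1, dif_pos h2] at this
  · rintro ⟨g, hg⟩
    set f : ℕ →. ℕ := fun x => ⟨x ∈ D, fun _ => g x⟩ with hfdef
    have hdom : f.Dom = D := Set.ext fun x => Iff.rfl
    have hf : IsIEnd n f := by
      constructor
      · rw [hdom]; exact hD
      · intro y hy
        obtain ⟨x, hx⟩ := hy
        rw [hfdef] at hx
        obtain ⟨hxD, rfl⟩ := Part.mem_mk_iff.1 hx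
        simpa only [Set.mem_Icc] using hg.2.1 x hxD
      · intro x y w hx hy
        obtain ⟨hxD, hgx⟩ := Part.mem_mk_iff.1 hx
        obtain ⟨hyD, hgy⟩ := Part.mem_mk_iff.1 hy
        exact hg.2.2.1 x hxD y hyD (by rw [hgx, hgy])
      · intro u v w1 w2 hu hv hadj
        obtain ⟨huD, hgu⟩ := Part.mem_mk_iff.1 hu
        obtain ⟨hvD, hgv⟩ := Part.mem_mk_iff.1 hv
        subst hgu
        subst hgv
        rcases hadj with h | h
        · subst h
          exact hg.2.2.2 u huD hvD
        · subst h
          have := hg.2.2.2 v hvD huD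
          rcases this with h | h
          · exact Or.inr h
          · exact Or.inl h
    refine ⟨⟨f, hf, hdom⟩, ?_⟩
    apply Subtype.ext
    funext x
    by_cases hx : x ∈ D
    · have h : (f x).Dom := hx
      simp only
      rw [dif_pos h]
    · have h : ¬ (f x).Dom := hx
      simp only
      rw [dif_neg h]
      exact (hg.1 x hx).symm

end Stmt13

open Stmt13 in
theorem stmt13 (n : ℕ) (D : Set ℕ) (hne : D.Nonempty) (hD : D ⊆ Set.Icc 1 n) :
    {f : ℕ →. ℕ | IsIEnd n f ∧ f.Dom = D}.ncard =
      2 ^ {I : Set ℕ | IsMaxIntervalOf I D ∧ 2 ≤ I.ncard}.ncard *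
        Nat.factorial {I : Set ℕ | IsMaxIntervalOf I D}.ncard *
        Nat.choose (n - D.ncard + {I : Set ℕ | IsMaxIntervalOf I D}.ncard)
          {I : Set ℕ | IsMaxIntervalOf I D}.ncard := by
  rw [ncard_maxIntervals_big hD hne, ncard_maxIntervals hD hne]
  have h0 : {f : ℕ →. ℕ | IsIEnd n f ∧ f.Dom = D}.ncard
      = Nat.card ↥{f : ℕ →. ℕ | IsIEnd n f ∧ f.Dom = D} :=
    (Nat.card_coe_set_eq _).symm
  rw [h0, card_F hD, card_SSet hD, Nat.card_congr (Equiv.Set.prod _ _), Nat.card_prod,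
    card_Bits, card_Plc hD, mul_assoc]
end

section
/- The number of partial automorphisms of the path P_n with a prescribed nonempty domain D ⊆ {1,…,n} equals 2^T · r! · C(n−s+1, r), where r is the number of maximal intervals of D, s = |D|, and T is the number of maximal intervals of D of size at least 2. -/
open scoped Classical

namespace Stmt14

section count
variable (L : Finset ℕ) (ℓ : ℕ → ℕ) (n : ℕ)

/-- valid interval assignments -/
def COK (c : ℕ → ℕ) : Prop :=
  (∀ x, x ∉ L → c x = 0) ∧ (∀ a ∈ L, 1 ≤ c a ∧ c a + ℓ a ≤ n + 1) ∧
    (∀ a ∈ L, ∀ b ∈ L, a ≠ b → c a + ℓ a < c b ∨ c b + ℓ b < c a)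

def NOK (ν : ℕ → ℕ) : Prop :=
  (∀ x, x ∉ L → ν x = 0) ∧ (∀ a ∈ L, 1 ≤ ν a ∧ ν a ≤ n - (∑ b ∈ L, ℓ b) + 1) ∧
    (∀ a ∈ L, ∀ b ∈ L, ν a = ν b → a = b)

variable {L ℓ n}

section forward
variable {c : ℕ → ℕ} (hc : COK L ℓ n c)
include hc

lemma c_inj {a b : ℕ} (ha : a ∈ L) (hb : b ∈ L) (h : c a = c b) : a = b := by
  by_contra hne
  rcases hc.2.2 a ha b hb hne with h' | h' <;> omega

lemma E1 : ∀ k, ∀ a ∈ L, (L.filter (fun b => c b < c a)).card = k →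
    (∑ b ∈ L.filter (fun b => c b < c a), ℓ b) + 1 ≤ c a := by
  intro k
  induction k using Nat.strong_induction_on with
  | _ k IH =>
    intro a ha hk
    rcases Nat.eq_zero_or_pos k with rfl | hkpos
    · rw [Finset.card_eq_zero] at hk
      rw [hk]
      simpa using (hc.2.1 a ha).1
    · have hne : (L.filter (fun b => c b < c a)).Nonempty := by
        rw [← Finset.card_pos, hk]; exact hkpos
      obtain ⟨x0, hx0, hmax⟩ := Finset.exists_max_image _ c hne
      simp only [Finset.mem_filter] at hx0
      have hx0L := hx0.1
      have hx0a := hx0.2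
      have hfe : L.filter (fun b => c b < c x0) = (L.filter (fun b => c b < c a)).erase x0 := by
        ext b
        simp only [Finset.mem_erase, Finset.mem_filter]
        constructor
        · intro ⟨hbL, hbx0⟩
          exact ⟨fun h => by subst h; omega, hbL, by omega⟩
        · intro ⟨hbne, hbL, hba⟩
          refine ⟨hbL, ?_⟩
          have := hmax b (Finset.mem_filter.mpr ⟨hbL, hba⟩)
          rcases Nat.lt_or_ge (c b) (c x0) with h | h
          · exact h
          · exact absurd (c_inj hc hbL hx0L (by omega)) hbne
      have hcard : (L.filter (fun b => c b < c x0)).card = k - 1 := by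
        rw [hfe, Finset.card_erase_of_mem (Finset.mem_filter.mpr hx0), hk]
      have hIH := IH (k - 1) (by omega) x0 hx0L hcard
      have hsum : (∑ b ∈ L.filter (fun b => c b < c a), ℓ b)
          = (∑ b ∈ L.filter (fun b => c b < c x0), ℓ b) + ℓ x0 := by
        rw [hfe, Finset.sum_erase_add _ _ (Finset.mem_filter.mpr hx0)]
      have hsep : c x0 + ℓ x0 < c a := by
        rcases hc.2.2 x0 hx0L a ha (fun h => by subst h; omega) with h | h <;> omega
      omega

lemma E2 : ∀ k, ∀ a ∈ L, (L.filter (fun b => c a < c b)).card = k →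
    c a + ℓ a + (∑ b ∈ L.filter (fun b => c a < c b), (ℓ b + 1)) ≤ n + 1 := by
  intro k
  induction k using Nat.strong_induction_on with
  | _ k IH =>
    intro a ha hk
    rcases Nat.eq_zero_or_pos k with rfl | hkpos
    · rw [Finset.card_eq_zero] at hk
      rw [hk]
      simp only [Finset.sum_empty]
      have := (hc.2.1 a ha).2
      omega
    · have hne : (L.filter (fun b => c a < c b)).Nonempty := by
        rw [← Finset.card_pos, hk]; exact hkpos
      obtain ⟨x0, hx0, hmin⟩ := Finset.exists_min_image _ c hne
      simp only [Finset.mem_filter] at hx0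
      have hx0L := hx0.1
      have hx0a := hx0.2
      have hfe : L.filter (fun b => c x0 < c b) = (L.filter (fun b => c a < c b)).erase x0 := by
        ext b
        simp only [Finset.mem_erase, Finset.mem_filter]
        constructor
        · intro ⟨hbL, hbx0⟩
          exact ⟨fun h => by subst h; omega, hbL, by omega⟩
        · intro ⟨hbne, hbL, hba⟩
          refine ⟨hbL, ?_⟩
          have := hmin b (Finset.mem_filter.mpr ⟨hbL, hba⟩)
          rcases Nat.lt_or_ge (c x0) (c b) with h | h
          · exact h
          · exact absurd (c_inj hc hbL hx0L (by omega)) hbne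
      have hcard : (L.filter (fun b => c x0 < c b)).card = k - 1 := by
        rw [hfe, Finset.card_erase_of_mem (Finset.mem_filter.mpr hx0), hk]
      have hIH := IH (k - 1) (by omega) x0 hx0L hcard
      have hsum : (∑ b ∈ L.filter (fun b => c a < c b), (ℓ b + 1))
          = (∑ b ∈ L.filter (fun b => c x0 < c b), (ℓ b + 1)) + (ℓ x0 + 1) := by
        rw [hfe, Finset.sum_erase_add _ _ (Finset.mem_filter.mpr hx0)]
      have hsep : c a + ℓ a < c x0 := by
        rcases hc.2.2 x0 hx0L a ha (fun h => by subst h; omega) with h | h <;> omega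
      omega

lemma E3 : ∀ k, ∀ a ∈ L, ∀ b ∈ L, c a < c b →
    (L.filter (fun x => c a < c x ∧ c x < c b)).card = k →
    c a - (∑ x ∈ L.filter (fun x => c x < c a), ℓ x) <
      c b - (∑ x ∈ L.filter (fun x => c x < c b), ℓ x) := by
  intro k
  induction k using Nat.strong_induction_on with
  | _ k IH =>
    intro a ha b hb hab hk
    have hE1a := E1 hc _ a ha rfl
    have hE1b := E1 hc _ b hb rfl
    rcases Nat.eq_zero_or_pos k with rfl | hkpos
    · rw [Finset.card_eq_zero] at hk
      have hfe : L.filter (fun x => c x < c b) = insert a (L.filter (fun x => c x < c a)) := by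
        ext x
        simp only [Finset.mem_insert, Finset.mem_filter]
        constructor
        · intro ⟨hxL, hxb⟩
          rcases Nat.lt_or_ge (c x) (c a) with h | h
          · exact Or.inr ⟨hxL, h⟩
          · rcases Nat.eq_or_lt_of_le h with h' | h'
            · exact Or.inl (c_inj hc hxL ha h'.symm)
            · have hxmem : x ∈ L.filter (fun x => c a < c x ∧ c x < c b) := by
                simp only [Finset.mem_filter]
                exact ⟨hxL, h', hxb⟩
              rw [hk] at hxmem
              simp at hxmem
        · rintro (rfl | ⟨hxL, hxa⟩)
          · exact ⟨ha, hab⟩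
          · exact ⟨hxL, by omega⟩
      have hnotmem : a ∉ L.filter (fun x => c x < c a) := by
        simp only [Finset.mem_filter, not_and]; intro _; omega
      have hsum : (∑ x ∈ L.filter (fun x => c x < c b), ℓ x)
          = ℓ a + (∑ x ∈ L.filter (fun x => c x < c a), ℓ x) := by
        rw [hfe, Finset.sum_insert hnotmem]
      have hsep : c a + ℓ a < c b := by
        rcases hc.2.2 a ha b hb (fun h => by subst h; omega) with h | h <;> omega
      omega
    · have hne : (L.filter (fun x => c a < c x ∧ c x < c b)).Nonempty := by
        rw [← Finset.card_pos, hk]; exact hkpos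
      obtain ⟨x0, hx0, hmax⟩ := Finset.exists_max_image _ c hne
      simp only [Finset.mem_filter] at hx0
      obtain ⟨hx0L, hx0a, hx0b⟩ := hx0
      have h1 : (L.filter (fun x => c a < c x ∧ c x < c x0)).card = k - 1 := by
        have hfe : L.filter (fun x => c a < c x ∧ c x < c x0)
            = (L.filter (fun x => c a < c x ∧ c x < c b)).erase x0 := by
          ext y
          simp only [Finset.mem_erase, Finset.mem_filter]
          constructor
          · intro ⟨hyL, hy1, hy2⟩
            exact ⟨fun h => by subst h; omega, hyL, hy1, by omega⟩
          · intro ⟨hyne, hyL, hy1, hy2⟩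
            have := hmax y (Finset.mem_filter.mpr ⟨hyL, hy1, hy2⟩)
            refine ⟨hyL, hy1, ?_⟩
            rcases Nat.lt_or_ge (c y) (c x0) with h | h
            · exact h
            · exact absurd (c_inj hc hyL hx0L (by omega)) hyne
        rw [hfe, Finset.card_erase_of_mem (Finset.mem_filter.mpr ⟨hx0L, hx0a, hx0b⟩), hk]
      have h2 : (L.filter (fun x => c x0 < c x ∧ c x < c b)).card = 0 := by
        rw [Finset.card_eq_zero]
        rw [Finset.eq_empty_iff_forall_notMem]
        intro y hy
        simp only [Finset.mem_filter] at hy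
        have := hmax y (Finset.mem_filter.mpr ⟨hy.1, by omega, hy.2.2⟩)
        omega
      have hlt1 := IH (k - 1) (by omega) a ha x0 hx0L hx0a h1
      have hlt2 := IH 0 (by omega) x0 hx0L b hb hx0b h2
      omega

lemma nu_lower {a : ℕ} (ha : a ∈ L) :
    1 ≤ c a - (∑ x ∈ L.filter (fun x => c x < c a), ℓ x) := by
  have := E1 hc _ a ha rfl
  omega

lemma sum_split {a : ℕ} (ha : a ∈ L) :
    (∑ b ∈ L, ℓ b) = (∑ x ∈ L.filter (fun x => c x < c a), ℓ x) + ℓ a +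
      (∑ x ∈ L.filter (fun x => c a < c x), ℓ x) := by
  have hsplit := Finset.sum_filter_add_sum_filter_not L (fun x => c x < c a) ℓ
  have h2 : L.filter (fun x => ¬ c x < c a) = insert a (L.filter (fun x => c a < c x)) := by
    ext x
    simp only [Finset.mem_insert, Finset.mem_filter, not_lt]
    constructor
    · intro ⟨hxL, hx⟩
      rcases Nat.eq_or_lt_of_le hx with h | h
      · exact Or.inl (c_inj hc hxL ha (by omega))
      · exact Or.inr ⟨hxL, h⟩
    · rintro (rfl | ⟨hxL, hx⟩)
      · exact ⟨ha, le_refl _⟩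
      · exact ⟨hxL, by omega⟩
  have hnm : a ∉ L.filter (fun x => c a < c x) := by
    simp only [Finset.mem_filter, not_and]; intro _; omega
  rw [h2, Finset.sum_insert hnm] at hsplit
  omega

lemma nu_upper {a : ℕ} (ha : a ∈ L) :
    c a - (∑ x ∈ L.filter (fun x => c x < c a), ℓ x) ≤ n - (∑ b ∈ L, ℓ b) + 1 := by
  have h2 := E2 hc _ a ha rfl
  have h3 := sum_split hc ha
  have h4 : (∑ b ∈ L.filter (fun x => c a < c x), (ℓ b + 1))
      ≥ (∑ b ∈ L.filter (fun x => c a < c x), ℓ b) := Finset.sum_le_sum (fun i _ => by omega)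
  have h5 := E1 hc _ a ha rfl
  omega

end forward

/-- the forward map -/
noncomputable def toNu (L : Finset ℕ) (ℓ : ℕ → ℕ) (c : ℕ → ℕ) : ℕ → ℕ := fun a =>
  if a ∈ L then c a - (∑ x ∈ L.filter (fun x => c x < c a), ℓ x) else 0

/-- the backward map -/
noncomputable def toC (L : Finset ℕ) (ℓ : ℕ → ℕ) (ν : ℕ → ℕ) : ℕ → ℕ := fun a =>
  if a ∈ L then ν a + (∑ x ∈ L.filter (fun x => ν x < ν a), ℓ x) else 0

lemma toNu_NOK {c : ℕ → ℕ} (hc : COK L ℓ n c) : NOK L ℓ n (toNu L ℓ c) := by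
  refine ⟨fun x hx => by simp [toNu, hx], fun a ha => ?_, fun a ha b hb he => ?_⟩
  · simp only [toNu, if_pos ha]
    exact ⟨nu_lower hc ha, nu_upper hc ha⟩
  · simp only [toNu, if_pos ha, if_pos hb] at he
    by_contra hne
    have hcc : c a ≠ c b := fun h => hne (c_inj hc ha hb h)
    rcases Nat.lt_or_ge (c a) (c b) with h | h
    · have := E3 hc _ a ha b hb h rfl
      omega
    · have := E3 hc _ b hb a ha (by omega) rfl
      omega

variable (hs : (∑ b ∈ L, ℓ b) ≤ n) (hℓ : ∀ a ∈ L, 1 ≤ ℓ a)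

section backward
variable {ν : ℕ → ℕ} (hν : NOK L ℓ n ν)
include hν hs hℓ

lemma toC_mono {a b : ℕ} (ha : a ∈ L) (hb : b ∈ L) (hab : ν a < ν b) :
    toC L ℓ ν a + ℓ a < toC L ℓ ν b := by
  simp only [toC, if_pos ha, if_pos hb]
  have hsub : insert a (L.filter (fun x => ν x < ν a)) ⊆ L.filter (fun x => ν x < ν b) := by
    intro x hx
    rcases Finset.mem_insert.mp hx with rfl | hx'
    · exact Finset.mem_filter.mpr ⟨ha, hab⟩
    · simp only [Finset.mem_filter] at hx' ⊢
      exact ⟨hx'.1, by omega⟩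
  have hnm : a ∉ L.filter (fun x => ν x < ν a) := by simp only [Finset.mem_filter]; omega
  have := Finset.sum_le_sum_of_subset (f := ℓ) hsub
  rw [Finset.sum_insert hnm] at this
  omega

lemma toC_COK : COK L ℓ n (toC L ℓ ν) := by
  refine ⟨fun x hx => by simp [toC, hx], fun a ha => ?_, fun a ha b hb hne => ?_⟩
  · constructor
    · simp only [toC, if_pos ha]
      have := (hν.2.1 a ha).1
      omega
    · simp only [toC, if_pos ha]
      have h1 := (hν.2.1 a ha).2
      have hsub : insert a (L.filter (fun x => ν x < ν a)) ⊆ L := by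
        intro x hx
        rcases Finset.mem_insert.mp hx with rfl | hx'
        · exact ha
        · exact (Finset.mem_filter.mp hx').1
      have hnm : a ∉ L.filter (fun x => ν x < ν a) := by simp only [Finset.mem_filter]; omega
      have h2 := Finset.sum_le_sum_of_subset (f := ℓ) hsub
      rw [Finset.sum_insert hnm] at h2
      omega
  · have hne' : ν a ≠ ν b := fun h => hne (hν.2.2 a ha b hb h)
    rcases Nat.lt_or_ge (ν a) (ν b) with h | h
    · exact Or.inl (toC_mono hs hℓ hν ha hb h)
    · exact Or.inr (toC_mono hs hℓ hν hb ha (by omega))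

lemma toNu_toC : toNu L ℓ (toC L ℓ ν) = ν := by
  funext a
  by_cases ha : a ∈ L
  · simp only [toNu, if_pos ha]
    have hfe : L.filter (fun x => toC L ℓ ν x < toC L ℓ ν a) = L.filter (fun x => ν x < ν a) := by
      ext x
      simp only [Finset.mem_filter]
      constructor
      · intro ⟨hxL, hx⟩
        refine ⟨hxL, ?_⟩
        by_contra hge
        rcases Nat.eq_or_lt_of_le (Nat.ge_of_not_lt hge) with h | h
        · have hxa : x = a := hν.2.2 x hxL a ha (by omega)
          subst hxa
          omega
        · have := toC_mono hs hℓ hν ha hxL h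
          omega
      · intro ⟨hxL, hx⟩
        have := toC_mono hs hℓ hν hxL ha hx
        exact ⟨hxL, by omega⟩
    rw [hfe]
    simp only [toC, if_pos ha]
    omega
  · simp only [toNu, if_neg ha]
    exact (hν.1 a ha).symm

end backward

lemma toC_toNu {c : ℕ → ℕ} (hc : COK L ℓ n c) : toC L ℓ (toNu L ℓ c) = c := by
  funext a
  by_cases ha : a ∈ L
  · simp only [toC, if_pos ha]
    have hfe : L.filter (fun x => toNu L ℓ c x < toNu L ℓ c a) = L.filter (fun x => c x < c a) := by
      ext x
      simp only [Finset.mem_filter]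
      constructor
      · intro ⟨hxL, hx⟩
        refine ⟨hxL, ?_⟩
        by_contra hge
        rcases Nat.eq_or_lt_of_le (Nat.ge_of_not_lt hge) with h | h
        · have hxa : x = a := c_inj hc hxL ha (by omega)
          subst hxa
          omega
        · have := E3 hc _ a ha x hxL h rfl
          simp only [toNu, if_pos ha, if_pos hxL] at hx
          omega
      · intro ⟨hxL, hx⟩
        have := E3 hc _ x hxL a ha hx rfl
        simp only [toNu, if_pos ha, if_pos hxL]
        exact ⟨hxL, by omega⟩
    rw [hfe]
    simp only [toNu, if_pos ha]
    have := E1 hc _ a ha rfl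
    omega
  · simp only [toC, if_neg ha]
    exact (hc.1 a ha).symm

/-- cardinality of the set of valid assignments -/
lemma card_COK (hs : (∑ b ∈ L, ℓ b) ≤ n) (hℓ : ∀ a ∈ L, 1 ≤ ℓ a) :
    Nat.card {c : ℕ → ℕ // COK L ℓ n c} =
      Nat.factorial L.card * Nat.choose (n - (∑ b ∈ L, ℓ b) + 1) L.card := by
  have e1 : {c : ℕ → ℕ // COK L ℓ n c} ≃ {ν : ℕ → ℕ // NOK L ℓ n ν} :=
    { toFun := fun c => ⟨toNu L ℓ c.1, toNu_NOK c.2⟩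
      invFun := fun ν => ⟨toC L ℓ ν.1, toC_COK hs hℓ ν.2⟩
      left_inv := fun c => Subtype.ext (toC_toNu c.2)
      right_inv := fun ν => Subtype.ext (toNu_toC hs hℓ ν.2) }
  have e2 : {ν : ℕ → ℕ // NOK L ℓ n ν} ≃
      ((L : Finset ℕ) ↪ (Finset.Icc 1 (n - (∑ b ∈ L, ℓ b) + 1) : Finset ℕ)) :=
    { toFun := fun ν => ⟨fun a => ⟨ν.1 a, Finset.mem_Icc.mpr (ν.2.2.1 a a.2)⟩,
        fun a b h => Subtype.ext (ν.2.2.2 a a.2 b b.2 (congrArg Subtype.val h))⟩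
      invFun := fun e => ⟨fun x => if h : x ∈ L then (e ⟨x, h⟩ : ℕ) else 0,
        ⟨fun x hx => by simp [hx],
         fun a ha => by simp only [dif_pos ha]; exact Finset.mem_Icc.mp (e ⟨a, ha⟩).2,
         fun a ha b hb he => by
          simp only [dif_pos ha, dif_pos hb] at he
          exact congrArg Subtype.val (e.injective (Subtype.ext he))⟩⟩
      left_inv := fun ν => by
        apply Subtype.ext
        funext x
        by_cases hx : x ∈ L
        · simp [dif_pos hx]; rfl
        · simp [dif_neg hx, (ν.2.1 x hx).symm]
      right_inv := fun e => by
        apply Function.Embedding.ext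
        intro a
        apply Subtype.ext
        simp [dif_pos a.2] }
  rw [Nat.card_congr (e1.trans e2), Nat.card_eq_fintype_card, Fintype.card_embedding_eq]
  simp only [Fintype.card_coe, Nat.card_Icc]
  rw [show n - (∑ b ∈ L, ℓ b) + 1 + 1 - 1 = n - (∑ b ∈ L, ℓ b) + 1 by omega]
  rw [Nat.descFactorial_eq_factorial_mul_choose]

end count

variable (D : Set ℕ)

/-- length of the run of `D` starting at `a`. -/
noncomputable def runlen (a : ℕ) : ℕ := sInf {k | a + k ∉ D}

/-- distance walking left from `x` until leaving `D`. -/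
noncomputable def backlen (x : ℕ) : ℕ := sInf {k | x - k ∉ D}

/-- left endpoint of the run containing `x`. -/
noncomputable def startOf (x : ℕ) : ℕ := x + 1 - backlen D x

/-- the set of left endpoints of maximal runs of `D`. -/
noncomputable def LF (n : ℕ) : Finset ℕ :=
  (Finset.Icc 1 n).filter (fun a => a ∈ D ∧ a - 1 ∉ D)

variable {n : ℕ} {D}

section runs
variable (hD : D ⊆ Set.Icc 1 n)
include hD

lemma zero_not_mem : 0 ∉ D := fun h => by simpa using (hD h).1

lemma runlen_set_nonempty (a : ℕ) : {k | a + k ∉ D}.Nonempty :=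
  ⟨n + 1, fun h => by have := (hD h).2; omega⟩

lemma add_runlen_not_mem (a : ℕ) : a + runlen D a ∉ D :=
  Nat.sInf_mem (runlen_set_nonempty hD a)

lemma mem_of_lt_runlen {a j : ℕ} (h : j < runlen D a) : a + j ∈ D := by
  by_contra hj
  have := Nat.sInf_le (show j ∈ {k | a + k ∉ D} from hj)
  unfold runlen at h; omega

lemma runlen_pos {a : ℕ} (ha : a ∈ D) : 0 < runlen D a := by
  rcases Nat.eq_zero_or_pos (runlen D a) with h | h
  · exact absurd (by simpa [h] using add_runlen_not_mem hD a) (by simpa using ha)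
  · exact h

lemma sub_backlen_not_mem (x : ℕ) : x - backlen D x ∉ D :=
  Nat.sInf_mem (⟨x, by simpa using zero_not_mem hD⟩ : {k | x - k ∉ D}.Nonempty)

lemma mem_of_lt_backlen {x j : ℕ} (h : j < backlen D x) : x - j ∈ D := by
  by_contra hj
  have := Nat.sInf_le (show j ∈ {k | x - k ∉ D} from hj)
  unfold backlen at h; omega

lemma backlen_pos {x : ℕ} (hx : x ∈ D) : 0 < backlen D x := by
  rcases Nat.eq_zero_or_pos (backlen D x) with h | h
  · exact absurd (by simpa [h] using sub_backlen_not_mem hD x) (by simpa using hx)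
  · exact h

lemma backlen_le {x : ℕ} (hx : x ∈ D) : backlen D x ≤ x := by
  by_contra h
  exact zero_not_mem hD (by have := mem_of_lt_backlen hD (show x < backlen D x by omega); simpa using this)

lemma startOf_mem {x : ℕ} (hx : x ∈ D) : startOf D x ∈ D := by
  have h1 := backlen_pos hD hx
  have h2 := backlen_le hD hx
  have := mem_of_lt_backlen hD (show backlen D x - 1 < backlen D x by omega)
  have : x - (backlen D x - 1) ∈ D := this
  have e : startOf D x = x - (backlen D x - 1) := by unfold startOf; omega
  rwa [e]

lemma startOf_le {x : ℕ} (hx : x ∈ D) : startOf D x ≤ x := by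
  have := backlen_pos hD hx; unfold startOf; omega

lemma startOf_pred_not_mem {x : ℕ} (hx : x ∈ D) : startOf D x - 1 ∉ D := by
  have h1 := backlen_pos hD hx
  have h2 := backlen_le hD hx
  have := sub_backlen_not_mem hD x
  have e : startOf D x - 1 = x - backlen D x := by unfold startOf; omega
  rwa [e]

lemma startOf_mem_LF {x : ℕ} (hx : x ∈ D) : startOf D x ∈ LF D n := by
  have h := startOf_mem hD hx
  refine Finset.mem_filter.mpr ⟨?_, h, startOf_pred_not_mem hD hx⟩
  have := hD h; simp at this ⊢; omega

lemma Icc_startOf_subset {x : ℕ} (hx : x ∈ D) : Set.Icc (startOf D x) x ⊆ D := by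
  intro y hy
  simp only [Set.mem_Icc] at hy
  have h1 := backlen_pos hD hx
  have h2 := backlen_le hD hx
  have : x - (x - y) ∈ D := mem_of_lt_backlen hD (show x - y < backlen D x by unfold startOf at hy; omega)
  rwa [show x - (x - y) = y by omega] at this

omit hD in
lemma mem_LF_imp {a : ℕ} (ha : a ∈ LF D n) : a ∈ D ∧ a - 1 ∉ D ∧ 1 ≤ a := by
  simp only [LF, Finset.mem_filter, Finset.mem_Icc] at ha
  exact ⟨ha.2.1, ha.2.2, ha.1.1⟩

lemma startOf_eq {a x : ℕ} (ha : a ∈ LF D n) (h1 : a ≤ x) (h2 : x < a + runlen D a) :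
    startOf D x = a := by
  obtain ⟨haD, hap, ha1⟩ := mem_LF_imp ha
  have hxD : x ∈ D := by
    have := mem_of_lt_runlen hD (show x - a < runlen D a by omega)
    rwa [show a + (x - a) = x by omega] at this
  have hs1 := startOf_le hD hxD
  have hs2 := startOf_pred_not_mem hD hxD
  have hs3 := startOf_mem hD hxD
  -- startOf D x ≥ a : else a - 1 would be in run... use Icc_startOf_subset
  have hsub := Icc_startOf_subset hD hxD
  by_contra hne
  rcases Nat.lt_or_ge (startOf D x) a with hlt | hge
  · -- then a - 1 ∈ Icc (startOf x) x  (need a - 1 ≥ startOf, and a-1 ≤ x)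
    exact hap (hsub (by simp only [Set.mem_Icc]; omega))
  · -- startOf D x > a; then startOf - 1 ∈ [a, x] ⊆ D? startOf -1 ≥ a, ≤ x.
    have hgt : a < startOf D x := by omega
    have : startOf D x - 1 ∈ D := by
      have := mem_of_lt_runlen hD (show startOf D x - 1 - a < runlen D a by omega)
      rwa [show a + (startOf D x - 1 - a) = startOf D x - 1 by omega] at this
    exact hs2 this

lemma runlen_le {a : ℕ} (ha : a ∈ D) : a + runlen D a ≤ n + 1 := by
  by_contra h
  have : a + (n + 1 - a) ∈ D := mem_of_lt_runlen hD (by have := hD ha; simp at this; omega)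
  have h2 := hD this
  have := hD ha; simp at this h2; omega

end runs

section maxint
variable (hD : D ⊆ Set.Icc 1 n)
include hD

lemma isMax_of_LF {a : ℕ} (ha : a ∈ LF D n) :
    IsMaxIntervalOf (Set.Icc a (a + runlen D a - 1)) D := by
  obtain ⟨haD, hap, ha1⟩ := mem_LF_imp ha
  have hrp := runlen_pos hD haD
  have hrn := add_runlen_not_mem hD a
  have hsub : Set.Icc a (a + runlen D a - 1) ⊆ D := by
    intro y hy; simp only [Set.mem_Icc] at hy
    have := mem_of_lt_runlen hD (show y - a < runlen D a by omega)
    rwa [show a + (y - a) = y by omega] at this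
  refine ⟨⟨hsub, fun x hx y hy z h1 h2 => ?_⟩, fun J hJ hIJ => ?_⟩
  · simp only [Set.mem_Icc] at *; omega
  · refine le_antisymm hIJ ?_
    intro w hw
    simp only [Set.mem_Icc]
    by_contra hc
    have haJ : a ∈ J := hIJ (by simp only [Set.mem_Icc]; omega)
    have heJ : a + runlen D a - 1 ∈ J := hIJ (by simp only [Set.mem_Icc]; omega)
    rcases Nat.lt_or_ge w a with hlt | hge
    · -- a - 1 ∈ D, contra
      rcases Nat.eq_or_lt_of_le (show w ≤ a - 1 by omega) with he | hl
      · exact hap (hJ.1 (he ▸ hw))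
      · exact hap (hJ.1 (hJ.2 hw haJ hl (by omega)))
    · have hgt : a + runlen D a - 1 < w := by omega
      rcases Nat.eq_or_lt_of_le (show a + runlen D a ≤ w by omega) with he | hl
      · exact hrn (hJ.1 (he ▸ hw))
      · exact hrn (hJ.1 (hJ.2 heJ hw (by omega) hl))

lemma LF_of_isMax (hne : D.Nonempty) {I : Set ℕ} (hI : IsMaxIntervalOf I D) :
    ∃ a ∈ LF D n, I = Set.Icc a (a + runlen D a - 1) := by
  obtain ⟨d, hd⟩ := hne
  -- I nonempty
  have hne' : I.Nonempty := by
    by_contra h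
    rw [Set.not_nonempty_iff_eq_empty] at h
    subst h
    have heq := hI.2 {d} ⟨by simpa using hd, fun x hx y hy z h1 h2 => by
      simp only [Set.mem_singleton_iff] at hx hy; omega⟩ (by simp)
    have hd' : d ∈ ({d} : Set ℕ) := rfl
    exact absurd (heq ▸ hd' : d ∈ (∅ : Set ℕ)) (Set.notMem_empty d)
  have hIb : ∀ x ∈ I, 1 ≤ x ∧ x ≤ n := fun x hx => by
    have := hD (hI.1.1 hx); simpa using this
  have hbdd : BddAbove I := ⟨n, fun x hx => (hIb x hx).2⟩
  obtain ⟨A, hAeq⟩ : ∃ A, sInf I = A := ⟨_, rfl⟩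
  obtain ⟨B, hBeq⟩ : ∃ B, sSup I = B := ⟨_, rfl⟩
  have hAI : A ∈ I := hAeq ▸ Nat.sInf_mem hne'
  have hBI : B ∈ I := hBeq ▸ Nat.sSup_mem hne' hbdd
  have hlow : ∀ x ∈ I, A ≤ x := fun x hx => hAeq ▸ Nat.sInf_le hx
  have hhigh : ∀ x ∈ I, x ≤ B := fun x hx => hBeq ▸ le_csSup hbdd hx
  have hAB : A ≤ B := hlow B hBI
  have hIcc : I = Set.Icc A B := by
    apply Set.eq_of_subset_of_subset
    · intro x hx; exact ⟨hlow x hx, hhigh x hx⟩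
    · intro z hz
      simp only [Set.mem_Icc] at hz
      rcases Nat.eq_or_lt_of_le hz.1 with h1 | h1
      · rwa [← h1]
      rcases Nat.eq_or_lt_of_le hz.2 with h2 | h2
      · rwa [h2]
      exact hI.1.2 hAI hBI h1 h2
  have hApred : A - 1 ∉ D := by
    intro hAp
    have hA1 : 1 ≤ A - 1 := by have := hD hAp; simpa using this.1
    have hJ : IsIntervalOf (Set.Icc (A - 1) B) D := by
      refine ⟨fun y hy => ?_, fun x hx y hy z h1 h2 => by simp only [Set.mem_Icc] at *; omega⟩
      simp only [Set.mem_Icc] at hy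
      rcases Nat.eq_or_lt_of_le hy.1 with h | h
      · rwa [← h]
      · exact hI.1.1 (hIcc ▸ (by simp only [Set.mem_Icc]; omega : y ∈ Set.Icc A B))
    have heq := hI.2 _ hJ (by rw [hIcc]; intro x hx; simp only [Set.mem_Icc] at *; omega)
    have hmem : A - 1 ∈ I := heq ▸ (by simp only [Set.mem_Icc]; omega)
    have := hlow _ hmem
    omega
  have hBsucc : B + 1 ∉ D := by
    intro hBp
    have hJ : IsIntervalOf (Set.Icc A (B + 1)) D := by
      refine ⟨fun y hy => ?_, fun x hx y hy z h1 h2 => by simp only [Set.mem_Icc] at *; omega⟩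
      simp only [Set.mem_Icc] at hy
      rcases Nat.eq_or_lt_of_le hy.2 with h | h
      · rwa [h]
      · exact hI.1.1 (hIcc ▸ (by simp only [Set.mem_Icc]; omega : y ∈ Set.Icc A B))
    have heq := hI.2 _ hJ (by rw [hIcc]; intro x hx; simp only [Set.mem_Icc] at *; omega)
    have hmem : B + 1 ∈ I := heq ▸ (by simp only [Set.mem_Icc]; omega)
    have := hhigh _ hmem
    omega
  have hAD : A ∈ D := hI.1.1 hAI
  have hALF : A ∈ LF D n := by
    refine Finset.mem_filter.mpr ⟨?_, hAD, hApred⟩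
    have := hD hAD; simp at this ⊢; omega
  refine ⟨A, hALF, ?_⟩
  have hrun : runlen D A = B - A + 1 := by
    have h1 : ∀ j, j < B - A + 1 → A + j ∈ D := by
      intro j hj
      exact hI.1.1 (hIcc ▸ (by simp only [Set.mem_Icc]; omega : A + j ∈ Set.Icc A B))
    have h2 : A + (B - A + 1) ∉ D := by rwa [show A + (B - A + 1) = B + 1 by omega]
    have hle : runlen D A ≤ B - A + 1 := Nat.sInf_le h2
    have hge : B - A + 1 ≤ runlen D A := by
      by_contra h
      exact add_runlen_not_mem hD A (h1 (runlen D A) (by omega))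
    omega
  rw [hIcc, hrun, show A + (B - A + 1) - 1 = B by omega]

lemma maxSet_eq (hne : D.Nonempty) :
    {I : Set ℕ | IsMaxIntervalOf I D} =
      (fun a => Set.Icc a (a + runlen D a - 1)) '' (LF D n : Set ℕ) := by
  ext I
  simp only [Set.mem_setOf_eq, Set.mem_image, Finset.mem_coe]
  constructor
  · intro h; obtain ⟨a, ha, he⟩ := LF_of_isMax hD hne h; exact ⟨a, ha, he.symm⟩
  · rintro ⟨a, ha, rfl⟩; exact isMax_of_LF hD ha

lemma run_injOn : Set.InjOn (fun a => Set.Icc a (a + runlen D a - 1)) (LF D n : Set ℕ) := by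
  intro a ha b hb he
  simp only [Finset.mem_coe] at ha hb
  obtain ⟨haD, -, -⟩ := mem_LF_imp ha
  obtain ⟨hbD, -, -⟩ := mem_LF_imp hb
  have hra := runlen_pos hD haD
  have hrb := runlen_pos hD hbD
  simp only at he
  have h1 : a ∈ Set.Icc b (b + runlen D b - 1) := he ▸ (by simp only [Set.mem_Icc]; omega)
  have h2 : b ∈ Set.Icc a (a + runlen D a - 1) := he.symm ▸ (by simp only [Set.mem_Icc]; omega)
  simp only [Set.mem_Icc] at h1 h2
  omega

lemma maxSet_ncard (hne : D.Nonempty) :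
    {I : Set ℕ | IsMaxIntervalOf I D}.ncard = (LF D n).card := by
  rw [maxSet_eq hD hne, Set.ncard_image_of_injOn (run_injOn hD), Set.ncard_coe_finset]

lemma run_ncard {a : ℕ} (ha : a ∈ LF D n) :
    (Set.Icc a (a + runlen D a - 1)).ncard = runlen D a := by
  obtain ⟨haD, -, -⟩ := mem_LF_imp ha
  have := runlen_pos hD haD
  rw [← Finset.coe_Icc, Set.ncard_coe_finset, Nat.card_Icc]
  omega

lemma maxSet2_ncard (hne : D.Nonempty) :
    {I : Set ℕ | IsMaxIntervalOf I D ∧ 2 ≤ I.ncard}.ncard =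
      ((LF D n).filter (fun a => 2 ≤ runlen D a)).card := by
  have he : {I : Set ℕ | IsMaxIntervalOf I D ∧ 2 ≤ I.ncard} =
      (fun a => Set.Icc a (a + runlen D a - 1)) '' (((LF D n).filter (fun a => 2 ≤ runlen D a)) : Set ℕ) := by
    ext I
    simp only [Set.mem_setOf_eq, Set.mem_image, Finset.coe_filter, Set.mem_setOf_eq]
    constructor
    · rintro ⟨h1, h2⟩
      obtain ⟨a, ha, he⟩ := LF_of_isMax hD hne h1
      refine ⟨a, ⟨ha, ?_⟩, he.symm⟩
      rw [he, run_ncard hD ha] at h2; exact h2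
    · rintro ⟨a, ⟨ha, h2⟩, rfl⟩
      exact ⟨isMax_of_LF hD ha, by rw [run_ncard hD ha]; exact h2⟩
  rw [he, Set.ncard_image_of_injOn ((run_injOn hD).mono (by
    intro x hx
    simp only [Finset.coe_filter, Set.mem_setOf_eq] at hx
    exact Finset.mem_coe.mpr hx.1))]
  rw [Set.ncard_coe_finset]

end maxint
section partition
variable (hD : D ⊆ Set.Icc 1 n)
include hD

lemma lt_add_runlen {x : ℕ} (hx : x ∈ D) : x < startOf D x + runlen D (startOf D x) := by
  by_contra h
  have hle := startOf_le hD hx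
  have : startOf D x + runlen D (startOf D x) ∈ D :=
    Icc_startOf_subset hD hx (by simp only [Set.mem_Icc]; omega)
  exact add_runlen_not_mem hD _ this

lemma runs_disjoint {a b : ℕ} (ha : a ∈ LF D n) (hb : b ∈ LF D n) (hne : a ≠ b) :
    a + runlen D a ≤ b ∨ b + runlen D b ≤ a := by
  rcases Nat.lt_or_ge a b with h | h
  · left
    by_contra hc
    obtain ⟨hbD, hbp, hb1⟩ := mem_LF_imp hb
    have : a + (b - 1 - a) ∈ D := mem_of_lt_runlen hD (by omega)
    rw [show a + (b - 1 - a) = b - 1 by omega] at this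
    exact hbp this
  · right
    by_contra hc
    obtain ⟨haD, hap, ha1⟩ := mem_LF_imp ha
    have hne' : b < a := by
      rcases Nat.eq_or_lt_of_le h with h' | h' 
      · exact absurd h'.symm hne
      · exact h'
    have : b + (a - 1 - b) ∈ D := mem_of_lt_runlen hD (by omega)
    rw [show b + (a - 1 - b) = a - 1 by omega] at this
    exact hap this

lemma D_eq_biUnion (hfin : D.Finite) :
    hfin.toFinset = (LF D n).biUnion (fun a => Finset.Icc a (a + runlen D a - 1)) := by
  ext x
  simp only [Set.Finite.mem_toFinset, Finset.mem_biUnion, Finset.mem_Icc]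
  constructor
  · intro hx
    refine ⟨startOf D x, startOf_mem_LF hD hx, startOf_le hD hx, ?_⟩
    have h1 := lt_add_runlen hD hx
    have h2 := runlen_pos hD ((mem_LF_imp (startOf_mem_LF hD hx)).1)
    omega
  · rintro ⟨a, ha, h1, h2⟩
    obtain ⟨haD, -, -⟩ := mem_LF_imp ha
    have hrp := runlen_pos hD haD
    have := mem_of_lt_runlen hD (show x - a < runlen D a by omega)
    rwa [show a + (x - a) = x by omega] at this

lemma sum_runlen (hfin : D.Finite) : (∑ a ∈ LF D n, runlen D a) = D.ncard := by
  rw [Set.ncard_eq_toFinset_card _ hfin, D_eq_biUnion hD hfin]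
  rw [Finset.card_biUnion]
  · apply Finset.sum_congr rfl
    intro a ha
    have hrp := runlen_pos hD ((mem_LF_imp ha).1)
    rw [Nat.card_Icc]
    omega
  · intro a ha b hb hne
    rcases runs_disjoint hD ha hb hne with h | h <;>
    · rw [Function.onFun, Finset.disjoint_left]
      intro x hx1 hx2
      simp only [Finset.mem_Icc] at hx1 hx2
      have h1 := runlen_pos hD ((mem_LF_imp ha).1)
      have h2 := runlen_pos hD ((mem_LF_imp hb).1)
      omega

end partition
/-- value of the assembled partial automorphism -/
noncomputable def fval (D : Set ℕ) (p : ℕ → ℕ × Bool) (x : ℕ) : ℕ :=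
  if (p (startOf D x)).2 then
    (p (startOf D x)).1 + (runlen D (startOf D x) - 1 - (x - startOf D x))
  else (p (startOf D x)).1 + (x - startOf D x)

noncomputable def FF (D : Set ℕ) (p : ℕ → ℕ × Bool) : ℕ →. ℕ :=
  fun x => ⟨x ∈ D, fun _ => fval D p x⟩

def POK (D : Set ℕ) (n : ℕ) (p : ℕ → ℕ × Bool) : Prop :=
  (∀ x, x ∉ LF D n → p x = (0, false)) ∧
  (∀ a ∈ LF D n, 1 ≤ (p a).1 ∧ (p a).1 + runlen D a ≤ n + 1) ∧
  (∀ a ∈ LF D n, ∀ b ∈ LF D n, a ≠ b →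
      (p a).1 + runlen D a < (p b).1 ∨ (p b).1 + runlen D b < (p a).1) ∧
  (∀ a ∈ LF D n, runlen D a = 1 → (p a).2 = false)

lemma mem_FF {p : ℕ → ℕ × Bool} {x y : ℕ} : y ∈ FF D p x ↔ x ∈ D ∧ fval D p x = y := by
  constructor
  · intro h
    obtain ⟨hx, he⟩ := h
    exact ⟨hx, he⟩
  · intro ⟨hx, he⟩
    exact ⟨hx, he⟩

section valid
variable (hD : D ⊆ Set.Icc 1 n) {p : ℕ → ℕ × Bool} (hp : POK D n p)
include hD hp

lemma fval_bounds {x : ℕ} (hx : x ∈ D) :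
    (p (startOf D x)).1 ≤ fval D p x ∧
      fval D p x < (p (startOf D x)).1 + runlen D (startOf D x) := by
  have ha := startOf_mem_LF hD hx
  have h1 := startOf_le hD hx
  have h2 := lt_add_runlen hD hx
  have h3 := (hp.2.1 _ ha).1
  cases hb : (p (startOf D x)).2 <;> simp only [fval, hb, Bool.false_eq_true, if_true, if_false] <;> omega

omit hp in
lemma same_start {x : ℕ} (hx : x ∈ D) (hx1 : x + 1 ∈ D) : startOf D (x + 1) = startOf D x := by
  have ha := startOf_mem_LF hD hx
  have h1 := startOf_le hD hx
  have h2 := lt_add_runlen hD hx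
  have hne : x + 1 ≠ startOf D x + runlen D (startOf D x) := by
    intro h
    exact add_runlen_not_mem hD (startOf D x) (h ▸ hx1)
  exact startOf_eq hD ha (by omega) (by omega)

omit hp in
lemma not_adj_of_ne_start {x y : ℕ} (hx : x ∈ D) (hy : y ∈ D)
    (hne : startOf D x ≠ startOf D y) : ¬ adj x y := by
  intro h
  rcases h with h | h
  · exact hne ((h ▸ same_start hD hx (h ▸ hy)).symm ▸ rfl : startOf D x = startOf D y) |>.elim
  · exact hne (h ▸ same_start hD hy (h ▸ hx)) |>.elim

lemma fval_inj {x y : ℕ} (hx : x ∈ D) (hy : y ∈ D) (h : fval D p x = fval D p y) : x = y := by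
  by_cases hst : startOf D x = startOf D y
  · have h1 := startOf_le hD hx
    have h2 := lt_add_runlen hD hx
    have h3 := startOf_le hD hy
    have h4 := lt_add_runlen hD hy
    rw [hst] at h2
    unfold fval at h
    rw [hst] at h
    cases hb : (p (startOf D y)).2 <;>
      simp only [hb, Bool.false_eq_true, if_true, if_false] at h <;> omega
  · have b1 := fval_bounds hD hp hx
    have b2 := fval_bounds hD hp hy
    have hsep := hp.2.2.1 _ (startOf_mem_LF hD hx) _ (startOf_mem_LF hD hy) hst
    omega

lemma fval_adj_iff {x y : ℕ} (hx : x ∈ D) (hy : y ∈ D) :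
    (adj x y ↔ adj (fval D p x) (fval D p y)) := by
  by_cases hst : startOf D x = startOf D y
  · have h1 := startOf_le hD hx
    have h2 := lt_add_runlen hD hx
    have h3 := startOf_le hD hy
    have h4 := lt_add_runlen hD hy
    have h5 := (hp.2.1 _ (startOf_mem_LF hD hx)).1
    rw [hst] at h2
    unfold fval adj
    rw [hst]
    cases hb : (p (startOf D y)).2 <;>
      simp only [hb, Bool.false_eq_true, if_true, if_false] <;> omega
  · constructor
    · intro h
      exact absurd h (not_adj_of_ne_start hD hx hy hst)
    · intro h
      exfalso
      have b1 := fval_bounds hD hp hx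
      have b2 := fval_bounds hD hp hy
      have hsep := hp.2.2.1 _ (startOf_mem_LF hD hx) _ (startOf_mem_LF hD hy) hst
      unfold adj at h
      omega

lemma FF_mem_set : IsPAut n (FF D p) ∧ (FF D p).Dom = D := by
  have hdom : (FF D p).Dom = D := rfl
  refine ⟨⟨⟨?_, ?_, ?_, ?_⟩, ?_⟩, hdom⟩
  · rw [hdom]; exact hD
  · intro y hy
    obtain ⟨x, hx⟩ := hy
    rw [mem_FF] at hx
    obtain ⟨hxD, rfl⟩ := hx
    have hb := fval_bounds hD hp hxD
    have ha := startOf_mem_LF hD hxD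
    have := hp.2.1 _ ha
    simp only [Set.mem_Icc]
    omega
  · intro x y a hax hay
    rw [mem_FF] at hax hay
    exact fval_inj hD hp hax.1 hay.1 (hax.2.trans hay.2.symm)
  · intro u v a b ha hb h
    rw [mem_FF] at ha hb
    obtain ⟨hu, rfl⟩ := ha
    obtain ⟨hv, rfl⟩ := hb
    exact (fval_adj_iff hD hp hu hv).mp h
  · intro u v a b ha hb h
    rw [mem_FF] at ha hb
    obtain ⟨hu, rfl⟩ := ha
    obtain ⟨hv, rfl⟩ := hb
    exact (fval_adj_iff hD hp hu hv).mpr h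

end valid
/-- total function extracted from a partial map -/
noncomputable def fv (f : ℕ →. ℕ) (x : ℕ) : ℕ :=
  if h : (f x).Dom then (f x).get h else 0

noncomputable def toP (D : Set ℕ) (n : ℕ) (f : ℕ →. ℕ) : ℕ → ℕ × Bool := fun a =>
  if a ∈ LF D n then
    (min (fv f a) (fv f (a + runlen D a - 1)), decide (fv f (a + runlen D a - 1) < fv f a))
  else (0, false)

section surj
variable (hD : D ⊆ Set.Icc 1 n) {f : ℕ →. ℕ} (hf : IsPAut n f) (hdom : f.Dom = D)
include hD hf hdom

lemma fv_mem {x : ℕ} (hx : x ∈ D) : fv f x ∈ f x := by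
  have h : (f x).Dom := by rw [← hdom] at hx; exact hx
  simp only [fv, dif_pos h]
  exact Part.get_mem h

lemma fv_inj {x y : ℕ} (hx : x ∈ D) (hy : y ∈ D) (h : fv f x = fv f y) : x = y :=
  hf.1.inj (fv_mem hD hf hdom hx) (h ▸ fv_mem hD hf hdom hy)

lemma fv_range {x : ℕ} (hx : x ∈ D) : 1 ≤ fv f x ∧ fv f x ≤ n := by
  have := hf.1.ran_subset ⟨x, fv_mem hD hf hdom hx⟩
  simpa using this

lemma fv_adj {x y : ℕ} (hx : x ∈ D) (hy : y ∈ D) (h : adj x y) : adj (fv f x) (fv f y) :=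
  hf.1.edge (fv_mem hD hf hdom hx) (fv_mem hD hf hdom hy) h

lemma fv_adj_rev {x y : ℕ} (hx : x ∈ D) (hy : y ∈ D) (h : adj (fv f x) (fv f y)) : adj x y :=
  hf.2 (fv_mem hD hf hdom hx) (fv_mem hD hf hdom hy) h

/-- the function is an arithmetic progression on each run -/
lemma progression {a : ℕ} (ha : a ∈ LF D n) :
    (∀ j, j < runlen D a → fv f (a + j) = fv f a + j) ∨
    (∀ j, j < runlen D a → fv f (a + j) + j = fv f a) := by
  obtain ⟨haD, -, -⟩ := mem_LF_imp ha
  have hrp := runlen_pos hD haD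
  by_cases h1 : runlen D a = 1
  · left; intro j hj
    have : j = 0 := by omega
    subst this; simp
  have hmem : ∀ j, j < runlen D a → a + j ∈ D := fun j hj => mem_of_lt_runlen hD hj
  have hadj1 : adj (fv f a) (fv f (a + 1)) := by
    have := fv_adj hD hf hdom haD (hmem 1 (by omega)) (Or.inl rfl)
    simpa using this
  have hstep : ∀ j, 0 < j → j < runlen D a →
      adj (fv f (a + (j - 1))) (fv f (a + j)) := by
    intro j hj0 hj
    exact fv_adj hD hf hdom (hmem (j-1) (by omega)) (hmem j hj) (Or.inl (by omega))
  rcases hadj1 with hinc | hdec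
  · left
    intro j
    induction j using Nat.strong_induction_on with
    | _ j IH =>
      intro hj
      rcases Nat.eq_zero_or_pos j with rfl | hj0
      · simp
      rcases Nat.eq_or_lt_of_le hj0 with h1' | hj1
      · have hj1' : j = 1 := by omega
        subst hj1'
        omega
      have hp1 := IH (j - 1) (by omega) (by omega)
      have hp2 := IH (j - 2) (by omega) (by omega)
      rcases hstep j hj0 hj with h | h
      · omega
      · exfalso
        have he : fv f (a + j) = fv f (a + (j - 2)) := by omega
        have := fv_inj hD hf hdom (hmem j hj) (hmem (j-2) (by omega)) he
        omega
  · right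
    intro j
    induction j using Nat.strong_induction_on with
    | _ j IH =>
      intro hj
      rcases Nat.eq_zero_or_pos j with rfl | hj0
      · simp
      rcases Nat.eq_or_lt_of_le hj0 with h1' | hj1
      · have hj1' : j = 1 := by omega
        subst hj1'
        omega
      have hp1 := IH (j - 1) (by omega) (by omega)
      have hp2 := IH (j - 2) (by omega) (by omega)
      rcases hstep j hj0 hj with h | h
      · exfalso
        have he : fv f (a + j) = fv f (a + (j - 2)) := by omega
        have := fv_inj hD hf hdom (hmem j hj) (hmem (j-2) (by omega)) he
        omega
      · omega

/-- every value of the image interval is attained -/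
lemma attained {a : ℕ} (ha : a ∈ LF D n) {u : ℕ}
    (h1 : (toP D n f a).1 ≤ u) (h2 : u < (toP D n f a).1 + runlen D a) :
    ∃ j, j < runlen D a ∧ fv f (a + j) = u := by
  obtain ⟨haD, -, -⟩ := mem_LF_imp ha
  have hrp := runlen_pos hD haD
  have hend : a + runlen D a - 1 = a + (runlen D a - 1) := by omega
  simp only [toP, if_pos ha] at h1 h2
  rcases progression hD hf hdom ha with hp | hp
  · have he := hp (runlen D a - 1) (by omega)
    rw [← hend] at he
    have hmin : min (fv f a) (fv f (a + runlen D a - 1)) = fv f a := by omega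
    rw [hmin] at h1 h2
    exact ⟨u - fv f a, by omega, by rw [hp (u - fv f a) (by omega)]; omega⟩
  · have he := hp (runlen D a - 1) (by omega)
    rw [← hend] at he
    have hmin : min (fv f a) (fv f (a + runlen D a - 1)) = fv f (a + runlen D a - 1) := by
      omega
    rw [hmin] at h1 h2
    refine ⟨fv f a - u, by omega, ?_⟩
    have := hp (fv f a - u) (by omega)
    omega

lemma toP_POK : POK D n (toP D n f) := by
  have hbd : ∀ a ∈ LF D n, 1 ≤ (toP D n f a).1 ∧ (toP D n f a).1 + runlen D a ≤ n + 1 := by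
    intro a ha
    obtain ⟨haD, -, -⟩ := mem_LF_imp ha
    have hrp := runlen_pos hD haD
    have hend : a + runlen D a - 1 = a + (runlen D a - 1) := by omega
    have hendD : a + runlen D a - 1 ∈ D := by
      rw [hend]; exact mem_of_lt_runlen hD (by omega)
    have r1 := fv_range hD hf hdom haD
    have r2 := fv_range hD hf hdom hendD
    simp only [toP, if_pos ha]
    rcases progression hD hf hdom ha with hp | hp <;>
      have := hp (runlen D a - 1) (by omega) <;> rw [← hend] at this <;>
      constructor <;> omega
  refine ⟨fun x hx => by simp [toP, hx], hbd, ?_, ?_⟩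
  · -- separation
    intro a ha b hb hne
    by_contra hcon
    push_neg at hcon
    obtain ⟨h1, h2⟩ := hcon
    -- the two image intervals touch or overlap; get u ∈ Ia, v ∈ Ib with u = v ∨ adj u v
    obtain ⟨haD, -, -⟩ := mem_LF_imp ha
    obtain ⟨hbD, -, -⟩ := mem_LF_imp hb
    have hra := runlen_pos hD haD
    have hrb := runlen_pos hD hbD
    set ca := (toP D n f a).1 with hca
    set cb := (toP D n f b).1 with hcb
    -- pick u, v
    have hkey : ∃ u v, ca ≤ u ∧ u < ca + runlen D a ∧ cb ≤ v ∧ v < cb + runlen D b ∧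
        (u = v ∨ adj u v) := by
      rcases Nat.le_total ca cb with hle | hle
      · by_cases hc : cb < ca + runlen D a
        · exact ⟨cb, cb, by omega, by omega, by omega, by omega, Or.inl rfl⟩
        · have hcb' : cb = ca + runlen D a := by omega
          exact ⟨ca + runlen D a - 1, cb, by omega, by omega, by omega, by omega,
            Or.inr (Or.inl (by omega))⟩
      · by_cases hc : ca < cb + runlen D b
        · exact ⟨ca, ca, by omega, by omega, by omega, by omega, Or.inl rfl⟩
        · have hca' : ca = cb + runlen D b := by omega
          exact ⟨ca, cb + runlen D b - 1, by omega, by omega, by omega, by omega,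
            Or.inr (Or.inr (by omega))⟩
    obtain ⟨u, v, hu1, hu2, hv1, hv2, huv⟩ := hkey
    obtain ⟨j, hj, hju⟩ := attained hD hf hdom ha hu1 hu2
    obtain ⟨k, hk, hkv⟩ := attained hD hf hdom hb hv1 hv2
    have hjD : a + j ∈ D := mem_of_lt_runlen hD hj
    have hkD : b + k ∈ D := mem_of_lt_runlen hD hk
    have hstj : startOf D (a + j) = a := startOf_eq hD ha (by omega) (by omega)
    have hstk : startOf D (b + k) = b := startOf_eq hD hb (by omega) (by omega)
    rcases huv with he | hadj
    · have : a + j = b + k := fv_inj hD hf hdom hjD hkD (by omega)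
      rcases runs_disjoint hD ha hb hne with h | h <;> omega
    · have : adj (a + j) (b + k) := fv_adj_rev hD hf hdom hjD hkD (by rw [hju, hkv]; exact hadj)
      exact not_adj_of_ne_start hD hjD hkD (by rw [hstj, hstk]; exact hne) this
  · -- runlen 1 → false
    intro a ha h1
    simp only [toP, if_pos ha, h1]
    simp

lemma FF_toP : FF D (toP D n f) = f := by
  funext x
  by_cases hx : x ∈ D
  · have hdx : (f x).Dom := by rw [← hdom] at hx; exact hx
    have hfv : fv f x ∈ f x := fv_mem hD hf hdom hx
    apply Part.ext'
    · simp only [FF]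
      constructor
      · intro _; exact hdx
      · intro _; exact hx
    · intro h1 h2
      show fval D (toP D n f) x = _
      have hget : (f x).get h2 = fv f x := by simp only [fv, dif_pos hdx]
      rw [hget]
      obtain ⟨a, hax⟩ : ∃ a, startOf D x = a := ⟨_, rfl⟩
      have ha : a ∈ LF D n := hax ▸ startOf_mem_LF hD hx
      obtain ⟨haD, -, -⟩ := mem_LF_imp ha
      have hrp := runlen_pos hD haD
      have hle : a ≤ x := hax ▸ startOf_le hD hx
      have hlt : x < a + runlen D a := by
        have := lt_add_runlen hD hx
        rw [hax] at this
        exact this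
      have hend : a + runlen D a - 1 = a + (runlen D a - 1) := by omega
      unfold fval
      rw [hax]
      simp only [toP, if_pos ha]
      rcases progression hD hf hdom ha with hp | hp
      · have hpe := hp (runlen D a - 1) (by omega)
        rw [← hend] at hpe
        have hpx := hp (x - a) (by omega)
        rw [show a + (x - a) = x by omega] at hpx
        rw [if_neg (by simp only [decide_eq_true_eq]; omega)]
        rw [min_eq_left (by omega : fv f a ≤ fv f (a + runlen D a - 1))]
        omega
      · have hpe := hp (runlen D a - 1) (by omega)
        rw [← hend] at hpe
        have hpx := hp (x - a) (by omega)
        rw [show a + (x - a) = x by omega] at hpx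
        by_cases hr1 : runlen D a = 1
        · have he0 : a + runlen D a - 1 = a := by omega
          rw [he0, min_self]
          rw [if_neg (by simp only [decide_eq_true_eq]; omega)]
          omega
        · rw [if_pos (by simp only [decide_eq_true_eq]; omega)]
          rw [min_eq_right (by omega : fv f (a + runlen D a - 1) ≤ fv f a)]
          omega
  · have hdx : ¬ (f x).Dom := by rw [← hdom] at hx; exact hx
    apply Part.ext'
    · simp only [FF]
      constructor
      · intro h; exact absurd h hx
      · intro h; exact absurd h hdx
    · intro h1 h2
      exact absurd h2 hdx

end surj

lemma toP_FF (hD : D ⊆ Set.Icc 1 n) {p : ℕ → ℕ × Bool} (hp : POK D n p) :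
    toP D n (FF D p) = p := by
  funext a
  by_cases ha : a ∈ LF D n
  · obtain ⟨haD, -, -⟩ := mem_LF_imp ha
    have hrp := runlen_pos hD haD
    have hc1 := (hp.2.1 a ha).1
    have hend : a + runlen D a - 1 = a + (runlen D a - 1) := by omega
    have hendD : a + runlen D a - 1 ∈ D := by
      rw [hend]; exact mem_of_lt_runlen hD (by omega)
    have hsta : startOf D a = a := startOf_eq hD ha (le_refl a) (by omega)
    have hste : startOf D (a + runlen D a - 1) = a := startOf_eq hD ha (by omega) (by omega)
    have hfva : fv (FF D p) a = fval D p a := by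
      simp only [fv, FF]
      exact dif_pos haD
    have hfve : fv (FF D p) (a + runlen D a - 1) = fval D p (a + runlen D a - 1) := by
      simp only [fv, FF]
      exact dif_pos hendD
    simp only [toP, if_pos ha, hfva, hfve]
    cases hb : (p a).2
    · have hva : fval D p a = (p a).1 := by
        simp only [fval, hsta, hb, Bool.false_eq_true, if_false]
        omega
      have hve : fval D p (a + runlen D a - 1) = (p a).1 + (runlen D a - 1) := by
        simp only [fval, hste, hb, Bool.false_eq_true, if_false]
        congr 1
        omega
      rw [hva, hve]
      have : min ((p a).1) ((p a).1 + (runlen D a - 1)) = (p a).1 := by omega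
      rw [this]
      have : decide ((p a).1 + (runlen D a - 1) < (p a).1) = false := by simp
      rw [this]
      rw [← hb]
    · have hr2 : 2 ≤ runlen D a := by
        by_contra h
        have h1 : runlen D a = 1 := by omega
        have := hp.2.2.2 a ha h1
        rw [hb] at this
        exact absurd this (by simp)
      have hva : fval D p a = (p a).1 + (runlen D a - 1) := by
        simp only [fval, hsta, hb, if_true]
        congr 1
        omega
      have hve : fval D p (a + runlen D a - 1) = (p a).1 := by
        simp only [fval, hste, hb, if_true]
        have : runlen D a - 1 - (a + runlen D a - 1 - a) = 0 := by omega
        rw [this]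
        omega
      rw [hva, hve]
      have h1 : min ((p a).1 + (runlen D a - 1)) ((p a).1) = (p a).1 := by omega
      rw [h1]
      have h2 : decide ((p a).1 < (p a).1 + (runlen D a - 1)) = true := by
        simp; omega
      rw [h2]
      rw [← hb]
  · simp only [toP, if_neg ha]
    exact (hp.1 a ha).symm

def EOK (D : Set ℕ) (n : ℕ) (ε : ℕ → Bool) : Prop :=
  (∀ x, x ∉ LF D n → ε x = false) ∧ ∀ a ∈ LF D n, runlen D a = 1 → ε a = false

noncomputable def equivP :
    {p : ℕ → ℕ × Bool // POK D n p} ≃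
      {c : ℕ → ℕ // COK (LF D n) (runlen D) n c} × {ε : ℕ → Bool // EOK D n ε} where
  toFun p := ⟨⟨fun x => (p.1 x).1,
      ⟨fun x hx => by show (p.1 x).1 = 0; rw [p.2.1 x hx], p.2.2.1, p.2.2.2.1⟩⟩,
    ⟨fun x => (p.1 x).2,
      ⟨fun x hx => by show (p.1 x).2 = false; rw [p.2.1 x hx], p.2.2.2.2⟩⟩⟩
  invFun ce := ⟨fun x => (ce.1.1 x, ce.2.1 x),
    ⟨fun x hx => by show (ce.1.1 x, ce.2.1 x) = (0, false); rw [ce.1.2.1 x hx, ce.2.2.1 x hx],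
      ce.1.2.2.1, ce.1.2.2.2, fun a ha h1 => ce.2.2.2 a ha h1⟩⟩
  left_inv p := by
    apply Subtype.ext
    funext x
    rfl
  right_inv ce := by
    apply Prod.ext <;> apply Subtype.ext <;> rfl

lemma card_EOK (hD : D ⊆ Set.Icc 1 n) :
    Nat.card {ε : ℕ → Bool // EOK D n ε} =
      2 ^ ((LF D n).filter (fun a => 2 ≤ runlen D a)).card := by
  have e : {ε : ℕ → Bool // EOK D n ε} ≃
      ((((LF D n).filter (fun a => 2 ≤ runlen D a)) : Finset ℕ) → Bool) :=
    { toFun := fun ε a => ε.1 a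
      invFun := fun g => ⟨fun x => if h : x ∈ (LF D n).filter (fun a => 2 ≤ runlen D a)
          then g ⟨x, h⟩ else false,
        ⟨fun x hx => by
          show (if h : x ∈ Finset.filter (fun a => 2 ≤ runlen D a) (LF D n)
            then g ⟨x, h⟩ else false) = false
          rw [dif_neg]
          simp only [Finset.mem_filter]
          exact fun h => hx h.1,
         fun a ha h1 => by
          show (if h : a ∈ Finset.filter (fun a => 2 ≤ runlen D a) (LF D n)
            then g ⟨a, h⟩ else false) = false
          rw [dif_neg]
          simp only [Finset.mem_filter]
          rintro ⟨-, h2⟩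
          omega⟩⟩
      left_inv := fun ε => by
        apply Subtype.ext
        funext x
        show (if h : x ∈ (LF D n).filter (fun a => 2 ≤ runlen D a)
          then ε.1 x else false) = ε.1 x
        by_cases hx : x ∈ (LF D n).filter (fun a => 2 ≤ runlen D a)
        · rw [dif_pos hx]
        · rw [dif_neg hx]
          by_cases hxL : x ∈ LF D n
          · have h2 : runlen D x = 1 := by
              simp only [Finset.mem_filter, not_and, not_le] at hx
              have h3 := runlen_pos hD (mem_LF_imp hxL).1
              have h4 := hx hxL
              omega
            exact (ε.2.2 x hxL h2).symm
          · exact (ε.2.1 x hxL).symm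
      right_inv := fun g => by
        funext a
        show (if h : (a : ℕ) ∈ (LF D n).filter (fun a => 2 ≤ runlen D a)
          then g ⟨(a : ℕ), h⟩ else false) = g a
        rw [dif_pos a.2] }
  rw [Nat.card_congr e, Nat.card_eq_fintype_card, Fintype.card_fun]
  simp

theorem main (hne : D.Nonempty) (hD : D ⊆ Set.Icc 1 n) :
    {f : ℕ →. ℕ | IsPAut n f ∧ f.Dom = D}.ncard =
      2 ^ {I : Set ℕ | IsMaxIntervalOf I D ∧ 2 ≤ I.ncard}.ncard *
        Nat.factorial {I : Set ℕ | IsMaxIntervalOf I D}.ncard *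
        Nat.choose (n - D.ncard + 1) {I : Set ℕ | IsMaxIntervalOf I D}.ncard := by
  have hfin : D.Finite := (Set.finite_Icc 1 n).subset hD
  have hsum : (∑ a ∈ LF D n, runlen D a) = D.ncard := sum_runlen hD hfin
  have hsn : D.ncard ≤ n := by
    have h1 := Set.ncard_le_ncard hD (Set.finite_Icc 1 n)
    have h2 : (Set.Icc 1 n).ncard = n := by
      rw [← Finset.coe_Icc, Set.ncard_coe_finset, Nat.card_Icc]
      omega
    omega
  have e0 : ↥{f : ℕ →. ℕ | IsPAut n f ∧ f.Dom = D} ≃ {p : ℕ → ℕ × Bool // POK D n p} :=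
    { toFun := fun f => ⟨toP D n f.1, toP_POK hD f.2.1 f.2.2⟩
      invFun := fun p => ⟨FF D p.1, FF_mem_set hD p.2⟩
      left_inv := fun f => Subtype.ext (FF_toP hD f.2.1 f.2.2)
      right_inv := fun p => Subtype.ext (toP_FF hD p.2) }
  rw [maxSet_ncard hD hne, maxSet2_ncard hD hne]
  rw [← Nat.card_coe_set_eq, Nat.card_congr (e0.trans equivP), Nat.card_prod]
  rw [card_COK (by omega : (∑ b ∈ LF D n, runlen D b) ≤ n)
    (fun a ha => runlen_pos hD (mem_LF_imp ha).1), card_EOK hD, hsum]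
  ring


end Stmt14

theorem stmt14 (n : ℕ) (D : Set ℕ) (hne : D.Nonempty) (hD : D ⊆ Set.Icc 1 n) :
    {f : ℕ →. ℕ | IsPAut n f ∧ f.Dom = D}.ncard =
      2 ^ {I : Set ℕ | IsMaxIntervalOf I D ∧ 2 ≤ I.ncard}.ncard *
        Nat.factorial {I : Set ℕ | IsMaxIntervalOf I D}.ncard *
        Nat.choose (n - D.ncard + 1) {I : Set ℕ | IsMaxIntervalOf I D}.ncard :=
  Stmt14.main hne hD
end
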